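/- arXiv:2303.09203 — 6 statements merged into one kernel-verified Lean document; each statement's English description precedes it below -/
import Mathlib

section
/- Let m ∈ ℤ and let h₁, h₂ : ℤ → ℂ be such that the double family ((n,k) ↦ h₁((m+n+|n+m|)/2 + k)·h₂((n−m−|n+m|)/2 − k)) over n ∈ ℤ, k ∈ ℕ is absolutely summable, and the families (k ↦ h₁(k)) over k ∈ ℕ and (n ↦ h₂(−m−n)) over n ∈ ℕ are absolutely summable. Then ∑_{n∈ℤ} ∑_{k=0}^{∞} (−1)^n · h₁((m+n+|n+m|)/2 + k) · h₂((n−m−|n+m|)/2 − k) = (∑_{k=0}^{∞} (−1)^k h₁(k)) · (∑_{n=0}^{∞} (−1)^{m+n} h₂(−m−n)). -/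
private lemma neg_one_zpow_even (z : ℤ) (hz : Even z) : (-1 : ℂ) ^ z = 1 := by
  obtain ⟨t, rfl⟩ := hz
  rw [← two_mul, zpow_mul]
  norm_num

/-- The reindexing bijection `ℕ × ℕ ≃ ℤ × ℕ`. -/
private def reindex (m : ℤ) : ℕ × ℕ ≃ ℤ × ℕ where
  toFun q := ((q.1 : ℤ) - q.2 - m, min q.1 q.2)
  invFun p := (((p.1 + m).toNat + p.2), ((-(p.1 + m)).toNat + p.2))
  left_inv q := by
    obtain ⟨a, b⟩ := q
    simp only [Prod.mk.injEq]
    constructor <;> omega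
  right_inv p := by
    obtain ⟨n, k⟩ := p
    simp only [Prod.mk.injEq]
    constructor
    · push_cast; omega
    · omega

/-- **Lemma 2** (factorization of the double sum).
Let `m ∈ ℤ` and `h₁ h₂ : ℤ → ℂ` be such that the double family
`(n,k) ↦ h₁((m+n+|n+m|)/2 + k) · h₂((n−m−|n+m|)/2 − k)` (over `n ∈ ℤ`, `k ∈ ℕ`)
is absolutely summable, and the families `k ↦ h₁ k` (over `k ∈ ℕ`) and
`n ↦ h₂(−m−n)` (over `n ∈ ℕ`) are absolutely summable.  Then
`∑_{n∈ℤ} ∑_{k≥0} (−1)ⁿ h₁((m+n+|n+m|)/2+k) h₂((n−m−|n+m|)/2−k)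
  = (∑_{k≥0} (−1)ᵏ h₁(k)) · (∑_{n≥0} (−1)^{m+n} h₂(−m−n))`. -/
theorem stmt0 (m : ℤ) (h₁ h₂ : ℤ → ℂ)
    (hd : Summable fun p : ℤ × ℕ =>
      ‖h₁ ((m + p.1 + |p.1 + m|) / 2 + p.2) * h₂ ((p.1 - m - |p.1 + m|) / 2 - p.2)‖)
    (hs₁ : Summable fun k : ℕ => ‖h₁ k‖)
    (hs₂ : Summable fun n : ℕ => ‖h₂ (-m - n)‖) :
    ∑' n : ℤ, ∑' k : ℕ,
        (-1 : ℂ) ^ n * (h₁ ((m + n + |n + m|) / 2 + k) * h₂ ((n - m - |n + m|) / 2 - k))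
      = (∑' k : ℕ, (-1 : ℂ) ^ k * h₁ k) * ∑' n : ℕ, (-1 : ℂ) ^ (m + n) * h₂ (-m - n) := by
  set f : ℤ × ℕ → ℂ := fun p =>
    (-1 : ℂ) ^ p.1 * (h₁ ((m + p.1 + |p.1 + m|) / 2 + p.2) * h₂ ((p.1 - m - |p.1 + m|) / 2 - p.2))
    with hf
  have hfs : Summable f := by
    apply Summable.of_norm
    have : (fun p : ℤ × ℕ => ‖f p‖) = fun p : ℤ × ℕ =>
        ‖h₁ ((m + p.1 + |p.1 + m|) / 2 + p.2) * h₂ ((p.1 - m - |p.1 + m|) / 2 - p.2)‖ := by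
      funext p
      simp [hf, norm_mul, norm_zpow]
    rw [this]; exact hd
  rw [← Summable.tsum_prod' hfs hfs.prod_factor]
  rw [tsum_mul_tsum_of_summable_norm (by simpa using hs₁) (by simpa using hs₂)]
  rw [← (reindex m).tsum_eq f]
  apply tsum_congr
  intro q
  obtain ⟨a, b⟩ := q
  simp only [hf, reindex, Equiv.coe_fn_mk]
  have h1 : (m + ((a : ℤ) - b - m) + |(a : ℤ) - b - m + m|) / 2 + (min a b : ℤ) = a := by
    rcases le_total (a : ℤ) b with h | h
    · rw [show ((a:ℤ) - b - m + m) = a - b by ring, abs_of_nonpos (by omega)]; omega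
    · rw [show ((a:ℤ) - b - m + m) = a - b by ring, abs_of_nonneg (by omega)]; omega
  have h2 : ((a : ℤ) - b - m - m - |(a : ℤ) - b - m + m|) / 2 - (min a b : ℤ) = -m - b := by
    rcases le_total (a : ℤ) b with h | h
    · rw [show ((a:ℤ) - b - m + m) = a - b by ring, abs_of_nonpos (by omega)]; omega
    · rw [show ((a:ℤ) - b - m + m) = a - b by ring, abs_of_nonneg (by omega)]; omega
  push_cast
  rw [h1, h2]
  have hsign : (-1 : ℂ) ^ ((a : ℤ) - b - m) = (-1 : ℂ) ^ a * (-1 : ℂ) ^ (m + (b : ℤ)) := by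
    have h : ((a : ℤ) - b - m) = (a : ℤ) + (m + b) + (-2) * (m + b) := by ring
    rw [h, zpow_add₀ (by norm_num : (-1 : ℂ) ≠ 0), zpow_add₀ (by norm_num : (-1 : ℂ) ≠ 0),
      neg_one_zpow_even ((-2) * (m + b)) ⟨-(m + b), by ring⟩, mul_one, zpow_natCast]
  rw [hsign]
  ring
end

section
/- Let n ∈ ℕ, m ∈ ℤ, x, y ∈ ℝ, and set ᾱ = x + iy and α = x + m + iy. Then the function ν ↦ Γ(x + iy + n/2 − iν)/Γ(1 − m − x − iy + n/2 + iν) (that is, ν ↦ Γ(ᾱ − s̄)/Γ(1 − α + s), where s = n/2 + iν and s̄ = −n/2 + iν) is a meromorphic function of ν ∈ ℂ whose poles are exactly the points ν = −i(ᾱ + (m + |n − m|)/2 + k) for k ∈ ℕ ∪ {0}, and each of these poles is simple. -/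
open Complex Filter Topology Finset

/- ### Auxiliary lemmas -/

private lemma an_Gamma {z : ℂ} (hz : 0 < z.re) : AnalyticAt ℂ Gamma z := by
  have hop : IsOpen {w : ℂ | 0 < w.re} := isOpen_lt continuous_const continuous_re
  refine DifferentiableOn.analyticAt
    (fun w hw => (Complex.differentiableAt_Gamma w (fun k hk => ?_)).differentiableWithinAt)
    (hop.mem_nhds hz)
  rw [hk] at hw
  simp only [Set.mem_setOf_eq, neg_re, natCast_re] at hw
  have : (0:ℝ) ≤ k := Nat.cast_nonneg k
  linarith

private lemma an_Ginv (z : ℂ) : AnalyticAt ℂ (fun w => (Gamma w)⁻¹) z :=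
  Complex.differentiable_one_div_Gamma.analyticAt z

private lemma ginv_rec (z : ℂ) : (Gamma z)⁻¹ = z * (Gamma (z+1))⁻¹ := by
  rcases eq_or_ne z 0 with rfl | hz
  · simp [Complex.Gamma_zero]
  · rcases eq_or_ne (Gamma z) 0 with h0 | h0
    · obtain ⟨k, rfl⟩ := (Complex.Gamma_eq_zero_iff z).mp h0
      have : Gamma ((-k:ℂ) + 1) = 0 := by
        rw [Complex.Gamma_eq_zero_iff]
        obtain ⟨k, rfl⟩ : ∃ j : ℕ, k = j + 1 := by
          refine ⟨k - 1, ?_⟩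
          rcases k with _ | k
          · simp at hz
          · simp
        exact ⟨k, by push_cast; ring⟩
      rw [h0, this]; simp
    · rw [Complex.Gamma_add_one z hz, mul_inv, ← mul_assoc, mul_inv_cancel₀ hz, one_mul]

private lemma ginv_iter (l : ℕ) (z : ℂ) :
    (Gamma z)⁻¹ = (∏ i ∈ Finset.range (l+1), (z + (i:ℂ))) * (Gamma (z + (l:ℂ) + 1))⁻¹ := by
  induction l with
  | zero => simpa using ginv_rec z
  | succ l ih =>
      rw [Finset.prod_range_succ, ih, ginv_rec (z + (l:ℂ) + 1)]
      push_cast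
      rw [show z + (↑l + 1 : ℂ) + 1 = z + (l:ℂ) + 1 + 1 by ring]
      ring

private lemma gamma_iter (l : ℕ) (z : ℂ) (hz : ∀ i ∈ Finset.range (l+1), z + (i:ℂ) ≠ 0) :
    Gamma z = Gamma (z + (l:ℂ) + 1) * (∏ i ∈ Finset.range (l+1), (z + (i:ℂ)))⁻¹ := by
  have key : ∀ l' : ℕ, (∀ i ∈ Finset.range (l'+1), z + (i:ℂ) ≠ 0) →
      Gamma (z + (l':ℂ) + 1) = (∏ i ∈ Finset.range (l'+1), (z + (i:ℂ))) * Gamma z := by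
    intro l'
    induction l' with
    | zero => intro h; simpa using Complex.Gamma_add_one z (by simpa using h 0 (by simp))
    | succ l' ih =>
        intro h
        have h1 : z + ((l':ℂ) + 1) ≠ 0 := by
          have := h (l'+1) (by simp)
          push_cast at this ⊢
          convert this using 2
        have h2 : Gamma (z + ((l':ℂ)+1) + 1) = (z + ((l':ℂ)+1)) * Gamma (z + ((l':ℂ)+1)) :=
          Complex.Gamma_add_one _ h1
        have h3 : z + ((l'+1:ℕ):ℂ) + 1 = z + ((l':ℂ)+1) + 1 := by push_cast; ring
        have h4 : z + ((l':ℂ)+1) = z + (l':ℂ) + 1 := by ring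
        rw [h3, h2, h4, ih (fun i hi => h i (by simp at hi ⊢; omega)),
          Finset.prod_range_succ _ (l'+1)]
        push_cast
        ring
  have hp : (∏ i ∈ Finset.range (l+1), (z + (i:ℂ))) ≠ 0 :=
    Finset.prod_ne_zero_iff.mpr hz
  rw [key l hz, mul_assoc, mul_comm, mul_assoc, inv_mul_cancel₀ hp, mul_one]

private lemma evne (ν₀ c : ℂ) : ∀ᶠ ν in 𝓝[≠] ν₀, ν ≠ c := by
  rcases eq_or_ne ν₀ c with rfl | h
  · exact eventually_mem_nhdsWithin.mono (fun x hx => hx)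
  · exact (eventually_ne_nhds h).filter_mono nhdsWithin_le_nhds

private lemma pkg {f : ℂ → ℂ} {ν₀ : ℂ} (nn : ℤ) (g : ℂ → ℂ) (hg : AnalyticAt ℂ g ν₀)
    (hg0 : g ν₀ ≠ 0) (heq : ∀ᶠ ν in 𝓝[≠] ν₀, f ν = (ν - ν₀)^nn * g ν) :
    ∃ h : MeromorphicAt f ν₀, meromorphicOrderAt f ν₀ = nn := by
  have h1 : MeromorphicAt (fun ν : ℂ => (ν - ν₀)^nn * g ν) ν₀ :=
    (((MeromorphicAt.id ν₀).sub (MeromorphicAt.const ν₀ ν₀)).zpow nn).mul hg.meromorphicAt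
  have hm : MeromorphicAt f ν₀ := h1.congr (EventuallyEq.symm heq)
  exact ⟨hm, (meromorphicOrderAt_eq_int_iff hm).mpr ⟨g, hg, hg0, by simpa only [smul_eq_mul] using heq⟩⟩

private lemma phi_eq (A w ν : ℂ) : A - I*ν = w ↔ ν = -I*(A - w) := by
  constructor <;> intro h
  · linear_combination I * h + ν * Complex.I_sq
  · linear_combination (-I) * h + (A - w) * Complex.I_sq

private lemma an_finprod {s : Finset ℕ} {F : ℕ → ℂ → ℂ} {ν₀ : ℂ}
    (h : ∀ i ∈ s, AnalyticAt ℂ (F i) ν₀) :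
    AnalyticAt ℂ (fun ν => ∏ i ∈ s, F i ν) ν₀ := by
  classical
  induction s using Finset.induction with
  | empty => simpa using analyticAt_const
  | @insert a s ha ih =>
      simp only [Finset.prod_insert ha]
      exact (h a (Finset.mem_insert_self a s)).mul
        (ih fun i hi => h i (Finset.mem_insert_of_mem hi))

private lemma an_Gamma_comp {φf : ℂ → ℂ} {ν₀ : ℂ} (hφ : AnalyticAt ℂ φf ν₀)
    (h : 0 < (φf ν₀).re) : AnalyticAt ℂ (fun ν => Gamma (φf ν)) ν₀ :=
  (an_Gamma h).comp hφ

private lemma an_Ginv_comp {φf : ℂ → ℂ} {ν₀ : ℂ} (hφ : AnalyticAt ℂ φf ν₀) :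
    AnalyticAt ℂ (fun ν => (Gamma (φf ν))⁻¹) ν₀ :=
  (an_Ginv (φf ν₀)).comp hφ

private lemma alg1 (G1 Pj Pl G2 c1 c2 s : ℂ) (hs : s ≠ 0) (h1 : c1 = -I*s) (h2 : c2 = I*s) :
    G1 * (Pj * c1)⁻¹ * (Pl * c2 * G2) = G1 * Pj⁻¹ * (-I)⁻¹ * (Pl * (I * G2)) := by
  subst h1 h2
  rw [mul_inv, mul_inv]
  have hss : s⁻¹ * s = 1 := inv_mul_cancel₀ hs
  linear_combination (G1 * Pj⁻¹ * (-I)⁻¹ * Pl * I * G2) * hss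

private lemma alg2 (G1 Pj G2 c1 s : ℂ) (hs : s ≠ 0) (h1 : c1 = -I*s) :
    G1 * (Pj * c1)⁻¹ * G2 = s^(-1:ℤ) * (G1 * Pj⁻¹ * (-I)⁻¹ * G2) := by
  subst h1
  rw [zpow_neg_one, mul_inv, mul_inv]
  ring

private lemma alg3 (G1 PL Pl G2 c2 s : ℂ) (h2 : c2 = I*s) :
    G1 * PL⁻¹ * (Pl * c2 * G2) = s^(1:ℤ) * (G1 * PL⁻¹ * (Pl * (I * G2))) := by
  subst h2
  rw [zpow_one]
  ring

/-- **Lemma 1.** For `n ∈ ℕ`, `m ∈ ℤ`, `x, y ∈ ℝ`, with `ᾱ = x + iy`,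
`α = x + m + iy`, the function
`ν ↦ Γ(x + iy + n/2 − iν)/Γ(1 − m − x − iy + n/2 + iν)` is meromorphic in
`ν ∈ ℂ` and its poles are exactly the points
`ν = −i(ᾱ + (m + |n − m|)/2 + k)`, `k ∈ ℕ ∪ {0}`, each pole being simple
(i.e. of order `−1`). -/
theorem stmt1 (n : ℕ) (m : ℤ) (x y : ℝ) :
    ∃ hf : ∀ ν₀ : ℂ, MeromorphicAt
        (fun ν : ℂ => Gamma ((x : ℂ) + y * I + n / 2 - I * ν) /
          Gamma (1 - m - x - y * I + n / 2 + I * ν)) ν₀,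
      ∀ ν₀ : ℂ,
        (((meromorphicOrderAt (fun ν : ℂ => Gamma ((x : ℂ) + y * I + n / 2 - I * ν) /
            Gamma (1 - m - x - y * I + n / 2 + I * ν)) ν₀) < 0) ↔
          ∃ k : ℕ, ν₀ = -I * (((x : ℂ) + y * I) + ((m : ℂ) + (|(n : ℤ) - m| : ℤ)) / 2 + k)) ∧
        ((∃ k : ℕ, ν₀ = -I * (((x : ℂ) + y * I) + ((m : ℂ) + (|(n : ℤ) - m| : ℤ)) / 2 + k)) →
          (meromorphicOrderAt (fun ν : ℂ => Gamma ((x : ℂ) + y * I + n / 2 - I * ν) /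
            Gamma (1 - m - x - y * I + n / 2 + I * ν)) ν₀) = -1) := by
  set A : ℂ := (x : ℂ) + y * I + n / 2 with hA
  set B : ℂ := 1 - (m:ℂ) - x - y * I + n / 2 with hB
  set d : ℕ := (m - (n:ℤ)).toNat with hd
  have hBA : A + B = 1 - (m:ℂ) + n := by rw [hA, hB]; push_cast; ring
  have hpt : ∀ k : ℕ, -I * (((x : ℂ) + y * I) + ((m : ℂ) + (|(n : ℤ) - m| : ℤ)) / 2 + k)
      = -I * (A + ((d + k : ℕ):ℂ)) := by
    intro k
    have hZ : (m : ℤ) + |(n:ℤ) - m| = (n:ℤ) + 2*(d:ℤ) := by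
      rw [abs_sub_comm, Int.abs_eq_natAbs]
      omega
    have hC : ((m:ℂ) + ((|(n:ℤ) - m| : ℤ) : ℂ)) = (n:ℂ) + 2*(d:ℂ) := by exact_mod_cast hZ
    rw [hC, hA]; push_cast; ring
  have hφd : ∀ c : ℂ, Differentiable ℂ (fun ν : ℂ => A - I*ν + c) :=
    fun c => ((differentiable_id.const_mul I).const_sub A).add_const c
  have hψd : ∀ c : ℂ, Differentiable ℂ (fun ν : ℂ => B + I*ν + c) :=
    fun c => ((differentiable_id.const_mul I).const_add B).add_const c
  have anφ : ∀ (c : ℂ) (ν₀ : ℂ), AnalyticAt ℂ (fun ν : ℂ => A - I*ν + c) ν₀ :=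
    fun c ν₀ => (hφd c).analyticAt ν₀
  have anψ : ∀ (c : ℂ) (ν₀ : ℂ), AnalyticAt ℂ (fun ν : ℂ => B + I*ν + c) ν₀ :=
    fun c ν₀ => (hψd c).analyticAt ν₀
  have anφ1 : ∀ (c : ℂ) (ν₀ : ℂ), AnalyticAt ℂ (fun ν : ℂ => A - I*ν + c + 1) ν₀ :=
    fun c ν₀ => ((hφd c).add_const 1).analyticAt ν₀
  have anψ1 : ∀ (c : ℂ) (ν₀ : ℂ), AnalyticAt ℂ (fun ν : ℂ => B + I*ν + c + 1) ν₀ :=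
    fun c ν₀ => ((hψd c).add_const 1).analyticAt ν₀
  have anψ0 : ∀ ν₀ : ℂ, AnalyticAt ℂ (fun ν : ℂ => B + I*ν) ν₀ :=
    fun ν₀ => ((differentiable_id.const_mul I).const_add B).analyticAt ν₀
  have key : ∀ ν₀ : ℂ, ∃ hm : MeromorphicAt
      (fun ν : ℂ => Gamma (A - I*ν) / Gamma (B + I*ν)) ν₀,
      (meromorphicOrderAt (fun ν : ℂ => Gamma (A - I*ν) / Gamma (B + I*ν)) ν₀ < 0 ↔ ∃ k : ℕ, ν₀ = -I * (A + ((d + k : ℕ):ℂ))) ∧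
      ((∃ k : ℕ, ν₀ = -I * (A + ((d + k : ℕ):ℂ))) → meromorphicOrderAt (fun ν : ℂ => Gamma (A - I*ν) / Gamma (B + I*ν)) ν₀ = -1) := by
    intro ν₀
    by_cases h1 : ∃ j : ℕ, ν₀ = -I * (A + (j:ℂ))
    · obtain ⟨j, hj⟩ := h1
      have hz₀ : A - I*ν₀ = -(j:ℂ) := (phi_eq A (-(j:ℂ)) ν₀).mpr (by rw [hj]; ring_nf)
      have hone : A - I*ν₀ + (j:ℂ) + 1 = 1 := by rw [hz₀]; ring
      have hw₀ : B + I*ν₀ = 1 - (m:ℂ) + n + j := by linear_combination hBA - hz₀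
      have hprodj_ne : (∏ i ∈ Finset.range j, (A - I*ν₀ + (i:ℂ))) ≠ 0 := by
        rw [Finset.prod_ne_zero_iff]
        intro i hi
        rw [hz₀]
        have hij : (i:ℂ) ≠ (j:ℂ) := by exact_mod_cast (Finset.mem_range.mp hi).ne
        intro h0; exact hij (by linear_combination h0)
      have hev : ∀ᶠ ν in 𝓝[≠] ν₀, ∀ i ∈ Finset.range (j+1), A - I*ν + (i:ℂ) ≠ 0 := by
        rw [Filter.eventually_all_finset]
        intro i _
        refine (evne ν₀ (-I*(A + (i:ℂ)))).mono (fun ν hν h0 => hν ?_)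
        have := (phi_eq A (-(i:ℂ)) ν).mp (by linear_combination h0)
        rw [this]; ring_nf
      have hνne : ∀ᶠ ν in 𝓝[≠] ν₀, ν ≠ ν₀ := evne ν₀ ν₀
      have hlin : ∀ ν : ℂ, A - I*ν + (j:ℂ) = -I * (ν - ν₀) := by
        intro ν
        linear_combination (-I) * hj + (A + (j:ℂ)) * Complex.I_sq
      have hnum_an : AnalyticAt ℂ (fun ν : ℂ => Gamma (A - I*ν + (j:ℂ) + 1)) ν₀ :=
        an_Gamma_comp (anφ1 (j:ℂ) ν₀) (by rw [hone]; norm_num)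
      have hnum_ne : Gamma (A - I*ν₀ + (j:ℂ) + 1) ≠ 0 := by
        rw [hone, Complex.Gamma_one]; norm_num
      by_cases h2 : (j:ℤ) + 1 ≤ m - n
      · -- cancelled pole : order 0
        set l : ℕ := (m - n - 1 - j).toNat with hl
        have hlz : (l:ℂ) = (m:ℂ) - n - 1 - j := by
          have h' : (l:ℤ) = m - n - 1 - j := by omega
          exact_mod_cast h'
        have hw₀' : B + I*ν₀ = -(l:ℂ) := by rw [hw₀, hlz]; ring
        have hlinψ : ∀ ν : ℂ, B + I*ν + (l:ℂ) = I * (ν - ν₀) := by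
          intro ν; linear_combination hw₀'
        have honeψ : B + I*ν₀ + (l:ℂ) + 1 = 1 := by rw [hw₀']; ring
        have hprodl_ne : (∏ i ∈ Finset.range l, (B + I*ν₀ + (i:ℂ))) ≠ 0 := by
          rw [Finset.prod_ne_zero_iff]
          intro i hi
          rw [hw₀']
          have hij : (i:ℂ) ≠ (l:ℂ) := by exact_mod_cast (Finset.mem_range.mp hi).ne
          intro h0; exact hij (by linear_combination h0)
        set g : ℂ → ℂ := fun ν =>
          Gamma (A - I*ν + (j:ℂ) + 1) * (∏ i ∈ Finset.range j, (A - I*ν + (i:ℂ)))⁻¹ *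
          (-I)⁻¹ * ((∏ i ∈ Finset.range l, (B + I*ν + (i:ℂ))) *
            (I * (Gamma (B + I*ν + (l:ℂ) + 1))⁻¹)) with hg_def
        have hg : AnalyticAt ℂ g ν₀ := by
          rw [hg_def]
          apply AnalyticAt.mul
          apply AnalyticAt.mul
          apply AnalyticAt.mul
          · exact hnum_an
          · exact (an_finprod (fun i _ => anφ (i:ℂ) ν₀)).inv hprodj_ne
          · exact analyticAt_const
          · exact (an_finprod (fun i _ => anψ (i:ℂ) ν₀)).mul
              (analyticAt_const.mul (an_Ginv_comp (anψ1 (l:ℂ) ν₀)))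
        have hg0 : g ν₀ ≠ 0 := by
          rw [hg_def]
          apply mul_ne_zero
          apply mul_ne_zero
          apply mul_ne_zero
          · exact hnum_ne
          · exact inv_ne_zero hprodj_ne
          · simp [Complex.I_ne_zero]
          · apply mul_ne_zero hprodl_ne
            apply mul_ne_zero Complex.I_ne_zero
            rw [honeψ, Complex.Gamma_one]
            norm_num
        have heq : ∀ᶠ ν in 𝓝[≠] ν₀,
            Gamma (A - I*ν) / Gamma (B + I*ν) = (ν - ν₀)^(0:ℤ) * g ν := by
          filter_upwards [hev, hνne] with ν hν hν'
          rw [div_eq_mul_inv, gamma_iter j _ hν, ginv_iter l (B + I*ν),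
            Finset.prod_range_succ (fun i : ℕ => A - I*ν + (i:ℂ)) j,
            Finset.prod_range_succ (fun i : ℕ => B + I*ν + (i:ℂ)) l,
            zpow_zero, one_mul, hg_def]
          exact alg1 _ _ _ _ _ _ _ (sub_ne_zero.mpr hν') (hlin ν) (hlinψ ν)
        obtain ⟨hm, ho⟩ := pkg 0 g hg hg0 heq
        have hfalse : ¬ ∃ k : ℕ, ν₀ = -I * (A + ((d + k : ℕ):ℂ)) := by
          rintro ⟨k, hk⟩
          rw [hj] at hk
          have e1 : (A + (j:ℂ)) = (A + ((d + k : ℕ):ℂ)) :=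
            mul_left_cancel₀ (neg_ne_zero.mpr Complex.I_ne_zero) hk
          have e2 : (j:ℂ) = ((d + k : ℕ):ℂ) := by linear_combination e1
          have e3 : j = d + k := by exact_mod_cast e2
          omega
        refine ⟨hm, ?_, fun hk => absurd hk hfalse⟩
        rw [ho]
        simp only [hfalse, iff_false, not_lt]
        exact_mod_cast (by norm_num : (0:ℤ) ≤ 0)
      · -- genuine pole : order -1
        have hGψ_ne : Gamma (B + I*ν₀) ≠ 0 := by
          rw [hw₀]
          apply Complex.Gamma_ne_zero
          intro k hk
          have h' : (1 - m + n + j : ℤ) = -(k:ℤ) := by exact_mod_cast hk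
          omega
        set g : ℂ → ℂ := fun ν =>
          Gamma (A - I*ν + (j:ℂ) + 1) * (∏ i ∈ Finset.range j, (A - I*ν + (i:ℂ)))⁻¹ *
          (-I)⁻¹ * (Gamma (B + I*ν))⁻¹ with hg_def
        have hg : AnalyticAt ℂ g ν₀ := by
          rw [hg_def]
          apply AnalyticAt.mul
          apply AnalyticAt.mul
          apply AnalyticAt.mul
          · exact hnum_an
          · exact (an_finprod (fun i _ => anφ (i:ℂ) ν₀)).inv hprodj_ne
          · exact analyticAt_const
          · exact an_Ginv_comp (anψ0 ν₀)
        have hg0 : g ν₀ ≠ 0 := by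
          rw [hg_def]
          apply mul_ne_zero
          apply mul_ne_zero
          apply mul_ne_zero
          · exact hnum_ne
          · exact inv_ne_zero hprodj_ne
          · simp [Complex.I_ne_zero]
          · exact inv_ne_zero hGψ_ne
        have heq : ∀ᶠ ν in 𝓝[≠] ν₀,
            Gamma (A - I*ν) / Gamma (B + I*ν) = (ν - ν₀)^(-1:ℤ) * g ν := by
          filter_upwards [hev, hνne] with ν hν hν'
          rw [div_eq_mul_inv, gamma_iter j _ hν,
            Finset.prod_range_succ (fun i : ℕ => A - I*ν + (i:ℂ)) j, hg_def]
          exact alg2 _ _ _ _ _ (sub_ne_zero.mpr hν') (hlin ν)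
        obtain ⟨hm, ho⟩ := pkg (-1) g hg hg0 heq
        have hQ : ∃ k : ℕ, ν₀ = -I * (A + ((d + k : ℕ):ℂ)) := by
          refine ⟨j - d, ?_⟩
          rw [show d + (j - d) = j by omega, hj]
        refine ⟨hm, ?_, fun _ => ho⟩
        rw [ho]
        simp only [hQ, iff_true]
        exact_mod_cast (by norm_num : (-1:ℤ) < 0)
    · -- the numerator has no pole at ν₀
      have hφne : ∀ i : ℕ, A - I*ν₀ + (i:ℂ) ≠ 0 := by
        intro i h0
        apply h1
        refine ⟨i, ?_⟩
        have := (phi_eq A (-(i:ℂ)) ν₀).mp (by linear_combination h0)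
        rw [this]; ring_nf
      set L : ℕ := ⌈-((A - I*ν₀).re)⌉₊ with hL
      have hLre : 0 < (A - I*ν₀ + (L:ℂ) + 1).re := by
        have h' : -((A - I*ν₀).re) ≤ (L:ℝ) := Nat.le_ceil _
        simp only [add_re, one_re, natCast_re]
        linarith
      have hGnum_an : AnalyticAt ℂ (fun ν : ℂ => Gamma (A - I*ν + (L:ℂ) + 1)) ν₀ :=
        an_Gamma_comp (anφ1 (L:ℂ) ν₀) hLre
      have hGnum_ne : Gamma (A - I*ν₀ + (L:ℂ) + 1) ≠ 0 := Complex.Gamma_ne_zero_of_re_pos hLre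
      have hprodL_ne : (∏ i ∈ Finset.range (L+1), (A - I*ν₀ + (i:ℂ))) ≠ 0 :=
        Finset.prod_ne_zero_iff.mpr (fun i _ => hφne i)
      have hev : ∀ᶠ ν in 𝓝[≠] ν₀, ∀ i ∈ Finset.range (L+1), A - I*ν + (i:ℂ) ≠ 0 := by
        rw [Filter.eventually_all_finset]
        intro i _
        refine (evne ν₀ (-I*(A + (i:ℂ)))).mono (fun ν hν h0 => hν ?_)
        have := (phi_eq A (-(i:ℂ)) ν).mp (by linear_combination h0)
        rw [this]; ring_nf
      have hnoQ : ¬ ∃ k : ℕ, ν₀ = -I * (A + ((d + k : ℕ):ℂ)) := by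
        rintro ⟨k, hk⟩
        exact h1 ⟨d + k, hk⟩
      by_cases h3 : ∃ l : ℕ, B + I*ν₀ = -(l:ℂ)
      · -- zero of order 1
        obtain ⟨l, hw₀'⟩ := h3
        have hlinψ : ∀ ν : ℂ, B + I*ν + (l:ℂ) = I * (ν - ν₀) := by
          intro ν; linear_combination hw₀'
        have honeψ : B + I*ν₀ + (l:ℂ) + 1 = 1 := by rw [hw₀']; ring
        have hprodl_ne : (∏ i ∈ Finset.range l, (B + I*ν₀ + (i:ℂ))) ≠ 0 := by
          rw [Finset.prod_ne_zero_iff]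
          intro i hi
          rw [hw₀']
          have hij : (i:ℂ) ≠ (l:ℂ) := by exact_mod_cast (Finset.mem_range.mp hi).ne
          intro h0; exact hij (by linear_combination h0)
        set g : ℂ → ℂ := fun ν =>
          Gamma (A - I*ν + (L:ℂ) + 1) * (∏ i ∈ Finset.range (L+1), (A - I*ν + (i:ℂ)))⁻¹ *
          ((∏ i ∈ Finset.range l, (B + I*ν + (i:ℂ))) *
            (I * (Gamma (B + I*ν + (l:ℂ) + 1))⁻¹)) with hg_def
        have hg : AnalyticAt ℂ g ν₀ := by
          rw [hg_def]
          apply AnalyticAt.mul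
          apply AnalyticAt.mul
          · exact hGnum_an
          · exact (an_finprod (fun i _ => anφ (i:ℂ) ν₀)).inv hprodL_ne
          · exact (an_finprod (fun i _ => anψ (i:ℂ) ν₀)).mul
              (analyticAt_const.mul (an_Ginv_comp (anψ1 (l:ℂ) ν₀)))
        have hg0 : g ν₀ ≠ 0 := by
          rw [hg_def]
          apply mul_ne_zero
          apply mul_ne_zero
          · exact hGnum_ne
          · exact inv_ne_zero hprodL_ne
          · apply mul_ne_zero hprodl_ne
            apply mul_ne_zero Complex.I_ne_zero
            rw [honeψ, Complex.Gamma_one]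
            norm_num
        have heq : ∀ᶠ ν in 𝓝[≠] ν₀,
            Gamma (A - I*ν) / Gamma (B + I*ν) = (ν - ν₀)^(1:ℤ) * g ν := by
          filter_upwards [hev] with ν hν
          rw [div_eq_mul_inv, gamma_iter L _ hν, ginv_iter l (B + I*ν),
            Finset.prod_range_succ (fun i : ℕ => B + I*ν + (i:ℂ)) l, hg_def]
          exact alg3 _ _ _ _ _ _ (hlinψ ν)
        obtain ⟨hm, ho⟩ := pkg 1 g hg hg0 heq
        refine ⟨hm, ?_, fun hQ => absurd hQ hnoQ⟩
        rw [ho]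
        simp only [hnoQ, iff_false, not_lt]
        exact_mod_cast (by norm_num : (0:ℤ) ≤ 1)
      · -- analytic and nonvanishing : order 0
        have hGψ_ne : Gamma (B + I*ν₀) ≠ 0 :=
          Complex.Gamma_ne_zero (fun k hk => h3 ⟨k, hk⟩)
        set g : ℂ → ℂ := fun ν =>
          Gamma (A - I*ν + (L:ℂ) + 1) * (∏ i ∈ Finset.range (L+1), (A - I*ν + (i:ℂ)))⁻¹ *
          (Gamma (B + I*ν))⁻¹ with hg_def
        have hg : AnalyticAt ℂ g ν₀ := by
          rw [hg_def]
          apply AnalyticAt.mul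
          apply AnalyticAt.mul
          · exact hGnum_an
          · exact (an_finprod (fun i _ => anφ (i:ℂ) ν₀)).inv hprodL_ne
          · exact an_Ginv_comp (anψ0 ν₀)
        have hg0 : g ν₀ ≠ 0 := by
          rw [hg_def]
          exact mul_ne_zero (mul_ne_zero hGnum_ne (inv_ne_zero hprodL_ne)) (inv_ne_zero hGψ_ne)
        have heq : ∀ᶠ ν in 𝓝[≠] ν₀,
            Gamma (A - I*ν) / Gamma (B + I*ν) = (ν - ν₀)^(0:ℤ) * g ν := by
          filter_upwards [hev] with ν hν
          rw [div_eq_mul_inv, gamma_iter L _ hν, zpow_zero, one_mul, hg_def]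
        obtain ⟨hm, ho⟩ := pkg 0 g hg hg0 heq
        refine ⟨hm, ?_, fun hQ => absurd hQ hnoQ⟩
        rw [ho]
        simp only [hnoQ, iff_false, not_lt]
        exact_mod_cast (by norm_num : (0:ℤ) ≤ 0)
  -- assemble
  have hf : ∀ ν₀ : ℂ, MeromorphicAt
      (fun ν : ℂ => Gamma (A - I*ν) / Gamma (B + I*ν)) ν₀ := fun ν₀ => (key ν₀).choose
  refine ⟨hf, fun ν₀ => ?_⟩
  obtain ⟨hiff, hneg⟩ := (key ν₀).choose_spec
  constructor
  · rw [hiff]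
    exact exists_congr (fun k => by rw [hpt k])
  · intro hP
    apply hneg
    obtain ⟨k, hk⟩ := hP
    exact ⟨k, by rw [hk, hpt k]⟩
end

section
/- Let d ≥ 1 be an integer, let α, β ∈ ℂ satisfy Re α < d/2, Re β < d/2 and Re(α + β) > d/2, and let y ∈ ℝ^d with y ≠ 0. Then the integral ∫_{ℝ^d} ‖x‖^{−2α} ‖y − x‖^{−2β} dx converges absolutely and equals π^{d/2} · (Γ(d/2 − α) Γ(d/2 − β) Γ(α + β − d/2)) / (Γ(α) Γ(β) Γ(d − α − β)) · ‖y‖^{−2(α+β−d/2)}. -/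
open Complex MeasureTheory Set
open scoped Real RealInnerProductSpace

namespace RieszChain



/-- cpow of a positive real in exp/log normal form. -/
lemma cpow_pos_exp {x : ℝ} (hx : 0 < x) (w : ℂ) :
    (x : ℂ) ^ w = Complex.exp (w * (Real.log x : ℂ)) := by
  rw [cpow_def_of_ne_zero (ofReal_ne_zero.2 hx.ne'), Complex.ofReal_log hx.le, mul_comm]

lemma rpow_pos_exp {x : ℝ} (hx : 0 < x) (w : ℝ) :
    x ^ w = Real.exp (w * Real.log x) := by
  rw [Real.rpow_def_of_pos hx, mul_comm]

/-- Gamma-type integral: integrability. -/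
lemma gammaType_integrableOn {γ : ℂ} (hγ : 0 < γ.re) {c : ℝ} (hc : 0 < c) :
    IntegrableOn (fun t : ℝ => (t : ℂ) ^ (γ - 1) * Complex.exp (-(c * t : ℝ))) (Ioi 0) := by
  have h0 : IntegrableOn (fun t : ℝ => Real.exp (-t) * t ^ (γ.re - 1)) (Ioi 0) :=
    Real.GammaIntegral_convergent hγ
  have h1 : IntegrableOn (fun t : ℝ => Real.exp (-(c*t)) * (c*t) ^ (γ.re - 1)) (Ioi 0) := by
    have := (integrableOn_Ioi_comp_mul_left_iff
      (fun t : ℝ => Real.exp (-t) * t ^ (γ.re - 1)) 0 hc).2 (by simpa using h0)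
    simpa using this
  have h2 : IntegrableOn (fun t : ℝ => c ^ (γ.re - 1) * (t ^ (γ.re - 1) * Real.exp (-(c*t)))) (Ioi 0) := by
    apply Integrable.congr h1
    filter_upwards [ae_restrict_mem measurableSet_Ioi] with t ht
    rw [Real.mul_rpow hc.le (le_of_lt ht)]
    ring
  have h3 := h2.const_mul (c ^ (γ.re - 1))⁻¹
  apply Integrable.mono' (μ := volume.restrict (Ioi 0))
    (g := fun t : ℝ => t ^ (γ.re - 1) * Real.exp (-(c*t)))
  · apply h3.congr
    filter_upwards with t
    rw [← mul_assoc, inv_mul_cancel₀ (by positivity), one_mul]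
  · apply AEStronglyMeasurable.mul
    · exact (Complex.measurable_ofReal.pow measurable_const).aestronglyMeasurable
    · exact (Complex.measurable_exp.comp (by fun_prop)).aestronglyMeasurable
  · filter_upwards [ae_restrict_mem measurableSet_Ioi] with t ht
    rw [norm_mul, norm_cpow_eq_rpow_re_of_pos ht, Complex.norm_exp]
    simp [Complex.sub_re]

/-- Gamma-type integral: value. -/
lemma gammaType_integral {γ : ℂ} (hγ : 0 < γ.re) {c : ℝ} (hc : 0 < c) :
    ∫ t in Ioi (0:ℝ), (t : ℂ) ^ (γ - 1) * Complex.exp (-(c * t : ℝ)) =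
      Gamma γ * (c : ℂ) ^ (-γ) := by
  have h := integral_cpow_mul_exp_neg_mul_Ioi hγ hc
  have : ∫ t in Ioi (0:ℝ), (t : ℂ) ^ (γ - 1) * Complex.exp (-(c * t : ℝ)) =
      ∫ t in Ioi (0:ℝ), (t : ℂ) ^ (γ - 1) * Complex.exp (-((c:ℂ) * (t:ℂ))) := by
    apply setIntegral_congr_fun measurableSet_Ioi
    intro t _
    push_cast
    ring_nf
  rw [this, h]
  rw [mul_comm]
  congr 1
  rw [show (1/(c:ℂ)) = ((1/c : ℝ) : ℂ) by push_cast; ring,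
    cpow_pos_exp hc, cpow_pos_exp (by positivity : (0:ℝ) < 1/c)]
  congr 1
  rw [Real.log_div one_ne_zero hc.ne', Real.log_one]
  push_cast
  ring





lemma Gamma_ne_zero' {s : ℂ} (hs : 0 < s.re) : Gamma s ≠ 0 := by
  apply Complex.Gamma_ne_zero
  intro m h
  rw [h] at hs
  simp only [neg_re, natCast_re] at hs
  have := Nat.cast_nonneg (α := ℝ) m
  linarith

lemma betaIoi_hasDeriv : ∀ σ ∈ Ioo (0:ℝ) 1,
    HasDerivWithinAt (fun σ : ℝ => σ / (1 - σ)) (((1-σ)^2)⁻¹) (Ioo 0 1) σ := by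
  intro σ hσ
  have hτ : (1:ℝ) - σ ≠ 0 := ne_of_gt (by linarith [hσ.2] : (0:ℝ) < 1 - σ)
  have := (hasDerivAt_id σ).div ((hasDerivAt_id σ).const_sub 1) hτ
  convert this.hasDerivWithinAt using 1
  · rfl
  · rfl
  · rfl
  · simp only [id]
    field_simp
    ring

lemma betaIoi_inj : InjOn (fun σ : ℝ => σ / (1 - σ)) (Ioo 0 1) := by
  intro a ha b hb h
  have ha' : (1:ℝ) - a ≠ 0 := ne_of_gt (by linarith [ha.2] : (0:ℝ) < 1 - a)
  have hb' : (1:ℝ) - b ≠ 0 := ne_of_gt (by linarith [hb.2] : (0:ℝ) < 1 - b)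
  field_simp at h
  linarith

lemma betaIoi_image : (fun σ : ℝ => σ / (1 - σ)) '' Ioo 0 1 = Ioi 0 := by
  ext v
  constructor
  · rintro ⟨σ, hσ, rfl⟩
    have h1 : (0:ℝ) < 1 - σ := by linarith [hσ.2]
    exact div_pos hσ.1 h1
  · intro hv
    refine ⟨v / (1 + v), ⟨?_, ?_⟩, ?_⟩
    · exact div_pos hv (by linarith [mem_Ioi.mp hv])
    · rw [div_lt_one (by linarith [mem_Ioi.mp hv])]; linarith [mem_Ioi.mp hv]
    · have h1 : (1:ℝ) + v ≠ 0 := by have := mem_Ioi.mp hv; linarith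
      field_simp
      ring

lemma betaIoi_integrand_eq {p q : ℂ} {σ : ℝ} (hσ : σ ∈ Ioo (0:ℝ) 1) :
    |((1-σ)^2)⁻¹| • ((((σ/(1-σ) : ℝ)) : ℂ) ^ (p-1) * (((1 + σ/(1-σ) : ℝ)) : ℂ) ^ (-(p+q)))
      = (σ:ℂ) ^ (p-1) * ((1:ℂ) - σ) ^ (q-1) := by
  obtain ⟨hσ0, hσ1⟩ := hσ
  have hτ : (0:ℝ) < 1 - σ := by linarith
  have h1 : (1 + σ/(1-σ) : ℝ) = (1-σ)⁻¹ := by field_simp; ring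
  have h2 : ((1:ℂ) - σ) = ((1 - σ : ℝ) : ℂ) := by push_cast; ring
  have h3 : |((1-σ)^2)⁻¹| = ((1-σ)^2)⁻¹ := abs_of_pos (by positivity)
  have h4 : (((1-σ)^2)⁻¹ : ℝ) = Real.exp (-(2 * Real.log (1-σ))) := by
    rw [Real.exp_neg]
    congr 1
    rw [show (2 : ℝ) * Real.log (1-σ) = Real.log ((1-σ)^2) by
      rw [Real.log_pow]; norm_num]
    exact (Real.exp_log (by positivity)).symm
  rw [h1, h2, h3, Complex.real_smul, h4,
    cpow_pos_exp (div_pos hσ0 hτ), cpow_pos_exp (inv_pos.mpr hτ),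
    cpow_pos_exp hσ0, cpow_pos_exp hτ,
    Real.log_div hσ0.ne' hτ.ne', Real.log_inv, Complex.ofReal_exp,
    ← Complex.exp_add, ← Complex.exp_add, ← Complex.exp_add]
  congr 1
  push_cast
  ring

lemma betaIoi_integrableOn {p q : ℂ} (hp : 0 < p.re) (hq : 0 < q.re) :
    IntegrableOn (fun u : ℝ => (u:ℂ) ^ (p-1) * (((1 + u : ℝ)) : ℂ) ^ (-(p+q))) (Ioi 0) := by
  rw [← betaIoi_image,
    integrableOn_image_iff_integrableOn_abs_deriv_smul measurableSet_Ioo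
      betaIoi_hasDeriv betaIoi_inj]
  have hbeta : IntegrableOn (fun σ : ℝ => (σ:ℂ) ^ (p-1) * ((1:ℂ) - σ) ^ (q-1)) (Ioo 0 1) := by
    have := (Complex.betaIntegral_convergent hp hq)
    rw [intervalIntegrable_iff_integrableOn_Ioo_of_le zero_le_one] at this
    exact this
  apply hbeta.congr_fun ?_ measurableSet_Ioo
  intro σ hσ
  exact (betaIoi_integrand_eq hσ).symm

lemma betaIoi_integral {p q : ℂ} (hp : 0 < p.re) (hq : 0 < q.re) :
    ∫ u in Ioi (0:ℝ), (u:ℂ) ^ (p-1) * (((1 + u : ℝ)) : ℂ) ^ (-(p+q))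
      = Gamma p * Gamma q / Gamma (p+q) := by
  rw [← betaIoi_image,
    integral_image_eq_integral_abs_deriv_smul measurableSet_Ioo betaIoi_hasDeriv betaIoi_inj]
  rw [setIntegral_congr_fun measurableSet_Ioo (fun σ hσ => betaIoi_integrand_eq hσ)]
  have h1 : ∫ σ in Ioo (0:ℝ) 1, (σ:ℂ) ^ (p-1) * ((1:ℂ) - σ) ^ (q-1) = betaIntegral p q := by
    rw [Complex.betaIntegral, intervalIntegral.integral_of_le zero_le_one,
      integral_Ioc_eq_integral_Ioo]
  rw [h1]
  have h2 := Complex.Gamma_mul_Gamma_eq_betaIntegral hp hq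
  have h3 : Gamma (p+q) ≠ 0 := Gamma_ne_zero' (by simp [Complex.add_re]; linarith)
  field_simp [h2]
  rw [h2]; ring




variable {d : ℕ}

local notation "E" => EuclideanSpace ℝ (Fin d)

lemma gauss_rewrite (y : E) (t u : ℝ) (x : E) :
    Complex.exp (-((t * (‖x‖^2 + u * ‖y-x‖^2) : ℝ) : ℂ))
      = Complex.exp (-((t*u*‖y‖^2 : ℝ) : ℂ)) *
        Complex.exp (-((t*(1+u) : ℝ) : ℂ) * (‖x‖:ℂ)^2 + ((2*t*u : ℝ) : ℂ) * ((⟪y, x⟫ : ℝ) : ℂ)) := by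
  rw [← Complex.exp_add]
  congr 1
  have h : ‖y - x‖^2 = ‖y‖^2 - 2*⟪y,x⟫ + ‖x‖^2 := norm_sub_sq_real y x
  have hr : -(t * (‖x‖^2 + u*‖y-x‖^2)) = -(t*u*‖y‖^2) +
      (-(t*(1+u))*‖x‖^2 + 2*t*u*⟪y,x⟫) := by rw [h]; ring
  push_cast
  have hc := congrArg (fun r : ℝ => (r : ℂ)) hr
  push_cast at hc
  exact hc

lemma gauss_integrable (y : E) {t u : ℝ} (ht : 0 < t) (hu : 0 < u) :
    Integrable (fun x : E => Complex.exp (-((t * (‖x‖^2 + u * ‖y-x‖^2) : ℝ) : ℂ))) volume := by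
  have hb : (0:ℝ) < t*(1+u) := by positivity
  have key := GaussianFourier.integrable_cexp_neg_mul_sq_norm_add
    (V := E) (b := ((t*(1+u) : ℝ) : ℂ)) (by simpa using hb) ((2*t*u : ℝ) : ℂ) y
  apply Integrable.congr (key.const_mul (Complex.exp (-((t*u*‖y‖^2 : ℝ) : ℂ))))
  filter_upwards with x
  exact (gauss_rewrite y t u x).symm

lemma gauss_integral (y : E) {t u : ℝ} (ht : 0 < t) (hu : 0 < u) :
    ∫ x : E, Complex.exp (-((t * (‖x‖^2 + u * ‖y-x‖^2) : ℝ) : ℂ))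
      = ((π / (t*(1+u)) : ℝ) : ℂ) ^ ((d:ℂ)/2) *
        Complex.exp (-((t * (u/(1+u)) * ‖y‖^2 : ℝ) : ℂ)) := by
  have hb : (0:ℝ) < t*(1+u) := by positivity
  have h1u : (1+u : ℝ) ≠ 0 := by positivity
  have key := GaussianFourier.integral_cexp_neg_mul_sq_norm_add_of_euclideanSpace
    (ι := Fin d) (b := ((t*(1+u) : ℝ) : ℂ)) (by simpa using hb) ((2*t*u : ℝ) : ℂ) y
  calc ∫ x : E, Complex.exp (-((t * (‖x‖^2 + u * ‖y-x‖^2) : ℝ) : ℂ))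
      = ∫ x : E, Complex.exp (-((t*u*‖y‖^2 : ℝ) : ℂ)) *
          Complex.exp (-((t*(1+u) : ℝ) : ℂ) * (‖x‖:ℂ)^2 + ((2*t*u : ℝ) : ℂ) * ((⟪y, x⟫ : ℝ) : ℂ)) := by
        exact integral_congr_ae (Filter.Eventually.of_forall (fun x => gauss_rewrite y t u x))
    _ = Complex.exp (-((t*u*‖y‖^2 : ℝ) : ℂ)) *
          ∫ x : E, Complex.exp (-((t*(1+u) : ℝ) : ℂ) * (‖x‖:ℂ)^2 + ((2*t*u : ℝ) : ℂ) * ((⟪y, x⟫ : ℝ) : ℂ)) :=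
        integral_const_mul _ _
    _ = ((π / (t*(1+u)) : ℝ) : ℂ) ^ ((d:ℂ)/2) *
        Complex.exp (-((t * (u/(1+u)) * ‖y‖^2 : ℝ) : ℂ)) := by
        rw [key]
        rw [show ((↑π / ((t*(1+u) : ℝ) : ℂ)) ^ ((Fintype.card (Fin d)) / 2 : ℂ))
            = ((π / (t*(1+u)) : ℝ) : ℂ) ^ ((d:ℂ)/2) by
          congr 1 <;> push_cast <;> simp]
        rw [← mul_assoc, mul_comm (Complex.exp _), mul_assoc]
        congr 1
        rw [← Complex.exp_add]
        congr 1
        have ht' : (t:ℂ) ≠ 0 := ofReal_ne_zero.2 ht.ne'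
        have hu' : ((1+u:ℝ):ℂ) ≠ 0 := ofReal_ne_zero.2 h1u
        push_cast at hu' ⊢
        field_simp
        ring

lemma gauss_integral_real (y : E) {t u : ℝ} (ht : 0 < t) (hu : 0 < u) :
    ∫ x : E, Real.exp (-(t * (‖x‖^2 + u * ‖y-x‖^2)))
      = (π / (t*(1+u))) ^ ((d:ℝ)/2) * Real.exp (-(t * (u/(1+u)) * ‖y‖^2)) := by
  have hb : (0:ℝ) < t*(1+u) := by positivity
  rw [← Complex.ofReal_inj]
  calc ((∫ x : E, Real.exp (-(t * (‖x‖^2 + u * ‖y-x‖^2))) : ℝ) : ℂ)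
      = ∫ x : E, ((Real.exp (-(t * (‖x‖^2 + u * ‖y-x‖^2))) : ℝ) : ℂ) :=
        (integral_ofReal).symm
    _ = ∫ x : E, Complex.exp (-((t * (‖x‖^2 + u * ‖y-x‖^2) : ℝ) : ℂ)) := by
        apply integral_congr_ae
        filter_upwards with x
        rw [Complex.ofReal_exp, Complex.ofReal_neg]
    _ = ((π / (t*(1+u)) : ℝ) : ℂ) ^ ((d:ℂ)/2) *
        Complex.exp (-((t * (u/(1+u)) * ‖y‖^2 : ℝ) : ℂ)) := gauss_integral y ht hu
    _ = (((π / (t*(1+u))) ^ ((d:ℝ)/2) * Real.exp (-(t * (u/(1+u)) * ‖y‖^2)) : ℝ) : ℂ) := by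
        have hnn : (0:ℝ) ≤ π / (t*(1+u)) := by positivity
        push_cast [Complex.ofReal_cpow hnn]
        congr 2

lemma gauss_integrable_real (y : E) {t u : ℝ} (ht : 0 < t) (hu : 0 < u) :
    Integrable (fun x : E => Real.exp (-(t * (‖x‖^2 + u * ‖y-x‖^2)))) volume := by
  have := (gauss_integrable y ht hu).norm
  apply this.congr
  filter_upwards with x
  rw [Complex.norm_exp]
  simp only [Complex.neg_re, Complex.ofReal_re]


/-! ### Real versions of Gamma/Beta integrability -/

lemma gammaType_integrableOn_real {σ : ℝ} (hσ : 0 < σ) {c : ℝ} (hc : 0 < c) :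
    IntegrableOn (fun t : ℝ => t ^ (σ - 1) * Real.exp (-(c * t))) (Ioi 0) := by
  have h0 : IntegrableOn (fun t : ℝ => Real.exp (-t) * t ^ (σ - 1)) (Ioi 0) :=
    Real.GammaIntegral_convergent hσ
  have h1 : IntegrableOn (fun t : ℝ => Real.exp (-(c*t)) * (c*t) ^ (σ - 1)) (Ioi 0) := by
    have := (integrableOn_Ioi_comp_mul_left_iff
      (fun t : ℝ => Real.exp (-t) * t ^ (σ - 1)) 0 hc).2 (by simpa using h0)
    simpa using this
  have h2 : IntegrableOn (fun t : ℝ => c ^ (σ - 1) * (t ^ (σ - 1) * Real.exp (-(c*t)))) (Ioi 0) := by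
    apply Integrable.congr h1
    filter_upwards [ae_restrict_mem measurableSet_Ioi] with t ht
    rw [Real.mul_rpow hc.le (le_of_lt ht)]
    ring
  have h3 := h2.const_mul (c ^ (σ - 1))⁻¹
  apply h3.congr
  filter_upwards with t
  rw [← mul_assoc, inv_mul_cancel₀ (by positivity), one_mul]

lemma betaIoi_integrableOn_real {p q : ℝ} (hp : 0 < p) (hq : 0 < q) :
    IntegrableOn (fun u : ℝ => u ^ (p - 1) * (1 + u) ^ (-(p + q))) (Ioi 0) := by
  have h := (betaIoi_integrableOn (p := (p:ℂ)) (q := (q:ℂ))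
    (by simp [hp]) (by simp [hq])).norm
  apply h.congr
  filter_upwards [ae_restrict_mem measurableSet_Ioi] with u hu
  have h1u : (0:ℝ) < 1 + u := by have := mem_Ioi.mp hu; linarith
  rw [norm_mul,
    norm_cpow_eq_rpow_re_of_pos (mem_Ioi.mp hu), norm_cpow_eq_rpow_re_of_pos h1u]
  norm_num

/-! ### The master kernel -/

noncomputable def Kf (α β : ℂ) {d : ℕ} (y : EuclideanSpace ℝ (Fin d))
    (p : ℝ × ℝ) (x : EuclideanSpace ℝ (Fin d)) : ℂ :=
  ((p.2 : ℂ)) ^ (α + β - 1) * ((p.1 : ℂ)) ^ (β - 1) *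
    Complex.exp (-((p.2 * (‖x‖^2 + p.1 * ‖y - x‖^2) : ℝ) : ℂ))

noncomputable def μ2 : Measure (ℝ × ℝ) :=
  (volume.restrict (Ioi 0)).prod (volume.restrict (Ioi 0))

instance : SFinite μ2 := by unfold μ2; infer_instance

lemma μ2_ae : ∀ᵐ p ∂μ2, p ∈ Ioi (0:ℝ) ×ˢ Ioi (0:ℝ) := by
  unfold μ2
  rw [Measure.prod_restrict]
  exact ae_restrict_mem (measurableSet_Ioi.prod measurableSet_Ioi)

variable {d : ℕ} (α β : ℂ) (y : EuclideanSpace ℝ (Fin d))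

lemma Kf_meas : Measurable (fun q : (ℝ × ℝ) × (EuclideanSpace ℝ (Fin d)) => Kf α β y q.1 q.2) := by
  unfold Kf
  apply Measurable.mul
  apply Measurable.mul
  · exact (Complex.measurable_ofReal.comp measurable_fst.snd).pow measurable_const
  · exact (Complex.measurable_ofReal.comp measurable_fst.fst).pow measurable_const
  · apply Complex.measurable_exp.comp
    apply Measurable.neg
    apply Complex.measurable_ofReal.comp
    apply Measurable.mul measurable_fst.snd
    apply Measurable.add
    · exact measurable_snd.norm.pow_const 2
    · exact (measurable_fst.fst).mul ((measurable_const.sub measurable_snd).norm.pow_const 2)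

lemma Kf_norm {u t : ℝ} (hu : 0 < u) (ht : 0 < t) (x : EuclideanSpace ℝ (Fin d)) :
    ‖Kf α β y (u, t) x‖ =
      t ^ ((α+β).re - 1) * u ^ (β.re - 1) * Real.exp (-(t * (‖x‖^2 + u * ‖y - x‖^2))) := by
  unfold Kf
  rw [norm_mul, norm_mul,
    norm_cpow_eq_rpow_re_of_pos ht, norm_cpow_eq_rpow_re_of_pos hu, Complex.norm_exp]
  simp only [Complex.sub_re, Complex.one_re, Complex.neg_re, Complex.ofReal_re]

/-! ### The Tonelli side: integrability of the master kernel -/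

lemma psi_t_eq {d : ℕ} {α β : ℂ} {r2 : ℝ} (hr2 : 0 < r2) {u : ℝ} (hu : 0 < u)
    {t : ℝ} (ht : 0 < t) :
    t ^ ((α+β).re - 1) * u ^ (β.re - 1) *
      ((π/(t*(1+u))) ^ ((d:ℝ)/2) * Real.exp (-(t*(u/(1+u))*r2)))
    = (u ^ (β.re - 1) * π ^ ((d:ℝ)/2) * (1+u) ^ (-((d:ℝ)/2))) *
      (t ^ (((α+β).re - (d:ℝ)/2) - 1) * Real.exp (-((u/(1+u))*r2 * t))) := by
  have h1u : (0:ℝ) < 1 + u := by linarith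
  have hq : (0:ℝ) < π/(t*(1+u)) := by positivity
  rw [rpow_pos_exp ht, rpow_pos_exp hu, rpow_pos_exp hq, rpow_pos_exp Real.pi_pos,
    rpow_pos_exp h1u, rpow_pos_exp ht,
    Real.log_div Real.pi_pos.ne' (by positivity), Real.log_mul ht.ne' h1u.ne']
  simp only [← Real.exp_add]
  congr 1
  ring

lemma psi_u_eq {d : ℕ} {α β : ℂ} {r2 : ℝ} (hr2 : 0 < r2) {u : ℝ} (hu : 0 < u) :
    (u ^ (β.re - 1) * π ^ ((d:ℝ)/2) * (1+u) ^ (-((d:ℝ)/2))) *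
      (1/((u/(1+u))*r2)) ^ ((α+β).re - (d:ℝ)/2)
    = (π ^ ((d:ℝ)/2) * r2 ^ (-((α+β).re - (d:ℝ)/2))) *
      (u ^ (((d:ℝ)/2 - α.re) - 1) *
        (1+u) ^ (-(((d:ℝ)/2 - α.re) + ((d:ℝ)/2 - β.re)))) := by
  have h1u : (0:ℝ) < 1 + u := by linarith
  have hk : (0:ℝ) < 1/((u/(1+u))*r2) := by positivity
  have hre : α.re + β.re = (α+β).re := by simp
  rw [rpow_pos_exp hu, rpow_pos_exp Real.pi_pos, rpow_pos_exp h1u, rpow_pos_exp hk,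
    rpow_pos_exp hr2, rpow_pos_exp hu, rpow_pos_exp h1u,
    Real.log_div one_ne_zero (by positivity), Real.log_mul (by positivity) hr2.ne',
    Real.log_div hu.ne' h1u.ne', Real.log_one]
  simp only [← Real.exp_add]
  congr 1
  rw [← hre]
  ring

lemma Kf_norm_x_integral (hy : y ≠ 0) {u t : ℝ} (hu : 0 < u) (ht : 0 < t) :
    ∫ x : EuclideanSpace ℝ (Fin d), ‖Kf α β y (u, t) x‖
      = t ^ ((α+β).re - 1) * u ^ (β.re - 1) *
        ((π/(t*(1+u))) ^ ((d:ℝ)/2) * Real.exp (-(t*(u/(1+u))*‖y‖^2))) := by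
  calc ∫ x : EuclideanSpace ℝ (Fin d), ‖Kf α β y (u, t) x‖
      = ∫ x : EuclideanSpace ℝ (Fin d),
          (t ^ ((α+β).re - 1) * u ^ (β.re - 1)) * Real.exp (-(t * (‖x‖^2 + u * ‖y - x‖^2))) := by
        apply integral_congr_ae
        filter_upwards with x
        rw [Kf_norm α β y hu ht x, mul_assoc]
    _ = (t ^ ((α+β).re - 1) * u ^ (β.re - 1)) *
          ∫ x : EuclideanSpace ℝ (Fin d), Real.exp (-(t * (‖x‖^2 + u * ‖y - x‖^2))) :=
        integral_const_mul _ _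
    _ = _ := by rw [gauss_integral_real y ht hu, mul_assoc]

lemma psi_integrable (hy : y ≠ 0) (hb0 : 0 < β.re)
    (ha2 : α.re < d/2) (hb2 : β.re < d/2) (hab : (d:ℝ)/2 < (α+β).re) :
    Integrable (fun p : ℝ × ℝ => p.2 ^ ((α+β).re - 1) * p.1 ^ (β.re - 1) *
      ((π/(p.2*(1+p.1))) ^ ((d:ℝ)/2) * Real.exp (-(p.2*(p.1/(1+p.1))*‖y‖^2)))) μ2 := by
  have hr2 : (0:ℝ) < ‖y‖^2 := by
    have : 0 < ‖y‖ := norm_pos_iff.mpr hy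
    positivity
  have hσ : 0 < (α+β).re - (d:ℝ)/2 := by linarith
  have hp0 : 0 < (d:ℝ)/2 - α.re := by linarith
  have hq0 : 0 < (d:ℝ)/2 - β.re := by linarith
  have hmeas : AEStronglyMeasurable (fun p : ℝ × ℝ => p.2 ^ ((α+β).re - 1) * p.1 ^ (β.re - 1) *
      ((π/(p.2*(1+p.1))) ^ ((d:ℝ)/2) * Real.exp (-(p.2*(p.1/(1+p.1))*‖y‖^2)))) μ2 := by
    apply Measurable.aestronglyMeasurable
    fun_prop
  unfold μ2
  rw [integrable_prod_iff (by rw [← μ2]; exact hmeas)]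
  constructor
  · filter_upwards [ae_restrict_mem measurableSet_Ioi] with u hu
    have hu' : (0:ℝ) < u := hu
    have hk : (0:ℝ) < (u/(1+u))*‖y‖^2 := by positivity
    apply Integrable.congr (((gammaType_integrableOn_real hσ hk).const_mul
      (u ^ (β.re - 1) * π ^ ((d:ℝ)/2) * (1+u) ^ (-((d:ℝ)/2)))))
    filter_upwards [ae_restrict_mem measurableSet_Ioi] with t ht
    exact (psi_t_eq hr2 hu' ht).symm
  · apply Integrable.congr (((betaIoi_integrableOn_real hp0 hq0).const_mul
      (Real.Gamma ((α+β).re - (d:ℝ)/2) * π ^ ((d:ℝ)/2) * (‖y‖^2) ^ (-((α+β).re - (d:ℝ)/2)))))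
    filter_upwards [ae_restrict_mem measurableSet_Ioi] with u hu
    have hu' : (0:ℝ) < u := hu
    have h1u : (0:ℝ) < 1 + u := by linarith
    have hk : (0:ℝ) < (u/(1+u))*‖y‖^2 := by positivity
    calc (Real.Gamma ((α+β).re - (d:ℝ)/2) * π ^ ((d:ℝ)/2) * (‖y‖^2) ^ (-((α+β).re - (d:ℝ)/2))) *
          (u ^ (((d:ℝ)/2 - α.re) - 1) * (1+u) ^ (-(((d:ℝ)/2 - α.re) + ((d:ℝ)/2 - β.re))))
        = (u ^ (β.re - 1) * π ^ ((d:ℝ)/2) * (1+u) ^ (-((d:ℝ)/2))) *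
          ((1/((u/(1+u))*‖y‖^2)) ^ ((α+β).re - (d:ℝ)/2) * Real.Gamma ((α+β).re - (d:ℝ)/2)) := by
          rw [show (u ^ (β.re - 1) * π ^ ((d:ℝ)/2) * (1+u) ^ (-((d:ℝ)/2))) *
              ((1/((u/(1+u))*‖y‖^2)) ^ ((α+β).re - (d:ℝ)/2) * Real.Gamma ((α+β).re - (d:ℝ)/2))
            = ((u ^ (β.re - 1) * π ^ ((d:ℝ)/2) * (1+u) ^ (-((d:ℝ)/2))) *
              (1/((u/(1+u))*‖y‖^2)) ^ ((α+β).re - (d:ℝ)/2)) * Real.Gamma ((α+β).re - (d:ℝ)/2)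
            from by ring, psi_u_eq hr2 hu']
          ring
      _ = (u ^ (β.re - 1) * π ^ ((d:ℝ)/2) * (1+u) ^ (-((d:ℝ)/2))) *
          ∫ t in Ioi (0:ℝ), t ^ (((α+β).re - (d:ℝ)/2) - 1) *
            Real.exp (-(((u/(1+u))*‖y‖^2) * t)) := by
          rw [Real.integral_rpow_mul_exp_neg_mul_Ioi hσ hk]
      _ = ∫ t in Ioi (0:ℝ), (u ^ (β.re - 1) * π ^ ((d:ℝ)/2) * (1+u) ^ (-((d:ℝ)/2))) *
          (t ^ (((α+β).re - (d:ℝ)/2) - 1) * Real.exp (-(((u/(1+u))*‖y‖^2) * t))) :=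
          (integral_const_mul _ _).symm
      _ = ∫ t in Ioi (0:ℝ), u ^ (β.re - 1) * π ^ ((d:ℝ)/2) * (1+u) ^ (-((d:ℝ)/2)) *
          (t ^ (((α+β).re - (d:ℝ)/2) - 1) * Real.exp (-(((u/(1+u))*‖y‖^2) * t))) := rfl
      _ = ∫ t in Ioi (0:ℝ), ‖t ^ ((α+β).re - 1) * u ^ (β.re - 1) *
          ((π/(t*(1+u))) ^ ((d:ℝ)/2) * Real.exp (-(t*(u/(1+u))*‖y‖^2)))‖ := by
          apply setIntegral_congr_fun measurableSet_Ioi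
          intro t ht
          dsimp only
          have ht' : (0:ℝ) < t := ht
          rw [← psi_t_eq hr2 hu' ht', Real.norm_eq_abs]
          refine (_root_.abs_of_nonneg ?_).symm
          have hq : (0:ℝ) < π / (t * (1+u)) := by positivity
          exact (mul_pos (mul_pos (Real.rpow_pos_of_pos ht' _) (Real.rpow_pos_of_pos hu' _))
            (mul_pos (Real.rpow_pos_of_pos hq _) (Real.exp_pos _))).le

lemma Kf_integrable (hy : y ≠ 0) (hb0 : 0 < β.re)
    (ha2 : α.re < d/2) (hb2 : β.re < d/2) (hab : (d:ℝ)/2 < (α+β).re) :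
    Integrable (fun q : (ℝ × ℝ) × (EuclideanSpace ℝ (Fin d)) => Kf α β y q.1 q.2)
      (μ2.prod volume) := by
  rw [integrable_prod_iff (Kf_meas α β y).aestronglyMeasurable]
  constructor
  · filter_upwards [μ2_ae] with p hp
    have hu : (0:ℝ) < p.1 := hp.1
    have ht : (0:ℝ) < p.2 := hp.2
    apply Integrable.congr ((gauss_integrable y ht hu).const_mul
      ((p.2 : ℂ) ^ (α+β-1) * (p.1 : ℂ) ^ (β-1)))
    filter_upwards with x
    unfold Kf
    ring
  · apply Integrable.congr (psi_integrable α β y hy hb0 ha2 hb2 hab)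
    filter_upwards [μ2_ae] with p hp
    exact (Kf_norm_x_integral α β y hy hp.1 hp.2).symm

/-! ### The x-side: pointwise subordination -/

lemma cpow_ofReal_atoms {c : ℝ} (hc : 0 < c) (w : ℂ) :
    (c : ℂ) ^ w = Complex.exp (w * (Real.log c : ℂ)) := cpow_pos_exp hc w

lemma x_side (ha0 : 0 < α.re) (hb0 : 0 < β.re) (hab0 : 0 < (α+β).re)
    {x : EuclideanSpace ℝ (Fin d)} (hx : x ≠ 0) (hxy : x ≠ y)
    (hint : Integrable (fun p => Kf α β y p x) μ2) :
    ∫ p, Kf α β y p x ∂μ2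
      = Gamma α * Gamma β * ((‖x‖ : ℂ) ^ (-2*α) * (‖y - x‖ : ℂ) ^ (-2*β)) := by
  have hxn : (0:ℝ) < ‖x‖ := norm_pos_iff.mpr hx
  have hyx : (0:ℝ) < ‖y - x‖ := norm_pos_iff.mpr (sub_ne_zero.2 (Ne.symm hxy))
  set A : ℝ := ‖x‖^2 with hA_def
  set B : ℝ := ‖y - x‖^2 with hB_def
  have hA : 0 < A := by positivity
  have hB : 0 < B := by positivity
  set w : ℝ := B / A with hw_def
  have hw : 0 < w := by positivity
  have hGab : Gamma (α+β) ≠ 0 := Gamma_ne_zero' hab0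
  unfold μ2 at hint ⊢
  rw [integral_prod _ hint]
  have inner : ∀ u ∈ Ioi (0:ℝ), (∫ t in Ioi (0:ℝ), Kf α β y (u, t) x)
      = Gamma (α+β) * ((u:ℂ)^(β-1) * ((A + u*B : ℝ) : ℂ)^(-(α+β))) := by
    intro u hu
    have hu' : (0:ℝ) < u := hu
    have hc : (0:ℝ) < A + u*B := by positivity
    have step : ∀ t ∈ Ioi (0:ℝ), Kf α β y (u, t) x
        = (u:ℂ)^(β-1) * ((t:ℂ)^((α+β)-1) * Complex.exp (-((A + u*B) * t : ℝ))) := by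
      intro t _
      unfold Kf
      rw [show ((t * (‖x‖^2 + u * ‖y - x‖^2) : ℝ) : ℂ) = (((A + u*B) * t : ℝ) : ℂ) by
        rw [← hA_def, ← hB_def]; push_cast; ring]
      ring
    rw [setIntegral_congr_fun measurableSet_Ioi step, integral_const_mul,
      gammaType_integral hab0 hc]
    ring
  rw [setIntegral_congr_fun measurableSet_Ioi inner, integral_const_mul]
  have outer : ∀ u ∈ Ioi (0:ℝ),
      (u:ℂ)^(β-1) * ((A + u*B : ℝ) : ℂ)^(-(α+β))
        = ((A:ℝ):ℂ)^(-(β+α)) * ((w:ℝ):ℂ)^((1:ℂ)-β) *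
          (((w*u : ℝ):ℂ)^(β-1) * ((1 + w*u : ℝ):ℂ)^(-(β+α))) := by
    intro u hu
    have hu' : (0:ℝ) < u := hu
    have hwu : (0:ℝ) < w*u := by positivity
    have h1wu : (0:ℝ) < 1 + w*u := by positivity
    have hAB : (A + u*B : ℝ) = A * (1 + w*u) := by
      rw [hw_def]; field_simp
    rw [hAB, cpow_pos_exp hu', cpow_pos_exp (by positivity : (0:ℝ) < A * (1+w*u)),
      cpow_pos_exp hA, cpow_pos_exp hw, cpow_pos_exp hwu, cpow_pos_exp h1wu,
      Real.log_mul hA.ne' h1wu.ne', Real.log_mul hw.ne' hu'.ne']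
    simp only [← Complex.exp_add]
    congr 1
    push_cast
    ring
  rw [setIntegral_congr_fun measurableSet_Ioi outer]
  simp only [mul_assoc]
  rw [integral_const_mul, integral_const_mul,
    integral_comp_mul_left_Ioi
      (fun v : ℝ => ((v : ℝ):ℂ)^(β-1) * ((1 + v : ℝ):ℂ)^(-(β+α))) 0 hw,
    mul_zero, betaIoi_integral hb0 ha0]
  have hGba : Gamma (β+α) = Gamma (α+β) := by rw [add_comm]
  rw [hGba]
  -- now pure positive-real cpow algebra
  have key : ((A:ℝ):ℂ)^(-(β+α)) * (((w:ℝ):ℂ)^((1:ℂ)-β) * (((w⁻¹ : ℝ)) : ℂ))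
      = (‖x‖ : ℂ) ^ (-2*α) * (‖y - x‖ : ℂ) ^ (-2*β) := by
    rw [Complex.ofReal_inv, ← cpow_neg_one, cpow_pos_exp hA, cpow_pos_exp hw,
      cpow_pos_exp hw, cpow_pos_exp hxn, cpow_pos_exp hyx, hw_def,
      Real.log_div hB.ne' hA.ne', hA_def, hB_def, Real.log_pow, Real.log_pow]
    simp only [← Complex.exp_add]
    congr 1
    push_cast
    ring
  rw [Complex.real_smul]
  have hre : Gamma (α+β) * (((A:ℝ):ℂ)^(-(β+α)) * (((w:ℝ):ℂ)^((1:ℂ)-β) *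
          (((w⁻¹:ℝ):ℂ) * (Gamma β * Gamma α / Gamma (α+β)))))
      = (((A:ℝ):ℂ)^(-(β+α)) * (((w:ℝ):ℂ)^((1:ℂ)-β) * ((w⁻¹ : ℝ) : ℂ))) *
          (Gamma (α+β) * (Gamma β * Gamma α / Gamma (α+β))) := by ring
  rw [hre, key]
  field_simp

/-! ### The y-side: Gaussian then Gamma then Beta -/

lemma y_side (hd : 1 ≤ d) (hy : y ≠ 0)
    (ha2 : α.re < d/2) (hb2 : β.re < d/2) (hab : (d:ℝ)/2 < (α+β).re)
    (hint2 : Integrable (fun p => ∫ x : EuclideanSpace ℝ (Fin d), Kf α β y p x) μ2) :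
    ∫ p, (∫ x : EuclideanSpace ℝ (Fin d), Kf α β y p x) ∂μ2
      = ((π:ℝ):ℂ)^((d:ℂ)/2) * Gamma (α+β-(d:ℂ)/2) * (‖y‖:ℂ)^(-2*(α+β-(d:ℂ)/2)) *
        (Gamma ((d:ℂ)/2-α) * Gamma ((d:ℂ)/2-β) / Gamma ((d:ℂ)-α-β)) := by
  have hyn : (0:ℝ) < ‖y‖ := norm_pos_iff.mpr hy
  have hr2 : (0:ℝ) < ‖y‖^2 := by positivity
  have hc2 : ((d:ℂ)/2) = (((d:ℝ)/2 : ℝ) : ℂ) := by push_cast; ring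
  have hγre : 0 < (α+β-(d:ℂ)/2).re := by
    rw [Complex.sub_re, hc2, Complex.ofReal_re]; linarith
  have hpre : 0 < ((d:ℂ)/2-α).re := by
    rw [Complex.sub_re, hc2, Complex.ofReal_re]; linarith
  have hqre : 0 < ((d:ℂ)/2-β).re := by
    rw [Complex.sub_re, hc2, Complex.ofReal_re]; linarith
  unfold μ2 at hint2 ⊢
  rw [integral_prod _ hint2]
  have inner : ∀ u ∈ Ioi (0:ℝ),
      (∫ t in Ioi (0:ℝ), ∫ x : EuclideanSpace ℝ (Fin d), Kf α β y (u, t) x)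
        = (u:ℂ)^(β-1) * ((((π:ℝ):ℂ)^((d:ℂ)/2) * ((1+u:ℝ):ℂ)^(-((d:ℂ)/2))) *
            (Gamma (α+β-(d:ℂ)/2) *
              ((((u/(1+u))*‖y‖^2 : ℝ)):ℂ)^(-(α+β-(d:ℂ)/2)))) := by
    intro u hu
    have hu' : (0:ℝ) < u := hu
    have h1u : (0:ℝ) < 1 + u := by linarith
    have hk : (0:ℝ) < (u/(1+u))*‖y‖^2 := by positivity
    have stepA : ∀ t ∈ Ioi (0:ℝ), (∫ x : EuclideanSpace ℝ (Fin d), Kf α β y (u, t) x)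
        = (u:ℂ)^(β-1) * ((((π:ℝ):ℂ)^((d:ℂ)/2) * ((1+u:ℝ):ℂ)^(-((d:ℂ)/2))) *
            ((t:ℂ)^((α+β-(d:ℂ)/2)-1) *
              Complex.exp (-(((u/(1+u))*‖y‖^2) * t : ℝ)))) := by
      intro t ht
      have ht' : (0:ℝ) < t := ht
      have hq : (0:ℝ) < π / (t*(1+u)) := by positivity
      unfold Kf
      rw [integral_const_mul, gauss_integral y ht' hu']
      simp only [cpow_pos_exp ht', cpow_pos_exp hu', cpow_pos_exp hq,
        cpow_pos_exp Real.pi_pos, cpow_pos_exp h1u,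
        Real.log_div Real.pi_pos.ne' (by positivity : (t*(1+u)) ≠ 0),
        Real.log_mul ht'.ne' h1u.ne']
      simp only [← Complex.exp_add]
      congr 1
      push_cast
      ring
    rw [setIntegral_congr_fun measurableSet_Ioi stepA, integral_const_mul, integral_const_mul,
      gammaType_integral hγre hk]
  rw [setIntegral_congr_fun measurableSet_Ioi inner]
  have outer : ∀ u ∈ Ioi (0:ℝ),
      (u:ℂ)^(β-1) * ((((π:ℝ):ℂ)^((d:ℂ)/2) * ((1+u:ℝ):ℂ)^(-((d:ℂ)/2))) *
          (Gamma (α+β-(d:ℂ)/2) * ((((u/(1+u))*‖y‖^2 : ℝ)):ℂ)^(-(α+β-(d:ℂ)/2))))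
        = (((π:ℝ):ℂ)^((d:ℂ)/2) * Gamma (α+β-(d:ℂ)/2) * (‖y‖:ℂ)^(-2*(α+β-(d:ℂ)/2))) *
          ((u:ℂ)^(((d:ℂ)/2-α)-1) * ((1+u:ℝ):ℂ)^(-(((d:ℂ)/2-α)+((d:ℂ)/2-β)))) := by
    intro u hu
    have hu' : (0:ℝ) < u := hu
    have h1u : (0:ℝ) < 1 + u := by linarith
    have hk : (0:ℝ) < (u/(1+u))*‖y‖^2 := by positivity
    have exp_part : (u:ℂ)^(β-1) * (((1+u:ℝ):ℂ)^(-((d:ℂ)/2)) *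
          ((((u/(1+u))*‖y‖^2 : ℝ)):ℂ)^(-(α+β-(d:ℂ)/2)))
        = (‖y‖:ℂ)^(-2*(α+β-(d:ℂ)/2)) *
          ((u:ℂ)^(((d:ℂ)/2-α)-1) * ((1+u:ℝ):ℂ)^(-(((d:ℂ)/2-α)+((d:ℂ)/2-β)))) := by
      simp only [cpow_pos_exp hu', cpow_pos_exp h1u, cpow_pos_exp hk, cpow_pos_exp hyn,
        Real.log_mul (by positivity : (u/(1+u)) ≠ 0) hr2.ne',
        Real.log_div hu'.ne' h1u.ne', Real.log_pow]
      simp only [← Complex.exp_add]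
      congr 1
      push_cast
      ring
    calc (u:ℂ)^(β-1) * ((((π:ℝ):ℂ)^((d:ℂ)/2) * ((1+u:ℝ):ℂ)^(-((d:ℂ)/2))) *
          (Gamma (α+β-(d:ℂ)/2) * ((((u/(1+u))*‖y‖^2 : ℝ)):ℂ)^(-(α+β-(d:ℂ)/2))))
        = (((π:ℝ):ℂ)^((d:ℂ)/2) * Gamma (α+β-(d:ℂ)/2)) *
            ((u:ℂ)^(β-1) * (((1+u:ℝ):ℂ)^(-((d:ℂ)/2)) *
              ((((u/(1+u))*‖y‖^2 : ℝ)):ℂ)^(-(α+β-(d:ℂ)/2)))) := by ring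
      _ = _ := by rw [exp_part]; ring
  rw [setIntegral_congr_fun measurableSet_Ioi outer, integral_const_mul,
    betaIoi_integral hpre hqre]
  rw [show ((d:ℂ)/2-α) + ((d:ℂ)/2-β) = (d:ℂ)-α-β by ring]

end RieszChain

open RieszChain

/-- **Scalar chain relation.** For an integer `d ≥ 1`, `α, β ∈ ℂ` with
`Re α < d/2`, `Re β < d/2`, `Re(α+β) > d/2`, and `0 ≠ y ∈ ℝ^d`, the integral
`∫_{ℝ^d} ‖x‖^{−2α} ‖y−x‖^{−2β} dx` converges absolutely and equals
`π^{d/2} · Γ(d/2−α)Γ(d/2−β)Γ(α+β−d/2) / (Γ(α)Γ(β)Γ(d−α−β)) · ‖y‖^{−2(α+β−d/2)}`. -/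
theorem stmt4 (d : ℕ) (hd : 1 ≤ d) (α β : ℂ)
    (hα : α.re < d / 2) (hβ : β.re < d / 2) (hαβ : (d : ℝ) / 2 < (α + β).re)
    (y : EuclideanSpace ℝ (Fin d)) (hy : y ≠ 0) :
    Integrable (fun x : EuclideanSpace ℝ (Fin d) =>
        (‖x‖ : ℂ) ^ (-2 * α) * (‖y - x‖ : ℂ) ^ (-2 * β)) volume ∧
    ∫ x : EuclideanSpace ℝ (Fin d),
        (‖x‖ : ℂ) ^ (-2 * α) * (‖y - x‖ : ℂ) ^ (-2 * β)
      = (Real.pi : ℂ) ^ ((d : ℂ) / 2) *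
          (Gamma ((d : ℂ) / 2 - α) * Gamma ((d : ℂ) / 2 - β) * Gamma (α + β - (d : ℂ) / 2) /
            (Gamma α * Gamma β * Gamma ((d : ℂ) - α - β))) *
          (‖y‖ : ℂ) ^ (-2 * (α + β - (d : ℂ) / 2)) := by
  have hd1 : (1:ℝ) ≤ (d:ℝ) := by exact_mod_cast hd
  have hre : (α+β).re = α.re + β.re := Complex.add_re α β
  have ha0 : 0 < α.re := by rw [hre] at hαβ; linarith
  have hb0 : 0 < β.re := by rw [hre] at hαβ; linarith
  have hab0 : 0 < (α+β).re := by linarith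
  have hGa : Gamma α ≠ 0 := Gamma_ne_zero' ha0
  have hGb : Gamma β ≠ 0 := Gamma_ne_zero' hb0
  have hGd : Gamma ((d:ℂ)-α-β) ≠ 0 := by
    apply Gamma_ne_zero'
    have : ((d:ℂ)-α-β).re = (d:ℝ) - α.re - β.re := by simp
    rw [this]; linarith
  have master := Kf_integrable α β y hy hb0 hα hβ hαβ
  -- a.e. facts about x
  have hsing : ∀ z : EuclideanSpace ℝ (Fin d), volume ({z} : Set (EuclideanSpace ℝ (Fin d))) = 0 := by
    intro z
    haveI : Nonempty (Fin d) := ⟨⟨0, hd⟩⟩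
    have hmp := EuclideanSpace.volume_preserving_symm_measurableEquiv_toLp (Fin d)
    have h1 : ({z} : Set (EuclideanSpace ℝ (Fin d)))
        = (MeasurableEquiv.toLp 2 (Fin d → ℝ)).symm ⁻¹'
          {(MeasurableEquiv.toLp 2 (Fin d → ℝ)).symm z} := by
      ext w
      simp [EmbeddingLike.apply_eq_iff_eq]
      exact (WithLp.ofLp_injective 2).eq_iff.symm
    rw [h1, hmp.measure_preimage (measurableSet_singleton _).nullMeasurableSet]
    haveI : NoAtoms (volume : Measure (Fin d → ℝ)) := Measure.pi_noAtoms'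
    exact measure_singleton _
  have hne : ∀ᵐ x : EuclideanSpace ℝ (Fin d) ∂volume, x ≠ 0 ∧ x ≠ y := by
    rw [ae_iff]
    have hsub : {x : EuclideanSpace ℝ (Fin d) | ¬(x ≠ 0 ∧ x ≠ y)}
        ⊆ ({0, y} : Set (EuclideanSpace ℝ (Fin d))) := by
      intro x hx
      simp only [mem_setOf_eq, not_and_or, not_not] at hx
      rcases hx with h | h <;> simp [h]
    refine measure_mono_null hsub ?_
    rw [Set.insert_eq]
    exact measure_union_null (hsing 0) (hsing y)
  have hslice : ∀ᵐ x : EuclideanSpace ℝ (Fin d) ∂volume,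
      Integrable (fun p => Kf α β y p x) μ2 := master.swap.prod_right_ae
  have hF : (fun x : EuclideanSpace ℝ (Fin d) => (‖x‖ : ℂ) ^ (-2 * α) * (‖y - x‖ : ℂ) ^ (-2 * β))
      =ᵐ[volume] (fun x => (Gamma α * Gamma β)⁻¹ * ∫ p, Kf α β y p x ∂μ2) := by
    filter_upwards [hslice, hne] with x hx1 hx2
    rw [x_side α β y ha0 hb0 hab0 hx2.1 hx2.2 hx1, ← mul_assoc,
      inv_mul_cancel₀ (mul_ne_zero hGa hGb), one_mul]
  constructor
  · exact ((master.integral_prod_right).const_mul ((Gamma α * Gamma β)⁻¹)).congr hF.symm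
  · rw [integral_congr_ae hF, integral_const_mul,
      ← integral_integral_swap master,
      y_side α β y hd hy hα hβ hαβ master.integral_prod_left]
    field_simp
end

section
/- Let d ≥ 1 be an integer, let n, m ∈ ℕ, and let u, v ∈ ℂ^d satisfy u·u = 0 and v·v = 0. Then ∫_{ℝ^d} e^{−‖x‖²} (x·u)^n (x·v)^m dx = π^{d/2} · n! · 2^{−n} · (u·v)^n if n = m, and the integral equals 0 if n ≠ m. -/
open Complex MeasureTheory

noncomputable section
namespace Stmt5Aux

variable {d : ℕ}

def Lf (w : Fin d → ℂ) (x : Fin d → ℝ) : ℂ := ∑ i, (x i : ℂ) * w i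

def Q (x : Fin d → ℝ) : ℝ := ∑ i, x i ^ 2

lemma Q_continuous : Continuous (Q (d := d)) :=
  continuous_finset_sum _ fun i _ => (continuous_apply i).pow 2

lemma Lf_continuous (w : Fin d → ℂ) : Continuous (Lf w) := by
  unfold Lf
  exact continuous_finset_sum _ fun i _ =>
    (Complex.continuous_ofReal.comp (continuous_apply i)).mul continuous_const

lemma Lf_norm_le (w : Fin d → ℂ) (x : Fin d → ℝ) :
    ‖Lf w x‖ ≤ (∑ i, ‖w i‖) * ‖x‖ := by
  rw [Lf, Finset.sum_mul]
  refine (norm_sum_le _ _).trans (Finset.sum_le_sum fun i _ => ?_)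
  rw [norm_mul, Complex.norm_real, mul_comm]
  gcongr
  exact norm_le_pi_norm x i

lemma sum_norm_nonneg (w : Fin d → ℂ) : 0 ≤ ∑ i, ‖w i‖ :=
  Finset.sum_nonneg fun i _ => norm_nonneg _

lemma norm_le_exp_norm (x : Fin d → ℝ) : ‖x‖ ≤ Real.exp ‖x‖ := by
  have := Real.add_one_le_exp ‖x‖; linarith

lemma integrable_1d (A : ℝ) : Integrable fun t : ℝ => Real.exp (A * |t| - t ^ 2) := by
  have h1 : ∀ c : ℝ, Integrable fun t : ℝ => Real.exp (c * t - t ^ 2) := by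
    intro c
    have heq : (fun t : ℝ => Real.exp (c * t - t ^ 2))
        = fun t => Real.exp (c ^ 2 / 4) * Real.exp (-1 * (t - c / 2) ^ 2) := by
      funext t; rw [← Real.exp_add]; congr 1; ring
    rw [heq]
    exact (((integrable_exp_neg_mul_sq one_pos).comp_sub_right (c / 2)).const_mul _)
  apply Integrable.mono' ((h1 A).add (h1 (-A)))
    (Continuous.aestronglyMeasurable (by fun_prop))
  filter_upwards with t
  rw [Real.norm_eq_abs, _root_.abs_of_nonneg (Real.exp_pos _).le]
  rcases le_or_gt 0 t with h | h
  · rw [_root_.abs_of_nonneg h]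
    exact le_add_of_nonneg_right (Real.exp_pos _).le
  · rw [_root_.abs_of_neg h]
    have : A * -t - t ^ 2 = -A * t - t ^ 2 := by ring
    rw [this]
    exact le_add_of_nonneg_left (Real.exp_pos _).le

lemma norm_pi_le_sum (x : Fin d → ℝ) : ‖x‖ ≤ ∑ i, |x i| := by
  refine (pi_norm_le_iff_of_nonneg (Finset.sum_nonneg fun i _ => abs_nonneg _)).2 fun i => ?_
  rw [Real.norm_eq_abs]
  exact Finset.single_le_sum (fun j _ => abs_nonneg (x j)) (Finset.mem_univ i)

lemma integrable_master (K : ℝ) :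
    Integrable fun x : Fin d → ℝ => Real.exp (K * ‖x‖ - Q x) := by
  apply Integrable.mono'
    (Integrable.fintype_prod (f := fun (_ : Fin d) (t : ℝ) => Real.exp (|K| * |t| - t ^ 2))
      fun i => integrable_1d |K|)
    (Continuous.aestronglyMeasurable
      (Real.continuous_exp.comp ((continuous_const.mul continuous_norm).sub Q_continuous)))
  filter_upwards with x
  simp only [Function.comp_apply]
  rw [Real.norm_eq_abs, _root_.abs_of_nonneg (Real.exp_pos _).le, ← Real.exp_sum]
  apply Real.exp_le_exp.2
  have h1 : K * ‖x‖ ≤ |K| * ∑ i, |x i| := by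
    calc K * ‖x‖ ≤ |K| * ‖x‖ := by
          apply mul_le_mul_of_nonneg_right (le_abs_self K) (norm_nonneg x)
      _ ≤ |K| * ∑ i, |x i| := by
          apply mul_le_mul_of_nonneg_left (norm_pi_le_sum x) (abs_nonneg K)
  have h2 : ∑ i, (|K| * |x i| - x i ^ 2) = |K| * (∑ i, |x i|) - Q x := by
    rw [Finset.sum_sub_distrib, Finset.mul_sum, Q]
  rw [h2]
  have : Q x = Q x := rfl
  show K * ‖x‖ - Q x ≤ _
  linarith



lemma integrable_of_gbound {g : (Fin d → ℝ) → ℂ} (hg : Continuous g) {C K : ℝ}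
    (hb : ∀ x, ‖g x‖ ≤ C * Real.exp (K * ‖x‖ - Q x)) : Integrable g := by
  apply Integrable.mono' ((integrable_master K).const_mul C) hg.aestronglyMeasurable
  filter_upwards with x
  exact hb x

lemma gbound_mul_Lf {g : (Fin d → ℝ) → ℂ} {C K : ℝ} (hC : 0 ≤ C)
    (hb : ∀ x, ‖g x‖ ≤ C * Real.exp (K * ‖x‖ - Q x)) (w : Fin d → ℂ) :
    ∀ x, ‖g x * Lf w x‖ ≤ (C * ∑ i, ‖w i‖) * Real.exp ((K + 1) * ‖x‖ - Q x) := by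
  intro x
  rw [norm_mul]
  calc ‖g x‖ * ‖Lf w x‖
      ≤ (C * Real.exp (K * ‖x‖ - Q x)) * ((∑ i, ‖w i‖) * ‖x‖) :=
        mul_le_mul (hb x) (Lf_norm_le w x) (norm_nonneg _) (by positivity)
    _ ≤ (C * Real.exp (K * ‖x‖ - Q x)) * ((∑ i, ‖w i‖) * Real.exp ‖x‖) := by
        apply mul_le_mul_of_nonneg_left
          (mul_le_mul_of_nonneg_left (norm_le_exp_norm x) (sum_norm_nonneg w))
          (mul_nonneg hC (Real.exp_pos _).le)
    _ = (C * ∑ i, ‖w i‖) * Real.exp ((K + 1) * ‖x‖ - Q x) := by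
        rw [show (K + 1) * ‖x‖ - Q x = (K * ‖x‖ - Q x) + ‖x‖ by ring, Real.exp_add]; ring

lemma norm_cexp_mul_Lf_le {z : ℂ} {R : ℝ} (hz : ‖z‖ ≤ R) (w : Fin d → ℂ) (x : Fin d → ℝ) :
    ‖cexp (z * Lf w x)‖ ≤ Real.exp (R * ((∑ i, ‖w i‖) * ‖x‖)) := by
  rw [Complex.norm_exp]
  apply Real.exp_le_exp.2
  calc (z * Lf w x).re ≤ ‖z * Lf w x‖ := Complex.re_le_norm _
    _ = ‖z‖ * ‖Lf w x‖ := norm_mul _ _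
    _ ≤ R * ((∑ i, ‖w i‖) * ‖x‖) := by
        apply mul_le_mul hz (Lf_norm_le w x) (norm_nonneg _)
          ((norm_nonneg z).trans hz)

lemma cexp_mul_Lf_continuous (z : ℂ) (w : Fin d → ℂ) :
    Continuous fun x : Fin d → ℝ => cexp (z * Lf w x) :=
  Complex.continuous_exp.comp (continuous_const.mul (Lf_continuous w))

lemma hasDerivAt_int {g : (Fin d → ℝ) → ℂ} (hg : Continuous g) {C K : ℝ} (hC : 0 ≤ C)
    (hb : ∀ x, ‖g x‖ ≤ C * Real.exp (K * ‖x‖ - Q x)) (w : Fin d → ℂ) (z₀ : ℂ) :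
    HasDerivAt (fun z => ∫ x : Fin d → ℝ, g x * cexp (z * Lf w x))
      (∫ x : Fin d → ℝ, (g x * Lf w x) * cexp (z₀ * Lf w x)) z₀ := by
  set W : ℝ := ∑ i, ‖w i‖ with hW
  have hW0 : 0 ≤ W := sum_norm_nonneg w
  have key := hasDerivAt_integral_of_dominated_loc_of_deriv_le (μ := volume)
    (F := fun z (x : Fin d → ℝ) => g x * cexp (z * Lf w x))
    (F' := fun z (x : Fin d → ℝ) => (g x * Lf w x) * cexp (z * Lf w x))
    (x₀ := z₀)
    (bound := fun x => (C * W) * Real.exp ((K + 1 + (‖z₀‖ + 1) * W) * ‖x‖ - Q x))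
    (s := Metric.ball z₀ 1) (Metric.ball_mem_nhds z₀ one_pos)
    (Filter.Eventually.of_forall fun z =>
      (hg.mul (cexp_mul_Lf_continuous z w)).aestronglyMeasurable)
    ?_ ?_ ?_ ?_ ?_
  · exact key.2
  · -- integrability of F z₀
    apply integrable_of_gbound (hg.mul (cexp_mul_Lf_continuous z₀ w))
      (C := C) (K := K + ‖z₀‖ * W)
    intro x
    rw [Pi.mul_apply, norm_mul]
    calc ‖g x‖ * ‖cexp (z₀ * Lf w x)‖
        ≤ (C * Real.exp (K * ‖x‖ - Q x)) * Real.exp (‖z₀‖ * (W * ‖x‖)) :=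
          mul_le_mul (hb x) (norm_cexp_mul_Lf_le le_rfl w x) (norm_nonneg _) (by positivity)
      _ = C * Real.exp ((K + ‖z₀‖ * W) * ‖x‖ - Q x) := by
          rw [show (K + ‖z₀‖ * W) * ‖x‖ - Q x = (K * ‖x‖ - Q x) + ‖z₀‖ * (W * ‖x‖) by ring,
            Real.exp_add]; ring
  · exact ((hg.mul (Lf_continuous w)).mul (cexp_mul_Lf_continuous z₀ w)).aestronglyMeasurable
  · -- bound
    filter_upwards with x z hz
    have hzn : ‖z‖ ≤ ‖z₀‖ + 1 := by
      have h := Metric.mem_ball.1 hz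
      rw [dist_eq_norm] at h
      calc ‖z‖ = ‖(z - z₀) + z₀‖ := by ring_nf
        _ ≤ ‖z - z₀‖ + ‖z₀‖ := norm_add_le _ _
        _ ≤ ‖z₀‖ + 1 := by linarith
    rw [norm_mul]
    calc ‖g x * Lf w x‖ * ‖cexp (z * Lf w x)‖
        ≤ ((C * W) * Real.exp ((K + 1) * ‖x‖ - Q x)) * Real.exp ((‖z₀‖ + 1) * (W * ‖x‖)) :=
          mul_le_mul (gbound_mul_Lf hC hb w x) (norm_cexp_mul_Lf_le hzn w x)
            (norm_nonneg _) (by positivity)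
      _ = (C * W) * Real.exp ((K + 1 + (‖z₀‖ + 1) * W) * ‖x‖ - Q x) := by
          rw [show (K + 1 + (‖z₀‖ + 1) * W) * ‖x‖ - Q x
              = ((K + 1) * ‖x‖ - Q x) + (‖z₀‖ + 1) * (W * ‖x‖) by ring, Real.exp_add]
          ring
  · exact (integrable_master _).const_mul _
  · -- differentiability
    filter_upwards with x z _
    have h1 : HasDerivAt (fun z : ℂ => z * Lf w x) (Lf w x) z := hasDerivAt_mul_const _
    have h2 := (h1.cexp).const_mul (g x)
    refine h2.congr_deriv ?_
    ring

lemma iteratedDeriv_int (k : ℕ) {g : (Fin d → ℝ) → ℂ} (hg : Continuous g) {C K : ℝ}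
    (hC : 0 ≤ C) (hb : ∀ x, ‖g x‖ ≤ C * Real.exp (K * ‖x‖ - Q x)) (w : Fin d → ℂ) (z : ℂ) :
    iteratedDeriv k (fun z => ∫ x : Fin d → ℝ, g x * cexp (z * Lf w x)) z
      = ∫ x : Fin d → ℝ, (g x * (Lf w x) ^ k) * cexp (z * Lf w x) := by
  induction k generalizing g C K with
  | zero => simp
  | succ k ih =>
    rw [iteratedDeriv_succ']
    have hder : (deriv fun z => ∫ x : Fin d → ℝ, g x * cexp (z * Lf w x))
        = fun z => ∫ x : Fin d → ℝ, (g x * Lf w x) * cexp (z * Lf w x) :=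
      funext fun z => (hasDerivAt_int hg hC hb w z).deriv
    rw [hder, ih (g := fun x => g x * Lf w x) (hg.mul (Lf_continuous w))
      (mul_nonneg hC (sum_norm_nonneg w)) (gbound_mul_Lf hC hb w)]
    congr 1
    funext x
    ring



def E (x : Fin d → ℝ) : ℂ := Complex.exp ((-(Q x) : ℝ) : ℂ)

lemma E_continuous : Continuous (E (d := d)) :=
  Complex.continuous_exp.comp (Complex.continuous_ofReal.comp Q_continuous.neg)

lemma E_norm (x : Fin d → ℝ) : ‖E x‖ = Real.exp (-(Q x)) := by
  rw [E, Complex.norm_exp]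
  simp

lemma E_cast (x : Fin d → ℝ) : E x = cexp (-(1 : ℂ) * ∑ i, (x i : ℂ) ^ 2) := by
  rw [E]; congr 1; push_cast [Q]; ring

lemma iteratedDeriv_const_mul_cexp (B a : ℂ) : ∀ (k : ℕ) (z : ℂ),
    iteratedDeriv k (fun t => B * cexp (a * t)) z = B * a ^ k * cexp (a * z) := by
  intro k
  induction k generalizing B with
  | zero => intro z; simp
  | succ k ih =>
    intro z
    rw [iteratedDeriv_succ']
    have hd : (deriv fun t => B * cexp (a * t)) = fun t => (B * a) * cexp (a * t) := by
      funext t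
      have h1 : HasDerivAt (fun t : ℂ => a * t) a t := by
        simpa using (hasDerivAt_id t).const_mul a
      have h2 := (h1.cexp).const_mul B
      rw [h2.deriv]
      ring
    rw [hd, ih (B * a) z]
    ring


lemma iteratedDeriv_const_mul_pow (B : ℂ) (m : ℕ) : ∀ (n : ℕ) (z : ℂ),
    iteratedDeriv n (fun s : ℂ => B * s ^ m) z
      = (B * (m.descFactorial n : ℂ)) * z ^ (m - n) := by
  intro n
  induction n with
  | zero => intro z; simp
  | succ n ih =>
    intro z
    rw [iteratedDeriv_succ, funext ih]
    have hd : HasDerivAt (fun z : ℂ => (B * (m.descFactorial n : ℂ)) * z ^ (m - n))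
        ((B * (m.descFactorial n : ℂ)) * (((m - n : ℕ) : ℂ) * z ^ (m - n - 1))) z :=
      (hasDerivAt_pow (m - n) z).const_mul _
    rw [hd.deriv, Nat.descFactorial_succ, Nat.cast_mul,
      show m - n - 1 = m - (n + 1) from by omega]
    ring


lemma iteratedDeriv_const_mul_pow_zero (B : ℂ) (m n : ℕ) :
    iteratedDeriv n (fun s : ℂ => B * s ^ m) 0
      = B * (if n = m then (m.factorial : ℂ) else 0) := by
  rw [iteratedDeriv_const_mul_pow]
  rcases lt_trichotomy n m with h | h | h
  · rw [if_neg h.ne, zero_pow (by omega), mul_zero, mul_zero]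
  · subst h
    rw [if_pos rfl, Nat.sub_self, pow_zero, mul_one, Nat.descFactorial_self]
  · rw [if_neg h.ne', Nat.descFactorial_eq_zero_iff_lt.2 h]
    simp


lemma gen (u v : Fin d → ℂ) (hu : ∑ i, u i * u i = 0) (hv : ∑ i, v i * v i = 0) (s t : ℂ) :
    ∫ x : Fin d → ℝ, (E x * cexp (s * Lf u x)) * cexp (t * Lf v x)
      = (Real.pi : ℂ) ^ ((d : ℂ) / 2) * cexp (s * t * (∑ i, u i * v i) / 2) := by
  have h := GaussianFourier.integral_cexp_neg_mul_sum_add (b := 1) (by norm_num)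
    (fun i => s * u i + t * v i)
  have hL : (fun x : Fin d → ℝ =>
        cexp (-(1 : ℂ) * ∑ i, (x i : ℂ) ^ 2 + ∑ i, (s * u i + t * v i) * (x i : ℂ)))
      = fun x => (E x * cexp (s * Lf u x)) * cexp (t * Lf v x) := by
    funext x
    rw [E_cast, Lf, Lf, ← Complex.exp_add, ← Complex.exp_add]
    congr 1
    have hs : ∑ i, (s * u i + t * v i) * (x i : ℂ)
        = s * ∑ i, (x i : ℂ) * u i + t * ∑ i, (x i : ℂ) * v i := by
      rw [Finset.mul_sum, Finset.mul_sum, ← Finset.sum_add_distrib]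
      exact Finset.sum_congr rfl fun i _ => by ring
    rw [hs]
    ring
  rw [hL] at h
  rw [h]
  have hsum : ∑ i, (s * u i + t * v i) ^ 2 = 2 * s * t * ∑ i, u i * v i := by
    have he : ∀ i ∈ Finset.univ, (s * u i + t * v i) ^ 2
        = s ^ 2 * (u i * u i) + 2 * s * t * (u i * v i) + t ^ 2 * (v i * v i) :=
      fun i _ => by ring
    rw [Finset.sum_congr rfl he, Finset.sum_add_distrib, Finset.sum_add_distrib,
      ← Finset.mul_sum, ← Finset.mul_sum, ← Finset.mul_sum, hu, hv]
    ring
  rw [hsum]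
  norm_num [Fintype.card_fin]
  congr 1
  ring

lemma stepB (u v : Fin d → ℂ) (hu : ∑ i, u i * u i = 0) (hv : ∑ i, v i * v i = 0)
    (m : ℕ) (s : ℂ) :
    ∫ x : Fin d → ℝ, (E x * (Lf v x) ^ m) * cexp (s * Lf u x)
      = ((Real.pi : ℂ) ^ ((d : ℂ) / 2) * ((∑ i, u i * v i) / 2) ^ m) * s ^ m := by
  have hgcont : Continuous fun x : Fin d → ℝ => E x * cexp (s * Lf u x) :=
    E_continuous.mul (cexp_mul_Lf_continuous s u)
  have hgb : ∀ x : Fin d → ℝ,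
      ‖E x * cexp (s * Lf u x)‖ ≤ 1 * Real.exp ((‖s‖ * ∑ i, ‖u i‖) * ‖x‖ - Q x) := by
    intro x
    rw [norm_mul, E_norm]
    calc Real.exp (-(Q x)) * ‖cexp (s * Lf u x)‖
        ≤ Real.exp (-(Q x)) * Real.exp (‖s‖ * ((∑ i, ‖u i‖) * ‖x‖)) :=
          mul_le_mul_of_nonneg_left (norm_cexp_mul_Lf_le le_rfl u x) (Real.exp_pos _).le
      _ = 1 * Real.exp ((‖s‖ * ∑ i, ‖u i‖) * ‖x‖ - Q x) := by
          rw [← Real.exp_add, one_mul]; congr 1; ring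
  have h1 := iteratedDeriv_int m hgcont zero_le_one hgb v 0
  have hΦ : (fun t => ∫ x : Fin d → ℝ, (E x * cexp (s * Lf u x)) * cexp (t * Lf v x))
      = fun t => (Real.pi : ℂ) ^ ((d : ℂ) / 2) * cexp ((s * (∑ i, u i * v i) / 2) * t) := by
    funext t
    rw [gen u v hu hv s t]
    congr 1
    ring
  rw [hΦ, iteratedDeriv_const_mul_cexp] at h1
  have h2 : ∫ x : Fin d → ℝ, ((E x * cexp (s * Lf u x)) * (Lf v x) ^ m) * cexp (0 * Lf v x)
      = ∫ x : Fin d → ℝ, (E x * (Lf v x) ^ m) * cexp (s * Lf u x) := by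
    congr 1
    funext x
    rw [zero_mul, Complex.exp_zero, mul_one]
    ring
  rw [h2] at h1
  rw [← h1, mul_zero, Complex.exp_zero, mul_one]
  ring

lemma stepC (u v : Fin d → ℂ) (hu : ∑ i, u i * u i = 0) (hv : ∑ i, v i * v i = 0)
    (n m : ℕ) :
    ∫ x : Fin d → ℝ, (E x * (Lf v x) ^ m) * (Lf u x) ^ n
      = ((Real.pi : ℂ) ^ ((d : ℂ) / 2) * ((∑ i, u i * v i) / 2) ^ m)
          * (if n = m then (m.factorial : ℂ) else 0) := by
  have hgcont : Continuous fun x : Fin d → ℝ => E x * (Lf v x) ^ m :=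
    E_continuous.mul ((Lf_continuous v).pow m)
  have hgb : ∀ x : Fin d → ℝ, ‖E x * (Lf v x) ^ m‖
      ≤ (∑ i, ‖v i‖) ^ m * Real.exp ((m : ℝ) * ‖x‖ - Q x) := by
    intro x
    rw [norm_mul, norm_pow, E_norm]
    have hLe : ‖Lf v x‖ ≤ (∑ i, ‖v i‖) * Real.exp ‖x‖ :=
      (Lf_norm_le v x).trans
        (mul_le_mul_of_nonneg_left (norm_le_exp_norm x) (sum_norm_nonneg v))
    calc Real.exp (-(Q x)) * ‖Lf v x‖ ^ m
        ≤ Real.exp (-(Q x)) * ((∑ i, ‖v i‖) * Real.exp ‖x‖) ^ m :=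
          mul_le_mul_of_nonneg_left (pow_le_pow_left₀ (norm_nonneg _) hLe m)
            (Real.exp_pos _).le
      _ = (∑ i, ‖v i‖) ^ m * Real.exp ((m : ℝ) * ‖x‖ - Q x) := by
          rw [mul_pow, ← Real.exp_nat_mul,
            show (m : ℝ) * ‖x‖ - Q x = (m : ℝ) * ‖x‖ + (-(Q x)) by ring, Real.exp_add]
          ring
  have h1 := iteratedDeriv_int n hgcont (by positivity) hgb u 0
  have hH : (fun z => ∫ x : Fin d → ℝ, (E x * (Lf v x) ^ m) * cexp (z * Lf u x))
      = fun z => ((Real.pi : ℂ) ^ ((d : ℂ) / 2) * ((∑ i, u i * v i) / 2) ^ m) * z ^ m :=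
    funext fun z => stepB u v hu hv m z
  rw [hH, iteratedDeriv_const_mul_pow_zero] at h1
  have h2 : ∫ x : Fin d → ℝ, ((E x * (Lf v x) ^ m) * (Lf u x) ^ n) * cexp (0 * Lf u x)
      = ∫ x : Fin d → ℝ, (E x * (Lf v x) ^ m) * (Lf u x) ^ n := by
    congr 1
    funext x
    rw [zero_mul, Complex.exp_zero, mul_one]
  rw [← h2, ← h1]

end Stmt5Aux

/-- **Gaussian integral with null vectors.** For integers `d ≥ 1`, `n, m ∈ ℕ`
and `u, v ∈ ℂ^d` with `u·u = 0` and `v·v = 0` (complex bilinear form),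
`∫_{ℝ^d} e^{−‖x‖²}(x·u)ⁿ(x·v)ᵐ dx = π^{d/2}·n!·2^{−n}·(u·v)ⁿ` if `n = m`,
and the integral vanishes if `n ≠ m`. -/
theorem stmt5 (d : ℕ) (hd : 1 ≤ d) (n m : ℕ) (u v : Fin d → ℂ)
    (hu : ∑ i, u i * u i = 0) (hv : ∑ i, v i * v i = 0) :
    ∫ x : EuclideanSpace ℝ (Fin d),
        (Real.exp (-‖x‖ ^ 2) : ℂ) * (∑ i, (x i : ℂ) * u i) ^ n * (∑ i, (x i : ℂ) * v i) ^ m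
      = if n = m then
          (Real.pi : ℂ) ^ ((d : ℂ) / 2) * (n.factorial : ℂ) * (2 : ℂ) ^ (-(n : ℤ)) *
            (∑ i, u i * v i) ^ n
        else 0 := by
  have hmp := (EuclideanSpace.volume_preserving_symm_measurableEquiv_toLp (Fin d)).symm
  rw [← hmp.integral_comp (MeasurableEquiv.measurableEmbedding _)]
  rw [MeasurableEquiv.symm_symm]
  have heq : (fun x : Fin d → ℝ =>
      (Real.exp (-‖(MeasurableEquiv.toLp 2 (Fin d → ℝ)) x‖ ^ 2) : ℂ)
        * (∑ i, ((((MeasurableEquiv.toLp 2 (Fin d → ℝ)) x) i : ℝ) : ℂ) * u i) ^ n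
        * (∑ i, ((((MeasurableEquiv.toLp 2 (Fin d → ℝ)) x) i : ℝ) : ℂ) * v i) ^ m)
      = fun x : Fin d → ℝ => (Stmt5Aux.E x * (Stmt5Aux.Lf v x) ^ m) * (Stmt5Aux.Lf u x) ^ n := by
    funext x
    have happ : ∀ i, ((MeasurableEquiv.toLp 2 (Fin d → ℝ)) x) i = x i := fun i => rfl
    have hnorm : ‖(MeasurableEquiv.toLp 2 (Fin d → ℝ)) x‖ ^ 2  = Stmt5Aux.Q x := by
      rw [EuclideanSpace.norm_eq, Real.sq_sqrt (Finset.sum_nonneg fun i _ => by positivity)]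
      simp only [happ, Real.norm_eq_abs, Stmt5Aux.Q]
      exact Finset.sum_congr rfl fun i _ => sq_abs _
    simp only [happ, hnorm, Stmt5Aux.E, Stmt5Aux.Lf, Complex.ofReal_exp, Complex.ofReal_neg]
    ring
  rw [show (∫ x : Fin d → ℝ,
      (Real.exp (-‖(MeasurableEquiv.toLp 2 (Fin d → ℝ)) x‖ ^ 2) : ℂ)
        * (∑ i, ((((MeasurableEquiv.toLp 2 (Fin d → ℝ)) x) i : ℝ) : ℂ) * u i) ^ n
        * (∑ i, ((((MeasurableEquiv.toLp 2 (Fin d → ℝ)) x) i : ℝ) : ℂ) * v i) ^ m)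
      = ∫ x : Fin d → ℝ, (Stmt5Aux.E x * (Stmt5Aux.Lf v x) ^ m) * (Stmt5Aux.Lf u x) ^ n from by rw [heq]]
  rw [Stmt5Aux.stepC u v hu hv n m]
  by_cases h : n = m
  · subst h
    rw [if_pos rfl, if_pos rfl]
    rw [zpow_neg, zpow_natCast, div_pow]
    field_simp
  · rw [if_neg h, if_neg h, mul_zero]
end
end

section
/- Let d ≥ 1 be an integer, let n, m ∈ ℕ, and let u, v ∈ ℂ^d satisfy u·u = 0 and v·v = 0. Then ∫_{S^{d−1}} (ω·u)^n (ω·v)^m dσ(ω) = π^{d/2} · n! / (2^{n−1} Γ(d/2 + n)) · (u·v)^n if n = m, and the integral equals 0 if n ≠ m. (The constant equals c_n/π with c_n = π^{d/2+1} n! / (2^{n−1} Γ(d/2 + n)).) -/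
open MeasureTheory Real Set Filter Topology MeasureTheory.Measure

noncomputable section

namespace SphOrtho


lemma integrable_abs_pow_exp (N : ℕ) :
    Integrable (fun y : ℝ => |y| ^ N * rexp (-y ^ 2)) := by
  have h : Integrable (fun y : ℝ => y ^ N * rexp (-y ^ 2)) := by
    have := integrable_rpow_mul_exp_neg_mul_sq (b := 1)
      (s := (N : ℝ)) one_pos (lt_of_lt_of_le (by norm_num) (Nat.cast_nonneg N))
    simpa [Real.rpow_natCast] using this
  exact h.abs.congr (ae_of_all _ fun y => by
    simp [abs_mul, abs_pow, abs_of_nonneg (Real.exp_pos _).le])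

lemma one_add_pow_le (t : ℝ) (ht : 0 ≤ t) (N : ℕ) : (1+t)^N ≤ 2^N * (1 + t^N) := by
  rcases le_total t 1 with h | h
  · calc (1+t)^N ≤ 2^N := pow_le_pow_left₀ (by linarith) (by linarith) N
      _ ≤ 2^N * (1 + t^N) := le_mul_of_one_le_right (by positivity)
          (by nlinarith [pow_nonneg ht N])
  · calc (1+t)^N ≤ (2*t)^N := pow_le_pow_left₀ (by linarith) (by linarith) N
      _ = 2^N * t^N := mul_pow _ _ _
      _ ≤ 2^N * (1 + t^N) := by
          have : (0:ℝ) ≤ 2^N := by positivity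
          nlinarith

lemma integrable_one_add_abs (N : ℕ) :
    Integrable (fun y : ℝ => (1+|y|)^N * rexp (-y^2)) := by
  have he : Integrable (fun y : ℝ => rexp (-y ^ 2)) := by
    simpa using integrable_exp_neg_mul_sq (b := 1) one_pos
  have h1 : Integrable (fun y : ℝ =>
      (2:ℝ)^N * rexp (-y^2) + 2^N * (|y|^N * rexp (-y^2))) :=
    (he.const_mul _).add ((integrable_abs_pow_exp N).const_mul _)
  refine h1.mono' ?_ (ae_of_all _ fun y => ?_)
  · exact (((continuous_const.add continuous_abs).pow N).mul
      ((continuous_pow 2).neg.rexp)).aestronglyMeasurable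
  · rw [Real.norm_eq_abs, abs_of_nonneg (by positivity)]
    have h2 := one_add_pow_le |y| (abs_nonneg y) N
    calc (1+|y|)^N * rexp (-y^2) ≤ (2^N * (1+|y|^N)) * rexp (-y^2) :=
          mul_le_mul_of_nonneg_right h2 (Real.exp_pos _).le
      _ = 2^N * rexp (-y^2) + 2^N * (|y|^N * rexp (-y^2)) := by ring

lemma integrable_dom {f : ℝ → ℂ} (hf : Continuous f) (C : ℝ) (N : ℕ)
    (hb : ∀ y, ‖f y‖ ≤ C * ((1+|y|)^N * rexp (-y^2))) : Integrable f :=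
  (((integrable_one_add_abs N).const_mul C)).mono' hf.aestronglyMeasurable (ae_of_all _ hb)

lemma tendsto_dom (C : ℝ) (N : ℕ) {l : Filter ℝ} (hl : Tendsto (fun y : ℝ => |y|) l atTop) :
    Tendsto (fun y : ℝ => C * ((1+|y|)^N * rexp (-y^2))) l (𝓝 0) := by
  have key : Tendsto (fun t : ℝ => C * ((1+t)^N * rexp (-t^2))) atTop (𝓝 0) := by
    have h0 : Tendsto (fun t : ℝ => (|C| * 2^N) * (t^N * rexp (-t))) atTop (𝓝 0) := by
      simpa using (tendsto_pow_mul_exp_neg_atTop_nhds_zero N).const_mul (|C| * 2^N)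
    refine squeeze_zero_norm' ?_ h0
    filter_upwards [eventually_ge_atTop (1:ℝ)] with t ht
    have h1 : rexp (-t^2) ≤ rexp (-t) := Real.exp_le_exp.2 (by nlinarith)
    have h2 : (1+t)^N ≤ 2^N * t^N := by
      calc (1+t)^N ≤ (2*t)^N := pow_le_pow_left₀ (by linarith) (by linarith) N
        _ = 2^N*t^N := mul_pow _ _ _
    have hnn : (0:ℝ) ≤ (1+t)^N * rexp (-t^2) := by positivity
    calc ‖C * ((1+t)^N * rexp (-t^2))‖ = |C| * ((1+t)^N * rexp (-t^2)) := by
          rw [norm_mul, Real.norm_eq_abs, Real.norm_eq_abs, abs_of_nonneg hnn]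
      _ ≤ |C| * ((2^N * t^N) * rexp (-t)) := by
          refine mul_le_mul_of_nonneg_left ?_ (abs_nonneg _)
          refine mul_le_mul h2 h1 (Real.exp_pos _).le (by positivity)
      _ = (|C| * 2^N) * (t^N * rexp (-t)) := by ring
  refine (key.comp hl).congr fun y => ?_
  simp [Function.comp, sq_abs]




lemma integrable_prod_pi {d : ℕ} (N : ℕ) :
    Integrable (fun x : Fin d → ℝ => ∏ i, ((1+|x i|)^N * rexp (-(x i)^2))) :=
  Integrable.fintype_prod (f := fun _ y => (1+|y|)^N * rexp (-y^2))
    fun _ => integrable_one_add_abs N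

lemma integrable_dom_pi {d : ℕ} {f : (Fin d → ℝ) → ℂ} (hf : Continuous f) (C : ℝ) (N : ℕ)
    (hb : ∀ x, ‖f x‖ ≤ C * ∏ i, ((1+|x i|)^N * rexp (-(x i)^2))) : Integrable f :=
  ((integrable_prod_pi N).const_mul C).mono' hf.aestronglyMeasurable (ae_of_all _ hb)

lemma abs_le_prod {d : ℕ} (x : Fin d → ℝ) (j : Fin d) :
    |x j| ≤ ∏ i, (1 + |x i|) :=
  by
  have h := Finset.prod_le_prod (s := Finset.univ)
    (f := fun i => if i = j then |x j| else 1) (g := fun i => 1 + |x i|)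
    (fun i _ => by split <;> simp [abs_nonneg])
    (fun i _ => by
      rcases eq_or_ne i j with rfl | hne
      · rw [if_pos rfl]; linarith [abs_nonneg (x i)]
      · rw [if_neg hne]; linarith [abs_nonneg (x i)])
  simpa using h

lemma norm_sum_le_prod {d : ℕ} (x : Fin d → ℝ) (w : Fin d → ℂ) :
    ‖∑ j, (x j : ℂ) * w j‖ ≤ (1 + ∑ j, ‖w j‖) * ∏ j, (1 + |x j|) := by
  have hPnn : (0:ℝ) ≤ ∏ j, (1 + |x j|) :=
    Finset.prod_nonneg fun j _ => by positivity
  calc ‖∑ j, (x j : ℂ) * w j‖ ≤ ∑ j, ‖(x j : ℂ) * w j‖ := norm_sum_le _ _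
    _ ≤ ∑ j, ‖w j‖ * ∏ i, (1 + |x i|) := by
        refine Finset.sum_le_sum fun j _ => ?_
        rw [norm_mul, Complex.norm_real, Real.norm_eq_abs, mul_comm]
        exact mul_le_mul_of_nonneg_left (abs_le_prod x j) (norm_nonneg _)
    _ = (∑ j, ‖w j‖) * ∏ j, (1 + |x j|) := (Finset.sum_mul _ _ _).symm
    _ ≤ (1 + ∑ j, ‖w j‖) * ∏ j, (1 + |x j|) := by
        refine mul_le_mul_of_nonneg_right (by linarith) hPnn

lemma exp_neg_sum_sq {d : ℕ} (x : Fin d → ℝ) :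
    rexp (-∑ j, (x j)^2) = ∏ j, rexp (-(x j)^2) := by
  rw [← Real.exp_sum]
  congr 1
  rw [← Finset.sum_neg_distrib]

lemma norm_main_le {d : ℕ} (u v : Fin d → ℂ) (a b : ℕ) (x : Fin d → ℝ) :
    ‖((∑ j, (x j:ℂ) * u j)^a * (∑ j, (x j:ℂ) * v j)^b) * (rexp (-∑ j, (x j)^2) : ℂ)‖
    ≤ ((1+∑ j, ‖u j‖)^a * (1+∑ j, ‖v j‖)^b)
        * ∏ j, ((1+|x j|)^(a+b+1) * rexp (-(x j)^2)) := by
  have hPnn : (0:ℝ) ≤ ∏ j, (1 + |x j|) := Finset.prod_nonneg fun j _ => by positivity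
  have hsu : (0:ℝ) ≤ 1 + ∑ j, ‖u j‖ := by
    have := Finset.sum_nonneg (fun j (_ : j ∈ Finset.univ) => norm_nonneg (u j)); linarith
  have hsv : (0:ℝ) ≤ 1 + ∑ j, ‖v j‖ := by
    have := Finset.sum_nonneg (fun j (_ : j ∈ Finset.univ) => norm_nonneg (v j)); linarith
  calc ‖((∑ j, (x j:ℂ) * u j)^a * (∑ j, (x j:ℂ) * v j)^b) * (rexp (-∑ j, (x j)^2) : ℂ)‖
      = ‖∑ j, (x j:ℂ) * u j‖^a * ‖∑ j, (x j:ℂ) * v j‖^b * rexp (-∑ j, (x j)^2) := by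
        rw [norm_mul, norm_mul, norm_pow, norm_pow, Complex.norm_real, Real.norm_eq_abs,
          abs_of_nonneg (Real.exp_pos _).le]
    _ ≤ ((1+∑ j, ‖u j‖) * ∏ j, (1 + |x j|))^a * ((1+∑ j, ‖v j‖) * ∏ j, (1 + |x j|))^b
          * rexp (-∑ j, (x j)^2) := by
        refine mul_le_mul_of_nonneg_right ?_ (Real.exp_pos _).le
        exact mul_le_mul (pow_le_pow_left₀ (norm_nonneg _) (norm_sum_le_prod x u) a)
          (pow_le_pow_left₀ (norm_nonneg _) (norm_sum_le_prod x v) b)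
          (by positivity) (by positivity)
    _ = ((1+∑ j, ‖u j‖)^a * (1+∑ j, ‖v j‖)^b)
          * ((∏ j, (1 + |x j|)^(a+b)) * ∏ j, rexp (-(x j)^2)) := by
        rw [mul_pow, mul_pow, exp_neg_sum_sq, Finset.prod_pow, pow_add]
        ring
    _ ≤ ((1+∑ j, ‖u j‖)^a * (1+∑ j, ‖v j‖)^b)
          * ∏ j, ((1+|x j|)^(a+b+1) * rexp (-(x j)^2)) := by
        refine mul_le_mul_of_nonneg_left ?_ (by positivity)
        rw [← Finset.prod_mul_distrib]
        refine Finset.prod_le_prod (fun j _ => by positivity) (fun j _ => ?_)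
        refine mul_le_mul_of_nonneg_right ?_ (Real.exp_pos _).le
        exact pow_le_pow_right₀ (by linarith [abs_nonneg (x j)]) (by omega)




lemma cont_sum {d : ℕ} (w : Fin d → ℂ) :
    Continuous (fun x : Fin d → ℝ => ∑ j, (x j:ℂ) * w j) :=
  continuous_finset_sum _ fun j _ =>
    (Complex.continuous_ofReal.comp (continuous_apply j)).mul continuous_const

lemma cont_exp {d : ℕ} :
    Continuous (fun x : Fin d → ℝ => (rexp (-∑ j, (x j)^2) : ℂ)) :=
  Complex.continuous_ofReal.comp
    ((continuous_finset_sum _ fun j _ => (continuous_apply j).pow 2).neg.rexp)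

lemma integrable_K {d : ℕ} (u v : Fin d → ℂ) (a b : ℕ) :
    Integrable (fun x : Fin d → ℝ =>
      ((∑ j, (x j:ℂ) * u j)^a * (∑ j, (x j:ℂ) * v j)^b) * (rexp (-∑ j, (x j)^2) : ℂ)) :=
  integrable_dom_pi ((((cont_sum u).pow a).mul ((cont_sum v).pow b)).mul cont_exp)
    _ (a+b+1) (norm_main_le u v a b)

lemma integrable_xK {d : ℕ} (u v : Fin d → ℂ) (a b : ℕ) (i : Fin d) :
    Integrable (fun x : Fin d → ℝ =>
      (x i : ℂ) * ((∑ j, (x j:ℂ) * u j)^a * (∑ j, (x j:ℂ) * v j)^b)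
        * (rexp (-∑ j, (x j)^2) : ℂ)) := by
  refine integrable_dom_pi
    (((Complex.continuous_ofReal.comp (continuous_apply i)).mul
      (((cont_sum u).pow a).mul ((cont_sum v).pow b))).mul cont_exp)
    ((1+∑ j, ‖u j‖)^a * (1+∑ j, ‖v j‖)^b) (a+b+2) (fun x => ?_)
  have hPnn : (0:ℝ) ≤ ∏ j, (1 + |x j|) := Finset.prod_nonneg fun j _ => by positivity
  have hGnn : (0:ℝ) ≤ ∏ j, ((1+|x j|)^(a+b+1) * rexp (-(x j)^2)) :=
    Finset.prod_nonneg fun j _ => by positivity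
  calc ‖(x i : ℂ) * ((∑ j, (x j:ℂ) * u j)^a * (∑ j, (x j:ℂ) * v j)^b)
        * (rexp (-∑ j, (x j)^2) : ℂ)‖
      = |x i| * ‖((∑ j, (x j:ℂ) * u j)^a * (∑ j, (x j:ℂ) * v j)^b)
          * (rexp (-∑ j, (x j)^2) : ℂ)‖ := by
        rw [mul_assoc, norm_mul, Complex.norm_real, Real.norm_eq_abs]
    _ ≤ (∏ j, (1 + |x j|)) * (((1+∑ j, ‖u j‖)^a * (1+∑ j, ‖v j‖)^b)
          * ∏ j, ((1+|x j|)^(a+b+1) * rexp (-(x j)^2))) := by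
        refine mul_le_mul (abs_le_prod x i) (norm_main_le u v a b x) (norm_nonneg _) hPnn
    _ = ((1+∑ j, ‖u j‖)^a * (1+∑ j, ‖v j‖)^b)
          * ((∏ j, (1 + |x j|)) * ∏ j, ((1+|x j|)^(a+b+1) * rexp (-(x j)^2))) := by ring
    _ = ((1+∑ j, ‖u j‖)^a * (1+∑ j, ‖v j‖)^b)
          * ∏ j, ((1+|x j|)^(a+b+2) * rexp (-(x j)^2)) := by
        rw [← Finset.prod_mul_distrib]
        congr 1
        exact Finset.prod_congr rfl fun j _ => by ring




lemma hasDerivAt_pow_comp {f : ℝ → ℂ} {f' : ℂ} {x : ℝ} (hf : HasDerivAt f f' x) (n : ℕ) :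
    HasDerivAt (fun s => f s ^ n) ((n:ℂ) * f x ^ (n-1) * f') x := by
  induction n with
  | zero => simpa using hasDerivAt_const x (1:ℂ)
  | succ k ih =>
    have h := ih.mul hf
    have heq : (fun s => f s ^ (k+1)) = fun s => f s ^ k * f s :=
      funext fun s => pow_succ _ _
    rw [heq]
    refine h.congr_deriv ?_
    symm
    rcases Nat.eq_zero_or_pos k with rfl | hk
    · simp
    · have hks : k - 1 + 1 = k := Nat.succ_pred_eq_of_pos hk
      rw [Nat.add_sub_cancel]
      push_cast
      calc ((k:ℂ)+1) * f x ^ k * f' = (k:ℂ) * f x ^ k * f' + f x ^ k * f' := by ring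
        _ = (k:ℂ) * (f x ^ (k-1) * f x) * f' + f x ^ k * f' := by
            rw [← pow_succ, hks]
        _ = (k:ℂ) * f x ^ (k-1) * f' * f x + f x ^ k * f' := by ring

lemma oneD (α β A B : ℂ) (a b : ℕ) :
    ∫ y : ℝ, (y:ℂ) * (((y:ℂ)*α+A)^a * ((y:ℂ)*β+B)^b) * (rexp (-y^2) : ℂ)
    = (a * α / 2) * (∫ y : ℝ, (((y:ℂ)*α+A)^(a-1) * ((y:ℂ)*β+B)^b) * (rexp (-y^2) : ℂ))
    + (b * β / 2) * (∫ y : ℝ, (((y:ℂ)*α+A)^a * ((y:ℂ)*β+B)^(b-1)) * (rexp (-y^2) : ℂ)) := by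
  set M : ℝ := ‖α‖+‖A‖+‖β‖+‖B‖+1 with hM
  have hM1 : 1 ≤ M := by
    have h1 := norm_nonneg α; have h2 := norm_nonneg A
    have h3 := norm_nonneg β; have h4 := norm_nonneg B
    rw [hM]; linarith
  have hlin1 : ∀ y : ℝ, ‖(y:ℂ)*α+A‖ ≤ M*(1+|y|) := by
    intro y
    refine (norm_add_le _ _).trans ?_
    rw [norm_mul, Complex.norm_real, Real.norm_eq_abs]
    have h1 := norm_nonneg α; have h2 := norm_nonneg A
    have h3 := norm_nonneg β; have h4 := norm_nonneg B
    have h5 := abs_nonneg y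
    rw [hM]; nlinarith
  have hlin2 : ∀ y : ℝ, ‖(y:ℂ)*β+B‖ ≤ M*(1+|y|) := by
    intro y
    refine (norm_add_le _ _).trans ?_
    rw [norm_mul, Complex.norm_real, Real.norm_eq_abs]
    have h1 := norm_nonneg α; have h2 := norm_nonneg A
    have h3 := norm_nonneg β; have h4 := norm_nonneg B
    have h5 := abs_nonneg y
    rw [hM]; nlinarith
  have hMy : ∀ y : ℝ, 1 ≤ M * (1+|y|) := fun y =>
    one_le_mul_of_one_le_of_one_le hM1 (by linarith [abs_nonneg y])
  have bnd : ∀ (j k : ℕ), j ≤ a → k ≤ b → ∀ y : ℝ,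
      ‖((y:ℂ)*α+A)^j * ((y:ℂ)*β+B)^k‖ ≤ M^(a+b)*(1+|y|)^(a+b) := by
    intro j k hj hk y
    calc ‖((y:ℂ)*α+A)^j * ((y:ℂ)*β+B)^k‖
        = ‖(y:ℂ)*α+A‖^j * ‖(y:ℂ)*β+B‖^k := by rw [norm_mul, norm_pow, norm_pow]
      _ ≤ (M*(1+|y|))^j * (M*(1+|y|))^k := by
          exact mul_le_mul (pow_le_pow_left₀ (norm_nonneg _) (hlin1 y) j)
            (pow_le_pow_left₀ (norm_nonneg _) (hlin2 y) k)
            (by positivity) (by positivity)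
      _ = (M*(1+|y|))^(j+k) := (pow_add _ _ _).symm
      _ ≤ (M*(1+|y|))^(a+b) := pow_le_pow_right₀ (hMy y) (by omega)
      _ = M^(a+b)*(1+|y|)^(a+b) := mul_pow _ _ _
  -- integrability of the building blocks
  have hcont : ∀ (j k : ℕ), Continuous (fun y : ℝ =>
      (((y:ℂ)*α+A)^j * ((y:ℂ)*β+B)^k) * (rexp (-y^2) : ℂ)) := by
    intro j k
    apply Continuous.mul
    · exact (((Complex.continuous_ofReal.mul continuous_const).add continuous_const).pow j).mul
        (((Complex.continuous_ofReal.mul continuous_const).add continuous_const).pow k)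
    · exact Complex.continuous_ofReal.comp ((continuous_pow 2).neg.rexp)
  have hint : ∀ (j k : ℕ), j ≤ a → k ≤ b → Integrable (fun y : ℝ =>
      (((y:ℂ)*α+A)^j * ((y:ℂ)*β+B)^k) * (rexp (-y^2) : ℂ)) := by
    intro j k hj hk
    refine integrable_dom (hcont j k) (M^(a+b)) (a+b) fun y => ?_
    rw [norm_mul, Complex.norm_real, Real.norm_eq_abs, abs_of_nonneg (Real.exp_pos _).le,
      ← mul_assoc]
    exact mul_le_mul_of_nonneg_right (bnd j k hj hk y) (Real.exp_pos _).le
  have hint0 : Integrable (fun y : ℝ =>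
      (y:ℂ) * (((y:ℂ)*α+A)^a * ((y:ℂ)*β+B)^b) * (rexp (-y^2) : ℂ)) := by
    refine integrable_dom ?_ (M^(a+b)) (a+b+1) fun y => ?_
    · exact (Complex.continuous_ofReal.mul ((((Complex.continuous_ofReal.mul
        continuous_const).add continuous_const).pow a).mul
        (((Complex.continuous_ofReal.mul continuous_const).add continuous_const).pow b))).mul
        (Complex.continuous_ofReal.comp ((continuous_pow 2).neg.rexp))
    · rw [norm_mul, norm_mul, Complex.norm_real, Real.norm_eq_abs,
        Complex.norm_real, Real.norm_eq_abs, abs_of_nonneg (Real.exp_pos _).le]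
      have h1 := bnd a b le_rfl le_rfl y
      have h2 : |y| ≤ 1 + |y| := by linarith [abs_nonneg y]
      have h3 : (0:ℝ) < rexp (-y^2) := Real.exp_pos _
      calc |y| * ‖((y:ℂ)*α+A)^a * ((y:ℂ)*β+B)^b‖ * rexp (-y^2)
          ≤ (1+|y|) * (M^(a+b)*(1+|y|)^(a+b)) * rexp (-y^2) := by
            refine mul_le_mul_of_nonneg_right ?_ h3.le
            exact mul_le_mul h2 h1 (norm_nonneg _) (by positivity)
        _ = M^(a+b) * ((1+|y|)^(a+b+1) * rexp (-y^2)) := by ring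
  -- the function and its derivative
  set g : ℝ → ℂ := fun y => (((y:ℂ)*α+A)^a * ((y:ℂ)*β+B)^b) * (rexp (-y^2) : ℂ) with hg
  set g' : ℝ → ℂ := fun y =>
      (a*α) * ((((y:ℂ)*α+A)^(a-1) * ((y:ℂ)*β+B)^b) * (rexp (-y^2) : ℂ))
    + (b*β) * ((((y:ℂ)*α+A)^a * ((y:ℂ)*β+B)^(b-1)) * (rexp (-y^2) : ℂ))
    - 2 * ((y:ℂ) * (((y:ℂ)*α+A)^a * ((y:ℂ)*β+B)^b) * (rexp (-y^2) : ℂ)) with hg'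
  have hderiv : ∀ y : ℝ, HasDerivAt g (g' y) y := by
    intro y
    have h1 : HasDerivAt (fun s : ℝ => ((s:ℂ)*α+A)) α y := by
      simpa using (((hasDerivAt_id y).ofReal_comp).mul_const α).add_const A
    have h2 : HasDerivAt (fun s : ℝ => ((s:ℂ)*β+B)) β y := by
      simpa using (((hasDerivAt_id y).ofReal_comp).mul_const β).add_const B
    have hA : HasDerivAt (fun s : ℝ => ((s:ℂ)*α+A)^a)
        ((a:ℂ) * ((y:ℂ)*α+A)^(a-1) * α) y := hasDerivAt_pow_comp h1 a
    have hB : HasDerivAt (fun s : ℝ => ((s:ℂ)*β+B)^b)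
        ((b:ℂ) * ((y:ℂ)*β+B)^(b-1) * β) y := hasDerivAt_pow_comp h2 b
    have hq := hA.mul hB
    have hexp : HasDerivAt (fun s : ℝ => ((rexp (-s^2) : ℝ) : ℂ))
        (↑(rexp (-y^2) * (-(2*y)))) y := by
      have h3 : HasDerivAt (fun s : ℝ => -s^2) (-(2*y)) y := by
        exact (hasDerivAt_pow 2 y).neg.congr_deriv (by norm_num)
      exact (h3.exp).ofReal_comp
    have := hq.mul hexp
    refine this.congr_deriv ?_
    rw [hg']
    push_cast
    simp only [Pi.mul_apply]
    ring
  have hintg' : Integrable g' := by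
    refine (((((hint (a-1) b (by omega) le_rfl).const_mul ((a:ℂ)*α))).add
      ((hint a (b-1) le_rfl (by omega)).const_mul ((b:ℂ)*β))).sub
      (hint0.const_mul 2)).congr (ae_of_all _ fun y => rfl)
  have htop : Tendsto g atTop (𝓝 0) := by
    refine squeeze_zero_norm (fun y => ?_) (tendsto_dom (M^(a+b)) (a+b) tendsto_abs_atTop_atTop)
    rw [hg]
    calc ‖(((y:ℂ)*α+A)^a * ((y:ℂ)*β+B)^b) * (rexp (-y^2) : ℂ)‖
        = ‖((y:ℂ)*α+A)^a * ((y:ℂ)*β+B)^b‖ * rexp (-y^2) := by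
          rw [norm_mul, Complex.norm_real, Real.norm_eq_abs, abs_of_nonneg (Real.exp_pos _).le]
      _ ≤ (M^(a+b)*(1+|y|)^(a+b)) * rexp (-y^2) :=
          mul_le_mul_of_nonneg_right (bnd a b le_rfl le_rfl y) (Real.exp_pos _).le
      _ = M^(a+b) * ((1+|y|)^(a+b) * rexp (-y^2)) := by ring
  have hbot : Tendsto g atBot (𝓝 0) := by
    refine squeeze_zero_norm (fun y => ?_) (tendsto_dom (M^(a+b)) (a+b) tendsto_abs_atBot_atTop)
    rw [hg]
    calc ‖(((y:ℂ)*α+A)^a * ((y:ℂ)*β+B)^b) * (rexp (-y^2) : ℂ)‖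
        = ‖((y:ℂ)*α+A)^a * ((y:ℂ)*β+B)^b‖ * rexp (-y^2) := by
          rw [norm_mul, Complex.norm_real, Real.norm_eq_abs, abs_of_nonneg (Real.exp_pos _).le]
      _ ≤ (M^(a+b)*(1+|y|)^(a+b)) * rexp (-y^2) :=
          mul_le_mul_of_nonneg_right (bnd a b le_rfl le_rfl y) (Real.exp_pos _).le
      _ = M^(a+b) * ((1+|y|)^(a+b) * rexp (-y^2)) := by ring
  have hzero : ∫ y : ℝ, g' y = 0 := by
    rw [← intervalIntegral.integral_Iic_add_Ioi (b := (0:ℝ)) hintg'.integrableOn hintg'.integrableOn,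
      integral_Iic_of_hasDerivAt_of_tendsto' (fun x _ => hderiv x) hintg'.integrableOn hbot,
      integral_Ioi_of_hasDerivAt_of_tendsto' (fun x _ => hderiv x) hintg'.integrableOn htop]
    ring
  have hI1 : Integrable (fun y : ℝ =>
      ((a:ℂ)*α) * ((((y:ℂ)*α+A)^(a-1) * ((y:ℂ)*β+B)^b) * (rexp (-y^2) : ℂ))) :=
    (hint (a-1) b (by omega) le_rfl).const_mul _
  have hI2 : Integrable (fun y : ℝ =>
      ((b:ℂ)*β) * ((((y:ℂ)*α+A)^a * ((y:ℂ)*β+B)^(b-1)) * (rexp (-y^2) : ℂ))) :=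
    (hint a (b-1) le_rfl (by omega)).const_mul _
  have hI3 : Integrable (fun y : ℝ =>
      (2:ℂ) * ((y:ℂ) * (((y:ℂ)*α+A)^a * ((y:ℂ)*β+B)^b) * (rexp (-y^2) : ℂ))) :=
    hint0.const_mul 2
  have hI12 : Integrable (fun y : ℝ =>
      ((a:ℂ)*α) * ((((y:ℂ)*α+A)^(a-1) * ((y:ℂ)*β+B)^b) * (rexp (-y^2) : ℂ))
      + ((b:ℂ)*β) * ((((y:ℂ)*α+A)^a * ((y:ℂ)*β+B)^(b-1)) * (rexp (-y^2) : ℂ))) :=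
    hI1.add hI2
  have hsplit : ∫ y : ℝ, g' y
      = (a*α) * (∫ y : ℝ, (((y:ℂ)*α+A)^(a-1) * ((y:ℂ)*β+B)^b) * (rexp (-y^2) : ℂ))
      + (b*β) * (∫ y : ℝ, (((y:ℂ)*α+A)^a * ((y:ℂ)*β+B)^(b-1)) * (rexp (-y^2) : ℂ))
      - 2 * (∫ y : ℝ, (y:ℂ) * (((y:ℂ)*α+A)^a * ((y:ℂ)*β+B)^b) * (rexp (-y^2) : ℂ)) := by
    rw [hg']
    have e1 : ∫ y : ℝ, g' y = (∫ y : ℝ,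
        (((a:ℂ)*α) * ((((y:ℂ)*α+A)^(a-1) * ((y:ℂ)*β+B)^b) * (rexp (-y^2) : ℂ))
        + ((b:ℂ)*β) * ((((y:ℂ)*α+A)^a * ((y:ℂ)*β+B)^(b-1)) * (rexp (-y^2) : ℂ))))
        - ∫ y : ℝ, (2:ℂ) * ((y:ℂ) * (((y:ℂ)*α+A)^a * ((y:ℂ)*β+B)^b) * (rexp (-y^2) : ℂ)) := by
      rw [hg', ← integral_sub hI12 hI3]
    rw [← hg', e1, integral_add hI1 hI2, integral_const_mul, integral_const_mul,
      integral_const_mul]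
  rw [hsplit] at hzero
  linear_combination (-(1:ℂ)/2) * hzero



lemma integrable_insertNth {d' : ℕ} (i : Fin (d'+1)) {F : (Fin (d'+1) → ℝ) → ℂ}
    (hF : Integrable F) :
    Integrable (fun z : ℝ × (Fin d' → ℝ) => F (i.insertNth z.1 z.2))
      ((volume : Measure ℝ).prod volume) := by
  have h0 := (volume_preserving_piFinSuccAbove (fun _ : Fin (d'+1) => ℝ) i).symm
  have h2 := (h0.integrable_comp_emb (MeasurableEquiv.measurableEmbedding _)).2 hF
  rw [← volume_eq_prod]
  simpa [Function.comp_def, MeasurableEquiv.piFinSuccAbove_symm_apply, Fin.insertNthEquiv,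
    Equiv.coe_fn_mk] using h2

lemma trans_insertNth {d' : ℕ} (i : Fin (d'+1)) (F : (Fin (d'+1) → ℝ) → ℂ)
    (hF : Integrable F) :
    ∫ x, F x = ∫ w : Fin d' → ℝ, ∫ y : ℝ, F (i.insertNth y w) := by
  have h0 := (volume_preserving_piFinSuccAbove (fun _ : Fin (d'+1) => ℝ) i).symm
  rw [← h0.integral_comp' F]
  have h3 := integral_prod_symm (μ := (volume : Measure ℝ)) (ν := (volume : Measure (Fin d' → ℝ)))
    (fun z : ℝ × (Fin d' → ℝ) => F (i.insertNth z.1 z.2)) (integrable_insertNth i hF)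
  calc ∫ z : ℝ × (Fin d' → ℝ), F ((MeasurableEquiv.piFinSuccAbove (fun _ : Fin (d'+1) => ℝ) i).symm z)
      = ∫ z : ℝ × (Fin d' → ℝ), F (i.insertNth z.1 z.2) := by
        refine integral_congr_ae (ae_of_all _ fun z => ?_)
        simp [MeasurableEquiv.piFinSuccAbove_symm_apply, Fin.insertNthEquiv, Equiv.coe_fn_mk]
    _ = ∫ w : Fin d' → ℝ, ∫ y : ℝ, F (i.insertNth y w) := by
        rw [volume_eq_prod]; exact h3

lemma ibp {d' : ℕ} (u v : Fin (d'+1) → ℂ) (a b : ℕ) (i : Fin (d'+1)) :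
    (∫ x : Fin (d'+1) → ℝ, (x i : ℂ) * ((∑ j, (x j:ℂ) * u j)^a * (∑ j, (x j:ℂ) * v j)^b)
      * (rexp (-∑ j, (x j)^2) : ℂ))
    = (a * u i / 2) * (∫ x : Fin (d'+1) → ℝ,
        ((∑ j, (x j:ℂ) * u j)^(a-1) * (∑ j, (x j:ℂ) * v j)^b) * (rexp (-∑ j, (x j)^2) : ℂ))
    + (b * v i / 2) * (∫ x : Fin (d'+1) → ℝ,
        ((∑ j, (x j:ℂ) * u j)^a * (∑ j, (x j:ℂ) * v j)^(b-1)) * (rexp (-∑ j, (x j)^2) : ℂ)) := by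
  have keyc : ∀ (c : Fin (d'+1) → ℂ) (y : ℝ) (w : Fin d' → ℝ),
      (∑ j, (((i.insertNth y w : Fin (d'+1) → ℝ)) j : ℂ) * c j)
      = (y:ℂ) * c i + ∑ j, ((w j : ℝ):ℂ) * c (i.succAbove j) := by
    intro c y w
    rw [Fin.sum_univ_succAbove _ i]
    simp [Fin.insertNth_apply_same, Fin.insertNth_apply_succAbove]
  have keysq : ∀ (y : ℝ) (w : Fin d' → ℝ),
      (∑ j, ((i.insertNth y w : Fin (d'+1) → ℝ) j)^2) = y^2 + ∑ j, (w j)^2 := by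
    intro y w
    rw [Fin.sum_univ_succAbove _ i]
    simp [Fin.insertNth_apply_same, Fin.insertNth_apply_succAbove]
  have hF0 := integrable_xK u v a b i
  have hF1 := integrable_K u v (a-1) b
  have hF2 := integrable_K u v a (b-1)
  rw [trans_insertNth i _ hF0, trans_insertNth i _ hF1, trans_insertNth i _ hF2]
  have e1 : ∀ w : Fin d' → ℝ,
      (fun y : ℝ => ((∑ j, (((i.insertNth y w : Fin (d'+1) → ℝ)) j : ℂ) * u j)^(a-1)
          * (∑ j, (((i.insertNth y w : Fin (d'+1) → ℝ)) j : ℂ) * v j)^b)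
        * (rexp (-∑ j, ((i.insertNth y w : Fin (d'+1) → ℝ) j)^2) : ℂ))
      = fun y : ℝ => ((((y:ℂ) * u i + ∑ j, ((w j : ℝ):ℂ) * u (i.succAbove j))^(a-1)
          * ((y:ℂ) * v i + ∑ j, ((w j : ℝ):ℂ) * v (i.succAbove j))^b)
        * (rexp (-y^2) : ℂ)) * (rexp (-∑ j, (w j)^2) : ℂ) := by
    intro w
    funext y
    rw [keyc u, keyc v, keysq, neg_add, Real.exp_add, Complex.ofReal_mul]
    ring
  have e2 : ∀ w : Fin d' → ℝ,
      (fun y : ℝ => ((∑ j, (((i.insertNth y w : Fin (d'+1) → ℝ)) j : ℂ) * u j)^a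
          * (∑ j, (((i.insertNth y w : Fin (d'+1) → ℝ)) j : ℂ) * v j)^(b-1))
        * (rexp (-∑ j, ((i.insertNth y w : Fin (d'+1) → ℝ) j)^2) : ℂ))
      = fun y : ℝ => ((((y:ℂ) * u i + ∑ j, ((w j : ℝ):ℂ) * u (i.succAbove j))^a
          * ((y:ℂ) * v i + ∑ j, ((w j : ℝ):ℂ) * v (i.succAbove j))^(b-1))
        * (rexp (-y^2) : ℂ)) * (rexp (-∑ j, (w j)^2) : ℂ) := by
    intro w
    funext y
    rw [keyc u, keyc v, keysq, neg_add, Real.exp_add, Complex.ofReal_mul]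
    ring
  have e0 : ∀ w : Fin d' → ℝ,
      (fun y : ℝ => (((i.insertNth y w : Fin (d'+1) → ℝ)) i : ℂ)
          * ((∑ j, (((i.insertNth y w : Fin (d'+1) → ℝ)) j : ℂ) * u j)^a
            * (∑ j, (((i.insertNth y w : Fin (d'+1) → ℝ)) j : ℂ) * v j)^b)
        * (rexp (-∑ j, ((i.insertNth y w : Fin (d'+1) → ℝ) j)^2) : ℂ))
      = fun y : ℝ => ((y:ℂ)
          * (((y:ℂ) * u i + ∑ j, ((w j : ℝ):ℂ) * u (i.succAbove j))^a
            * ((y:ℂ) * v i + ∑ j, ((w j : ℝ):ℂ) * v (i.succAbove j))^b)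
        * (rexp (-y^2) : ℂ)) * (rexp (-∑ j, (w j)^2) : ℂ) := by
    intro w
    funext y
    rw [keyc u, keyc v, keysq, Fin.insertNth_apply_same, neg_add, Real.exp_add,
      Complex.ofReal_mul]
    ring
  have inner : ∀ w : Fin d' → ℝ,
      (∫ y : ℝ, (((i.insertNth y w : Fin (d'+1) → ℝ)) i : ℂ)
          * ((∑ j, (((i.insertNth y w : Fin (d'+1) → ℝ)) j : ℂ) * u j)^a
            * (∑ j, (((i.insertNth y w : Fin (d'+1) → ℝ)) j : ℂ) * v j)^b)
          * (rexp (-∑ j, ((i.insertNth y w : Fin (d'+1) → ℝ) j)^2) : ℂ))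
      = (a * u i / 2) * (∫ y : ℝ, ((∑ j, (((i.insertNth y w : Fin (d'+1) → ℝ)) j : ℂ) * u j)^(a-1)
            * (∑ j, (((i.insertNth y w : Fin (d'+1) → ℝ)) j : ℂ) * v j)^b)
          * (rexp (-∑ j, ((i.insertNth y w : Fin (d'+1) → ℝ) j)^2) : ℂ))
      + (b * v i / 2) * (∫ y : ℝ, ((∑ j, (((i.insertNth y w : Fin (d'+1) → ℝ)) j : ℂ) * u j)^a
            * (∑ j, (((i.insertNth y w : Fin (d'+1) → ℝ)) j : ℂ) * v j)^(b-1))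
          * (rexp (-∑ j, ((i.insertNth y w : Fin (d'+1) → ℝ) j)^2) : ℂ)) := by
    intro w
    rw [show (∫ y : ℝ, (((i.insertNth y w : Fin (d'+1) → ℝ)) i : ℂ)
          * ((∑ j, (((i.insertNth y w : Fin (d'+1) → ℝ)) j : ℂ) * u j)^a
            * (∑ j, (((i.insertNth y w : Fin (d'+1) → ℝ)) j : ℂ) * v j)^b)
          * (rexp (-∑ j, ((i.insertNth y w : Fin (d'+1) → ℝ) j)^2) : ℂ))
        = ∫ y : ℝ, ((y:ℂ)
          * (((y:ℂ) * u i + ∑ j, ((w j : ℝ):ℂ) * u (i.succAbove j))^a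
            * ((y:ℂ) * v i + ∑ j, ((w j : ℝ):ℂ) * v (i.succAbove j))^b)
          * (rexp (-y^2) : ℂ)) * (rexp (-∑ j, (w j)^2) : ℂ) from by rw [e0 w]]
    rw [show (∫ y : ℝ, ((∑ j, (((i.insertNth y w : Fin (d'+1) → ℝ)) j : ℂ) * u j)^(a-1)
            * (∑ j, (((i.insertNth y w : Fin (d'+1) → ℝ)) j : ℂ) * v j)^b)
          * (rexp (-∑ j, ((i.insertNth y w : Fin (d'+1) → ℝ) j)^2) : ℂ))
        = ∫ y : ℝ, ((((y:ℂ) * u i + ∑ j, ((w j : ℝ):ℂ) * u (i.succAbove j))^(a-1)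
            * ((y:ℂ) * v i + ∑ j, ((w j : ℝ):ℂ) * v (i.succAbove j))^b)
          * (rexp (-y^2) : ℂ)) * (rexp (-∑ j, (w j)^2) : ℂ) from by rw [e1 w]]
    rw [show (∫ y : ℝ, ((∑ j, (((i.insertNth y w : Fin (d'+1) → ℝ)) j : ℂ) * u j)^a
            * (∑ j, (((i.insertNth y w : Fin (d'+1) → ℝ)) j : ℂ) * v j)^(b-1))
          * (rexp (-∑ j, ((i.insertNth y w : Fin (d'+1) → ℝ) j)^2) : ℂ))
        = ∫ y : ℝ, ((((y:ℂ) * u i + ∑ j, ((w j : ℝ):ℂ) * u (i.succAbove j))^a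
            * ((y:ℂ) * v i + ∑ j, ((w j : ℝ):ℂ) * v (i.succAbove j))^(b-1))
          * (rexp (-y^2) : ℂ)) * (rexp (-∑ j, (w j)^2) : ℂ) from by rw [e2 w]]
    rw [integral_mul_const, integral_mul_const, integral_mul_const, oneD]
    ring
  rw [integral_congr_ae (ae_of_all _ inner)]
  have hw1 : Integrable (fun w : Fin d' → ℝ =>
      ∫ y : ℝ, ((∑ j, (((i.insertNth y w : Fin (d'+1) → ℝ)) j : ℂ) * u j)^(a-1)
            * (∑ j, (((i.insertNth y w : Fin (d'+1) → ℝ)) j : ℂ) * v j)^b)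
          * (rexp (-∑ j, ((i.insertNth y w : Fin (d'+1) → ℝ) j)^2) : ℂ)) :=
    (integrable_insertNth i hF1).integral_prod_right
  have hw2 : Integrable (fun w : Fin d' → ℝ =>
      ∫ y : ℝ, ((∑ j, (((i.insertNth y w : Fin (d'+1) → ℝ)) j : ℂ) * u j)^a
            * (∑ j, (((i.insertNth y w : Fin (d'+1) → ℝ)) j : ℂ) * v j)^(b-1))
          * (rexp (-∑ j, ((i.insertNth y w : Fin (d'+1) → ℝ) j)^2) : ℂ)) :=
    (integrable_insertNth i hF2).integral_prod_right
  rw [integral_add (hw1.const_mul _) (hw2.const_mul _), integral_const_mul, integral_const_mul]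



lemma K00 {d : ℕ} (u v : Fin d → ℂ) :
    (∫ x : Fin d → ℝ,
      ((∑ j, (x j:ℂ) * u j)^0 * (∑ j, (x j:ℂ) * v j)^0) * (rexp (-∑ j, (x j)^2) : ℂ))
    = ((π ^ ((d:ℝ)/2) : ℝ) : ℂ) := by
  simp only [pow_zero, one_mul]
  have h1 : ∫ x : Fin d → ℝ, (rexp (-∑ j, (x j)^2) : ℂ)
      = ((∫ x : Fin d → ℝ, rexp (-∑ j, (x j)^2) : ℝ) : ℂ) := integral_ofReal
  rw [h1]
  have h2 : (fun x : Fin d → ℝ => rexp (-∑ j, (x j)^2))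
      = fun x : Fin d → ℝ => ∏ j, rexp (-(x j)^2) := funext exp_neg_sum_sq
  rw [h2, volume_pi, integral_fintype_prod_eq_pow (ι := Fin d) (fun y : ℝ => rexp (-y^2))]
  have h3 : ∫ y : ℝ, rexp (-y^2) = √π := by
    simpa using integral_gaussian 1
  rw [h3]
  norm_cast
  rw [Real.sqrt_eq_rpow, ← Real.rpow_natCast (π ^ ((1:ℝ)/2)) (Fintype.card (Fin d)),
    ← Real.rpow_mul pi_pos.le]
  congr 1
  simp [Fintype.card_fin]
  ring

lemma recU {d' : ℕ} (u v : Fin (d'+1) → ℂ) (hu : ∑ i, u i * u i = 0) (a b : ℕ) :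
    (∫ x : Fin (d'+1) → ℝ,
      ((∑ j, (x j:ℂ) * u j)^(a+1) * (∑ j, (x j:ℂ) * v j)^b) * (rexp (-∑ j, (x j)^2) : ℂ))
    = ((b:ℂ) * (∑ i, u i * v i) / 2) * (∫ x : Fin (d'+1) → ℝ,
        ((∑ j, (x j:ℂ) * u j)^a * (∑ j, (x j:ℂ) * v j)^(b-1)) * (rexp (-∑ j, (x j)^2) : ℂ)) := by
  have h1 : ∀ x : Fin (d'+1) → ℝ,
      ((∑ j, (x j:ℂ) * u j)^(a+1) * (∑ j, (x j:ℂ) * v j)^b) * (rexp (-∑ j, (x j)^2) : ℂ)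
      = ∑ i, u i * ((x i:ℂ) * ((∑ j, (x j:ℂ) * u j)^a * (∑ j, (x j:ℂ) * v j)^b)
          * (rexp (-∑ j, (x j)^2) : ℂ)) := by
    intro x
    have h2 : ∑ i, u i * ((x i:ℂ) * ((∑ j, (x j:ℂ) * u j)^a * (∑ j, (x j:ℂ) * v j)^b)
          * (rexp (-∑ j, (x j)^2) : ℂ))
        = (∑ i, (x i:ℂ) * u i) * (((∑ j, (x j:ℂ) * u j)^a * (∑ j, (x j:ℂ) * v j)^b)
          * (rexp (-∑ j, (x j)^2) : ℂ)) := by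
      rw [Finset.sum_mul]
      exact Finset.sum_congr rfl fun i _ => by ring
    rw [h2, pow_succ]
    ring
  rw [integral_congr_ae (ae_of_all _ h1),
    integral_finset_sum _ (fun i _ => (integrable_xK u v a b i).const_mul (u i))]
  have h3 : ∀ i : Fin (d'+1),
      (∫ x : Fin (d'+1) → ℝ, u i * ((x i:ℂ)
        * ((∑ j, (x j:ℂ) * u j)^a * (∑ j, (x j:ℂ) * v j)^b) * (rexp (-∑ j, (x j)^2) : ℂ)))
      = ((a:ℂ)/2 * (∫ x : Fin (d'+1) → ℝ,
          ((∑ j, (x j:ℂ) * u j)^(a-1) * (∑ j, (x j:ℂ) * v j)^b)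
            * (rexp (-∑ j, (x j)^2) : ℂ))) * (u i * u i)
        + ((b:ℂ)/2 * (∫ x : Fin (d'+1) → ℝ,
          ((∑ j, (x j:ℂ) * u j)^a * (∑ j, (x j:ℂ) * v j)^(b-1))
            * (rexp (-∑ j, (x j)^2) : ℂ))) * (u i * v i) := by
    intro i
    rw [integral_const_mul, ibp u v a b i]
    ring
  rw [Finset.sum_congr rfl fun i _ => h3 i, Finset.sum_add_distrib,
    ← Finset.mul_sum, ← Finset.mul_sum, hu]
  ring

lemma recV {d' : ℕ} (u v : Fin (d'+1) → ℂ) (hv : ∑ i, v i * v i = 0) (a b : ℕ) :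
    (∫ x : Fin (d'+1) → ℝ,
      ((∑ j, (x j:ℂ) * u j)^a * (∑ j, (x j:ℂ) * v j)^(b+1)) * (rexp (-∑ j, (x j)^2) : ℂ))
    = ((a:ℂ) * (∑ i, u i * v i) / 2) * (∫ x : Fin (d'+1) → ℝ,
        ((∑ j, (x j:ℂ) * u j)^(a-1) * (∑ j, (x j:ℂ) * v j)^b) * (rexp (-∑ j, (x j)^2) : ℂ)) := by
  have h1 : ∀ x : Fin (d'+1) → ℝ,
      ((∑ j, (x j:ℂ) * u j)^a * (∑ j, (x j:ℂ) * v j)^(b+1)) * (rexp (-∑ j, (x j)^2) : ℂ)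
      = ∑ i, v i * ((x i:ℂ) * ((∑ j, (x j:ℂ) * u j)^a * (∑ j, (x j:ℂ) * v j)^b)
          * (rexp (-∑ j, (x j)^2) : ℂ)) := by
    intro x
    have h2 : ∑ i, v i * ((x i:ℂ) * ((∑ j, (x j:ℂ) * u j)^a * (∑ j, (x j:ℂ) * v j)^b)
          * (rexp (-∑ j, (x j)^2) : ℂ))
        = (∑ i, (x i:ℂ) * v i) * (((∑ j, (x j:ℂ) * u j)^a * (∑ j, (x j:ℂ) * v j)^b)
          * (rexp (-∑ j, (x j)^2) : ℂ)) := by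
      rw [Finset.sum_mul]
      exact Finset.sum_congr rfl fun i _ => by ring
    rw [h2, pow_succ]
    ring
  rw [integral_congr_ae (ae_of_all _ h1),
    integral_finset_sum _ (fun i _ => (integrable_xK u v a b i).const_mul (v i))]
  have h3 : ∀ i : Fin (d'+1),
      (∫ x : Fin (d'+1) → ℝ, v i * ((x i:ℂ)
        * ((∑ j, (x j:ℂ) * u j)^a * (∑ j, (x j:ℂ) * v j)^b) * (rexp (-∑ j, (x j)^2) : ℂ)))
      = ((a:ℂ)/2 * (∫ x : Fin (d'+1) → ℝ,
          ((∑ j, (x j:ℂ) * u j)^(a-1) * (∑ j, (x j:ℂ) * v j)^b)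
            * (rexp (-∑ j, (x j)^2) : ℂ))) * (u i * v i)
        + ((b:ℂ)/2 * (∫ x : Fin (d'+1) → ℝ,
          ((∑ j, (x j:ℂ) * u j)^a * (∑ j, (x j:ℂ) * v j)^(b-1))
            * (rexp (-∑ j, (x j)^2) : ℂ))) * (v i * v i) := by
    intro i
    rw [integral_const_mul, ibp u v a b i]
    ring
  rw [Finset.sum_congr rfl fun i _ => h3 i, Finset.sum_add_distrib,
    ← Finset.mul_sum, ← Finset.mul_sum, hv]
  ring

lemma Kval {d' : ℕ} (u v : Fin (d'+1) → ℂ) (hu : ∑ i, u i * u i = 0)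
    (hv : ∑ i, v i * v i = 0) : ∀ n m : ℕ,
    (∫ x : Fin (d'+1) → ℝ,
      ((∑ j, (x j:ℂ) * u j)^n * (∑ j, (x j:ℂ) * v j)^m) * (rexp (-∑ j, (x j)^2) : ℂ))
    = if n = m then ((n.factorial : ℂ) / 2^n) * (∑ i, u i * v i)^n
        * ((π ^ (((d'+1 : ℕ) : ℝ)/2) : ℝ) : ℂ) else 0 := by
  intro n
  induction n with
  | zero =>
    intro m
    match m with
    | 0 => rw [K00 u v]; simp
    | m'+1 =>
      rw [recV u v hv 0 m']
      simp
  | succ n' ih =>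
    intro m
    match m with
    | 0 =>
      rw [recU u v hu n' 0]
      simp [Nat.succ_ne_zero]
    | m'+1 =>
      rw [recV u v hv (n'+1) m', Nat.add_sub_cancel, ih m']
      by_cases h : n' = m'
      · subst h
        rw [if_pos rfl, if_pos rfl]
        push_cast [Nat.factorial_succ]
        ring
      · rw [if_neg h, if_neg (by omega)]
        ring




lemma gauss_eucl {d : ℕ} (u v : Fin d → ℂ) (a b : ℕ) :
    (∫ x : EuclideanSpace ℝ (Fin d),
      ((∑ j, (x j:ℂ) * u j)^a * (∑ j, (x j:ℂ) * v j)^b) * (rexp (-‖x‖^2) : ℂ))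
    = ∫ x : Fin d → ℝ,
      ((∑ j, (x j:ℂ) * u j)^a * (∑ j, (x j:ℂ) * v j)^b) * (rexp (-∑ j, (x j)^2) : ℂ) := by
  have h0 := (EuclideanSpace.volume_preserving_symm_measurableEquiv_toLp (Fin d)).symm
  rw [← h0.integral_comp' (fun x : EuclideanSpace ℝ (Fin d) =>
    ((∑ j, (x j:ℂ) * u j)^a * (∑ j, (x j:ℂ) * v j)^b) * (rexp (-‖x‖^2) : ℂ))]
  refine integral_congr_ae (ae_of_all _ fun z => ?_)
  have hz : ∀ j, ((MeasurableEquiv.toLp 2 (Fin d → ℝ)).symm.symm z) j = z j := fun j => rfl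
  have hnorm : ‖(MeasurableEquiv.toLp 2 (Fin d → ℝ)).symm.symm z‖^2 = ∑ j, (z j)^2 := by
    rw [EuclideanSpace.norm_eq]
    rw [Real.sq_sqrt (Finset.sum_nonneg fun j _ => by positivity)]
    exact Finset.sum_congr rfl fun j _ => by rw [hz, Real.norm_eq_abs, sq_abs]
  simp only [hz, hnorm]

lemma volumeIoiPow_integral (k : ℕ) (g : ℝ → ℝ) :
    ∫ r : Ioi (0:ℝ), ((g r.1 : ℝ) : ℂ) ∂(Measure.volumeIoiPow k)
    = ((∫ r in Ioi (0:ℝ), r ^ k * g r : ℝ) : ℂ) := by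
  rw [Measure.volumeIoiPow]
  simp only [ENNReal.ofReal]
  rw [integral_withDensity_eq_integral_smul
      ((measurable_subtype_coe.pow_const _).real_toNNReal),
    integral_subtype_comap measurableSet_Ioi
      (fun a : ℝ => Real.toNNReal (a ^ k) • ((g a : ℝ) : ℂ))]
  rw [setIntegral_congr_fun measurableSet_Ioi
    (g := fun a : ℝ => (((a ^ k * g a : ℝ)) : ℂ))
    (fun x hx => by
      rw [NNReal.smul_def, Real.coe_toNNReal _ (pow_nonneg hx.out.le _), Complex.real_smul]
      push_cast
      ring)]
  exact integral_ofReal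

lemma Jval (k : ℕ) :
    ∫ r in Ioi (0:ℝ), r ^ k * rexp (-r^2) = Real.Gamma (((k:ℝ)+1)/2) / 2 := by
  have h := integral_rpow_mul_exp_neg_rpow (p := 2) (q := (k:ℝ)) (by norm_num)
    (lt_of_lt_of_le (by norm_num) (Nat.cast_nonneg k))
  rw [setIntegral_congr_fun measurableSet_Ioi
    (g := fun x : ℝ => x ^ ((k:ℝ)) * rexp (-x ^ (2:ℝ)))
    (fun x hx => by
      rw [← Real.rpow_natCast x k, show ((2:ℝ)) = ((2:ℕ):ℝ) by norm_num,
        ← Real.rpow_natCast x 2]), h]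
  ring




lemma polar {d' : ℕ} (u v : Fin (d'+1) → ℂ) (a b : ℕ) :
    (∫ x : EuclideanSpace ℝ (Fin (d'+1)),
      ((∑ j, (x j:ℂ) * u j)^a * (∑ j, (x j:ℂ) * v j)^b) * (rexp (-‖x‖^2) : ℂ))
    = (∫ ω : Metric.sphere (0 : EuclideanSpace ℝ (Fin (d'+1))) 1,
        (∑ j, ((ω : EuclideanSpace ℝ (Fin (d'+1))) j : ℂ) * u j)^a
          * (∑ j, ((ω : EuclideanSpace ℝ (Fin (d'+1))) j : ℂ) * v j)^b
        ∂((volume : Measure (EuclideanSpace ℝ (Fin (d'+1)))).toSphere))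
      * ((∫ r in Ioi (0:ℝ), r ^ (d' + (a+b)) * rexp (-r^2) : ℝ) : ℂ) := by
  have hdim : Module.finrank ℝ (EuclideanSpace ℝ (Fin (d'+1))) = d'+1 :=
    finrank_euclideanSpace_fin
  set F : EuclideanSpace ℝ (Fin (d'+1)) → ℂ := fun x =>
    ((∑ j, (x j:ℂ) * u j)^a * (∑ j, (x j:ℂ) * v j)^b) * (rexp (-‖x‖^2) : ℂ) with hF
  have mp := (volume : Measure (EuclideanSpace ℝ (Fin (d'+1)))).measurePreserving_homeomorphUnitSphereProd
  calc ∫ x, F x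
      = ∫ x : ({(0 : EuclideanSpace ℝ (Fin (d'+1)))}ᶜ : Set (EuclideanSpace ℝ (Fin (d'+1)))),
          F x ∂((volume : Measure (EuclideanSpace ℝ (Fin (d'+1)))).comap Subtype.val) := by
        rw [integral_subtype_comap (measurableSet_singleton (0 : EuclideanSpace ℝ (Fin (d'+1)))).compl F,
          MeasureTheory.restrict_compl_singleton]
    _ = ∫ p : Metric.sphere (0 : EuclideanSpace ℝ (Fin (d'+1))) 1 × Ioi (0:ℝ),
          F ((p.2 : ℝ) • (p.1 : EuclideanSpace ℝ (Fin (d'+1))))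
          ∂(((volume : Measure (EuclideanSpace ℝ (Fin (d'+1)))).toSphere).prod
            (Measure.volumeIoiPow (Module.finrank ℝ (EuclideanSpace ℝ (Fin (d'+1))) - 1))) := by
        rw [← mp.integral_comp (Homeomorph.measurableEmbedding _)
          (fun p : Metric.sphere (0 : EuclideanSpace ℝ (Fin (d'+1))) 1 × Ioi (0:ℝ) =>
            F ((p.2 : ℝ) • (p.1 : EuclideanSpace ℝ (Fin (d'+1)))))]
        refine integral_congr_ae (ae_of_all _ fun x => ?_)
        simp only [homeomorphUnitSphereProd_apply_fst_coe, homeomorphUnitSphereProd_apply_snd_coe]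
        rw [smul_inv_smul₀ (norm_ne_zero_iff.2 x.2)]
    _ = ∫ p : Metric.sphere (0 : EuclideanSpace ℝ (Fin (d'+1))) 1 × Ioi (0:ℝ),
          ((∑ j, ((p.1 : EuclideanSpace ℝ (Fin (d'+1))) j : ℂ) * u j)^a
            * (∑ j, ((p.1 : EuclideanSpace ℝ (Fin (d'+1))) j : ℂ) * v j)^b)
          * ((((p.2 : ℝ))^(a+b) * rexp (-((p.2 : ℝ))^2) : ℝ) : ℂ)
          ∂(((volume : Measure (EuclideanSpace ℝ (Fin (d'+1)))).toSphere).prod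
            (Measure.volumeIoiPow (Module.finrank ℝ (EuclideanSpace ℝ (Fin (d'+1))) - 1))) := by
        refine integral_congr_ae (ae_of_all _ fun p => ?_)
        obtain ⟨ω, r⟩ := p
        have hr : (0:ℝ) < (r : ℝ) := r.2
        have hω : ‖(ω : EuclideanSpace ℝ (Fin (d'+1)))‖ = 1 :=
          mem_sphere_zero_iff_norm.1 ω.2
        have hsum : ∀ w : Fin (d'+1) → ℂ,
            (∑ j, ((((r:ℝ) • (ω : EuclideanSpace ℝ (Fin (d'+1)))) j : ℝ) : ℂ) * w j)
            = ((r:ℝ):ℂ) * ∑ j, ((ω : EuclideanSpace ℝ (Fin (d'+1))) j : ℂ) * w j := by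
          intro w
          rw [Finset.mul_sum]
          refine Finset.sum_congr rfl fun j _ => ?_
          have : (((r:ℝ) • (ω : EuclideanSpace ℝ (Fin (d'+1)))) j : ℝ)
              = (r:ℝ) * (ω : EuclideanSpace ℝ (Fin (d'+1))) j := rfl
          rw [this]
          push_cast
          ring
        have hnorm : ‖(r:ℝ) • (ω : EuclideanSpace ℝ (Fin (d'+1)))‖ = (r:ℝ) := by
          rw [norm_smul, hω, Real.norm_eq_abs, abs_of_pos hr, mul_one]
        rw [hF]
        simp only [hsum, hnorm]
        push_cast
        ring
    _ = (∫ ω : Metric.sphere (0 : EuclideanSpace ℝ (Fin (d'+1))) 1,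
          (∑ j, ((ω : EuclideanSpace ℝ (Fin (d'+1))) j : ℂ) * u j)^a
            * (∑ j, ((ω : EuclideanSpace ℝ (Fin (d'+1))) j : ℂ) * v j)^b
          ∂((volume : Measure (EuclideanSpace ℝ (Fin (d'+1)))).toSphere))
        * (∫ r : Ioi (0:ℝ), ((((r : ℝ))^(a+b) * rexp (-((r : ℝ))^2) : ℝ) : ℂ)
            ∂(Measure.volumeIoiPow (Module.finrank ℝ (EuclideanSpace ℝ (Fin (d'+1))) - 1))) := by
        exact integral_prod_mul
          (f := fun ω : Metric.sphere (0 : EuclideanSpace ℝ (Fin (d'+1))) 1 =>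
            (∑ j, ((ω : EuclideanSpace ℝ (Fin (d'+1))) j : ℂ) * u j)^a
              * (∑ j, ((ω : EuclideanSpace ℝ (Fin (d'+1))) j : ℂ) * v j)^b)
          (g := fun r : Ioi (0:ℝ) => ((((r : ℝ))^(a+b) * rexp (-((r : ℝ))^2) : ℝ) : ℂ))
    _ = (∫ ω : Metric.sphere (0 : EuclideanSpace ℝ (Fin (d'+1))) 1,
          (∑ j, ((ω : EuclideanSpace ℝ (Fin (d'+1))) j : ℂ) * u j)^a
            * (∑ j, ((ω : EuclideanSpace ℝ (Fin (d'+1))) j : ℂ) * v j)^b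
          ∂((volume : Measure (EuclideanSpace ℝ (Fin (d'+1)))).toSphere))
        * ((∫ r in Ioi (0:ℝ), r ^ (d' + (a+b)) * rexp (-r^2) : ℝ) : ℂ) := by
        congr 1
        rw [hdim, Nat.add_sub_cancel,
          volumeIoiPow_integral d' (fun r => r^(a+b) * rexp (-r^2))]
        norm_cast
        refine setIntegral_congr_fun measurableSet_Ioi fun x hx => ?_
        rw [pow_add]
        ring


end SphOrtho

end


open Complex MeasureTheory

/-- **Spherical orthogonality relation.** For integers `d ≥ 1`, `n, m ∈ ℕ` and
`u, v ∈ ℂ^d` with `u·u = 0`, `v·v = 0` (complex bilinear form), the integral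
over the unit sphere `S^{d−1} ⊂ ℝ^d` (with surface measure, total mass
`2π^{d/2}/Γ(d/2)`, realized as `volume.toSphere`) satisfies
`∫_{S^{d−1}} (ω·u)ⁿ(ω·v)ᵐ dσ(ω) = π^{d/2}·n!/(2^{n−1}Γ(d/2+n))·(u·v)ⁿ` if
`n = m`, and vanishes if `n ≠ m`.  The constant is `cₙ/π` with
`cₙ = π^{d/2+1} n! / (2^{n−1} Γ(d/2+n))`. -/
theorem stmt6 (d : ℕ) (hd : 1 ≤ d) (n m : ℕ) (u v : Fin d → ℂ)
    (hu : ∑ i, u i * u i = 0) (hv : ∑ i, v i * v i = 0) :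
    ∫ ω : Metric.sphere (0 : EuclideanSpace ℝ (Fin d)) 1,
        (∑ i, ((ω : EuclideanSpace ℝ (Fin d)) i : ℂ) * u i) ^ n *
          (∑ i, ((ω : EuclideanSpace ℝ (Fin d)) i : ℂ) * v i) ^ m
        ∂((volume : Measure (EuclideanSpace ℝ (Fin d))).toSphere)
      = if n = m then
          (Real.pi : ℂ) ^ ((d : ℂ) / 2) * (n.factorial : ℂ) /
              ((2 : ℂ) ^ ((n : ℤ) - 1) * Gamma ((d : ℂ) / 2 + n)) *
            (∑ i, u i * v i) ^ n
        else 0 := by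
  obtain ⟨d', rfl⟩ : ∃ d', d = d' + 1 := ⟨d - 1, by omega⟩
  have hS : (∫ ω : Metric.sphere (0 : EuclideanSpace ℝ (Fin (d'+1))) 1,
        (∑ i, ((ω : EuclideanSpace ℝ (Fin (d'+1))) i : ℂ) * u i) ^ n *
          (∑ i, ((ω : EuclideanSpace ℝ (Fin (d'+1))) i : ℂ) * v i) ^ m
        ∂((volume : Measure (EuclideanSpace ℝ (Fin (d'+1)))).toSphere))
      * ((∫ r in Ioi (0:ℝ), r ^ (d' + (n+m)) * rexp (-r^2) : ℝ) : ℂ)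
      = if n = m then ((n.factorial : ℂ) / 2^n) * (∑ i, u i * v i)^n
          * ((π ^ (((d'+1 : ℕ) : ℝ)/2) : ℝ) : ℂ) else 0 :=
    (SphOrtho.polar u v n m).symm.trans
      ((SphOrtho.gauss_eucl u v n m).trans (SphOrtho.Kval u v hu hv n m))
  have hGval : ∫ r in Ioi (0:ℝ), r ^ (d' + (n+m)) * rexp (-r^2)
      = Real.Gamma ((((d' + (n+m) : ℕ):ℝ)+1)/2) / 2 := SphOrtho.Jval _
  have hGpos : 0 < Real.Gamma ((((d' + (n+m) : ℕ):ℝ)+1)/2) :=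
    Real.Gamma_pos_of_pos (by positivity)
  have hJne : ((∫ r in Ioi (0:ℝ), r ^ (d' + (n+m)) * rexp (-r^2) : ℝ) : ℂ) ≠ 0 := by
    rw [hGval]
    simp only [ne_eq, Complex.ofReal_eq_zero]
    positivity
  by_cases hnm : n = m
  · subst hnm
    rw [if_pos rfl] at hS ⊢
    -- express RHS pieces
    have hpi : (Real.pi : ℂ) ^ (((d'+1:ℕ) : ℂ) / 2)
        = ((π ^ (((d'+1 : ℕ) : ℝ)/2) : ℝ) : ℂ) := by
      rw [Complex.ofReal_cpow pi_pos.le]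
      congr 1
      push_cast
      ring
    have hGam : Complex.Gamma (((d'+1:ℕ) : ℂ) / 2 + n)
        = ((Real.Gamma ((((d' + (n+n) : ℕ):ℝ)+1)/2) : ℝ) : ℂ) := by
      rw [← Complex.Gamma_ofReal]
      congr 1
      push_cast
      ring
    have hGne : ((Real.Gamma ((((d' + (n+n) : ℕ):ℝ)+1)/2) : ℝ) : ℂ) ≠ 0 := by
      simp only [ne_eq, Complex.ofReal_eq_zero]
      positivity
    have h2 : (2:ℂ) ^ ((n : ℤ) - 1) = (2:ℂ)^n / 2 := by
      rw [zpow_sub₀ (two_ne_zero), zpow_natCast, zpow_one]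
    rw [hpi, hGam, h2]
    rw [hGval] at hS
    have hG2ne : ((Real.Gamma ((((d' + (n+n) : ℕ):ℝ)+1)/2) / 2 : ℝ) : ℂ) ≠ 0 := by
      simp only [ne_eq, Complex.ofReal_eq_zero]
      positivity
    rw [(eq_div_iff hG2ne).mpr hS, Complex.ofReal_div]
    have h2n : (2:ℂ)^n ≠ 0 := pow_ne_zero _ two_ne_zero
    field_simp
    push_cast
    ring
  · rw [if_neg hnm] at hS ⊢
    exact (mul_eq_zero.mp hS).resolve_right hJne
end

section
/- Let d ≥ 3 be an integer, n ∈ ℕ, and for 0 ≤ p ≤ ⌊n/2⌋ set a_p = n! (−1)^p Γ(n − p + d/2 − 1) / (2^{2p} p! (n − 2p)! Γ(n + d/2 − 1)). Then for every fixed v ∈ ℝ^d, the polynomial function P : ℝ^d → ℝ defined by P(u) = ∑_{p=0}^{⌊n/2⌋} a_p (u·v)^{n−2p} (u·u)^p (v·v)^p is harmonic in u, i.e. Δ_u P = ∑_{i=1}^d ∂²P/∂u_i² = 0 on ℝ^d. (In particular a₀ = 1 and the a_p satisfy the recurrence a_p = −a_{p−1} (n − 2p + 2)(n − 2p + 1)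 / (2p(d + 2n − 2 − 2p)).) -/
open MeasureTheory
open RealInnerProductSpace

section auxharm
variable {d : ℕ}
local notation "E" => EuclideanSpace ℝ (Fin d)

private theorem myPow {f : E → ℝ} {f' : E →L[ℝ] ℝ} {x : E} (hf : HasFDerivAt f f' x) (m : ℕ) :
    HasFDerivAt (fun y => f y ^ m) (((m : ℝ) * f x ^ (m-1)) • f') x :=
  (hasDerivAt_pow m (f x)).comp_hasFDerivAt x hf

private theorem hB (v u : E) : HasFDerivAt (fun w : E => ⟪v, w⟫) (innerSL ℝ v) u :=
  (innerSL ℝ v).hasFDerivAt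

private theorem hQ (u : E) : HasFDerivAt (fun w : E => ⟪w, w⟫) ((2:ℝ) • innerSL ℝ u) u := by
  have h := (hasFDerivAt_id (𝕜 := ℝ) u).inner ℝ (hasFDerivAt_id u)
  refine h.congr_fderiv ?_
  ext e
  simp [real_inner_comm, two_smul]

private theorem hL (e u : E) : HasFDerivAt (fun w : E => ⟪w, e⟫) (innerSL ℝ e) u :=
  ((innerSL ℝ e).hasFDerivAt).congr_of_eventuallyEq
    (Filter.Eventually.of_forall fun w => real_inner_comm e w)

private noncomputable def mD0 (v u : E) (c : ℝ) (m p : ℕ) : E →L[ℝ] ℝ :=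
  (c * m * ⟪v,u⟫^(m-1) * ⟪u,u⟫^p) • innerSL ℝ v
    + (c * p * 2 * ⟪v,u⟫^m * ⟪u,u⟫^(p-1)) • innerSL ℝ u

private theorem hmD0 (v u : E) (c : ℝ) (m p : ℕ) :
    HasFDerivAt (fun w : E => c * ⟪v,w⟫^m * ⟪w,w⟫^p) (mD0 v u c m p) u := by
  have H := ((myPow (hB v u) m).const_mul c).mul (myPow (hQ u) p)
  refine H.congr_fderiv ?_
  ext y
  simp [mD0, innerSL_apply_apply]
  ring

private noncomputable def mD1 (v e u : E) (c : ℝ) (m p : ℕ) : E →L[ℝ] ℝ :=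
  (c * m * ⟪v,u⟫^(m-1) * ⟪u,u⟫^p * ⟪u,e⟫) • innerSL ℝ v
    + (c * p * 2 * ⟪v,u⟫^m * ⟪u,u⟫^(p-1) * ⟪u,e⟫) • innerSL ℝ u
    + (c * ⟪v,u⟫^m * ⟪u,u⟫^p) • innerSL ℝ e

private theorem hmD1 (v e u : E) (c : ℝ) (m p : ℕ) :
    HasFDerivAt (fun w : E => c * ⟪v,w⟫^m * ⟪w,w⟫^p * ⟪w,e⟫) (mD1 v e u c m p) u := by
  have H := (hmD0 v u c m p).mul (hL e u)
  refine H.congr_fderiv ?_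
  ext y
  simp [mD0, mD1, innerSL_apply_apply]
  ring

private theorem lap_val (n N : ℕ) (v : E) (c : ℕ → ℝ) (u : E) :
    ∑ i, fderiv ℝ (fun w =>
        fderiv ℝ (fun z : E => ∑ p ∈ Finset.range N, c p * ⟪v,z⟫^(n-2*p) * ⟪z,z⟫^p) w
          (EuclideanSpace.single i (1:ℝ))) u (EuclideanSpace.single i (1:ℝ))
    = ∑ p ∈ Finset.range N,
       ((c p * ↑(n-2*p) * ↑(n-2*p-1) * ⟪v,u⟫^(n-2*p-1-1) * ⟪u,u⟫^p) * ⟪v,v⟫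
        + (c p * ↑(n-2*p) * ↑p * 4 * ⟪v,u⟫^(n-2*p-1) * ⟪u,u⟫^(p-1)) * ⟪v,u⟫
        + (c p * ↑p * ↑(p-1) * 4 * ⟪v,u⟫^(n-2*p) * ⟪u,u⟫^(p-1-1)) * ⟪u,u⟫
        + (c p * ↑p * 2 * ⟪v,u⟫^(n-2*p) * ⟪u,u⟫^(p-1)) * ↑d) := by
  set e : Fin d → E := fun i => EuclideanSpace.single i (1:ℝ) with he
  set f : E → ℝ := fun z => ∑ p ∈ Finset.range N, c p * ⟪v,z⟫^(n-2*p) * ⟪z,z⟫^p with hf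
  have H1 : ∀ w : E, HasFDerivAt f (∑ p ∈ Finset.range N, mD0 v w (c p) (n-2*p) p) w :=
    fun w => HasFDerivAt.fun_sum fun p _ => hmD0 v w (c p) (n-2*p) p
  have hg : ∀ (y w : E), fderiv ℝ f w y
      = ∑ p ∈ Finset.range N, ((c p * ↑(n-2*p) * ⟪v,y⟫) * ⟪v,w⟫^(n-2*p-1) * ⟪w,w⟫^p
          + (c p * ↑p * 2) * ⟪v,w⟫^(n-2*p) * ⟪w,w⟫^(p-1) * ⟪w,y⟫) := by
    intro y w
    rw [(H1 w).fderiv]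
    simp only [ContinuousLinearMap.sum_apply, mD0, ContinuousLinearMap.add_apply,
      ContinuousLinearMap.coe_smul', Pi.smul_apply, innerSL_apply_apply, smul_eq_mul]
    exact Finset.sum_congr rfl fun p _ => by ring
  have H2 : ∀ y : E, HasFDerivAt
      (fun w : E => ∑ p ∈ Finset.range N, ((c p * ↑(n-2*p) * ⟪v,y⟫) * ⟪v,w⟫^(n-2*p-1) * ⟪w,w⟫^p
          + (c p * ↑p * 2) * ⟪v,w⟫^(n-2*p) * ⟪w,w⟫^(p-1) * ⟪w,y⟫))
      (∑ p ∈ Finset.range N, (mD0 v u (c p * ↑(n-2*p) * ⟪v,y⟫) (n-2*p-1) p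
          + mD1 v y u (c p * ↑p * 2) (n-2*p) (p-1))) u :=
    fun y => HasFDerivAt.fun_sum fun p _ =>
      (hmD0 v u (c p * ↑(n-2*p) * ⟪v,y⟫) (n-2*p-1) p).add
        (hmD1 v y u (c p * ↑p * 2) (n-2*p) (p-1))
  have keyi : ∀ i : Fin d, fderiv ℝ (fun w => fderiv ℝ f w (e i)) u (e i)
      = ∑ p ∈ Finset.range N,
        ((c p * ↑(n-2*p) * ↑(n-2*p-1) * ⟪v,u⟫^(n-2*p-1-1) * ⟪u,u⟫^p) * (⟪v,e i⟫ * ⟪v,e i⟫)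
          + (c p * ↑(n-2*p) * ↑p * 4 * ⟪v,u⟫^(n-2*p-1) * ⟪u,u⟫^(p-1)) * (⟪v,e i⟫ * ⟪u,e i⟫)
          + (c p * ↑p * ↑(p-1) * 4 * ⟪v,u⟫^(n-2*p) * ⟪u,u⟫^(p-1-1)) * (⟪u,e i⟫ * ⟪u,e i⟫)
          + (c p * ↑p * 2 * ⟪v,u⟫^(n-2*p) * ⟪u,u⟫^(p-1)) * ⟪e i, e i⟫) := by
    intro i
    have hfun : (fun w => fderiv ℝ f w (e i))
        = fun w => ∑ p ∈ Finset.range N, ((c p * ↑(n-2*p) * ⟪v,e i⟫) * ⟪v,w⟫^(n-2*p-1) * ⟪w,w⟫^p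
          + (c p * ↑p * 2) * ⟪v,w⟫^(n-2*p) * ⟪w,w⟫^(p-1) * ⟪w,e i⟫) := funext (hg (e i))
    rw [hfun, (H2 (e i)).fderiv]
    simp only [ContinuousLinearMap.sum_apply, mD0, mD1, ContinuousLinearMap.add_apply,
      ContinuousLinearMap.coe_smul', Pi.smul_apply, innerSL_apply_apply, smul_eq_mul]
    exact Finset.sum_congr rfl fun p _ => by ring
  calc ∑ i, fderiv ℝ (fun w => fderiv ℝ f w (e i)) u (e i)
      = ∑ i, ∑ p ∈ Finset.range N, _ := Finset.sum_congr rfl fun i _ => keyi i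
    _ = _ := by
        rw [Finset.sum_comm]
        refine Finset.sum_congr rfl fun p _ => ?_
        have h1 : ∑ i, ⟪v, e i⟫ * ⟪v, e i⟫ = ⟪v,v⟫ := by
          simp [he, EuclideanSpace.inner_single_right, PiLp.inner_apply, RCLike.inner_apply, EuclideanSpace.real_norm_sq_eq, ← sq, mul_comm]
        have h2 : ∑ i, ⟪v, e i⟫ * ⟪u, e i⟫ = ⟪v,u⟫ := by
          simp [he, EuclideanSpace.inner_single_right, PiLp.inner_apply, RCLike.inner_apply, EuclideanSpace.real_norm_sq_eq, ← sq, mul_comm]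
        have h3 : ∑ i, ⟪u, e i⟫ * ⟪u, e i⟫ = ⟪u,u⟫ := by
          simp [he, EuclideanSpace.inner_single_right, PiLp.inner_apply, RCLike.inner_apply, EuclideanSpace.real_norm_sq_eq, ← sq, mul_comm]
        have h4 : ∑ i, ⟪e i, e i⟫ = (d:ℝ) := by
          simp [he, EuclideanSpace.inner_single_right, EuclideanSpace.single_apply]
        simp only [Finset.sum_add_distrib, ← Finset.mul_sum]
        rw [h1, h2, h3, h4]

end auxharm

set_option maxHeartbeats 1000000 in
private theorem telesc (d n : ℕ) (hd : 3 ≤ d) (a : ℕ → ℝ)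
    (hrec : ∀ p : ℕ, 1 ≤ p → p ≤ n / 2 → a p =
      -a (p - 1) * (((n : ℝ) - 2 * p + 2) * ((n : ℝ) - 2 * p + 1)) /
        (2 * p * ((d : ℝ) + 2 * n - 2 - 2 * p)))
    (X Q V : ℝ) (c : ℕ → ℝ) (hc : ∀ p, c p = a p * V ^ p) :
    ∑ p ∈ Finset.range (n/2+1),
      ((c p * ↑(n-2*p) * ↑(n-2*p-1) * X^(n-2*p-1-1) * Q^p) * V
        + (c p * ↑(n-2*p) * ↑p * 4 * X^(n-2*p-1) * Q^(p-1)) * X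
        + (c p * ↑p * ↑(p-1) * 4 * X^(n-2*p) * Q^(p-1-1)) * Q
        + (c p * ↑p * 2 * X^(n-2*p) * Q^(p-1)) * ↑d) = 0 := by
  set A : ℕ → ℝ := fun p =>
    a p * V^(p+1) * (↑(n-2*p) * ↑(n-2*p-1)) * X^(n-2*p-1-1) * Q^p with hA
  set B : ℕ → ℝ := fun p =>
    a p * V^p * ↑p * (4*(↑(n-2*p):ℝ) + 4*↑(p-1) + 2*↑d) * X^(n-2*p) * Q^(p-1) with hB
  have hSAB : ∀ p : ℕ,
      (c p * ↑(n-2*p) * ↑(n-2*p-1) * X^(n-2*p-1-1) * Q^p) * V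
        + (c p * ↑(n-2*p) * ↑p * 4 * X^(n-2*p-1) * Q^(p-1)) * X
        + (c p * ↑p * ↑(p-1) * 4 * X^(n-2*p) * Q^(p-1-1)) * Q
        + (c p * ↑p * 2 * X^(n-2*p) * Q^(p-1)) * ↑d = A p + B p := by
    intro p
    have hX : ((n-2*p : ℕ):ℝ) * (X^(n-2*p-1) * X) = ↑(n-2*p) * X^(n-2*p) := by
      rcases Nat.eq_zero_or_pos (n-2*p) with h|h
      · simp [h]
      · rw [← pow_succ, Nat.sub_add_cancel h]
    have hQc : ((p-1 : ℕ):ℝ) * (Q^(p-1-1) * Q) = ↑(p-1) * Q^(p-1) := by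
      rcases Nat.eq_zero_or_pos (p-1) with h|h
      · simp [h]
      · rw [← pow_succ, Nat.sub_add_cancel h]
    rw [hc]
    simp only [hA, hB]
    linear_combination (4*(a p*V^p)*(p:ℝ)*Q^(p-1)) * hX + (4*(a p*V^p)*(p:ℝ)*X^(n-2*p)) * hQc
  rw [Finset.sum_congr rfl fun p _ => hSAB p, Finset.sum_add_distrib,
    Finset.sum_range_succ, Finset.sum_range_succ']
  have hAtop : A (n/2) = 0 := by
    have h : n - 2*(n/2) = 0 ∨ n - 2*(n/2) - 1 = 0 := by omega
    rcases h with h|h <;> simp [hA, h]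
  have hB0 : B 0 = 0 := by simp [hB]
  rw [hAtop, hB0, add_zero, add_zero, ← Finset.sum_add_distrib]
  refine Finset.sum_eq_zero fun p hp => ?_
  simp only [Finset.mem_range] at hp
  have h2 : 2*(p+1) ≤ n := by omega
  have h2r : 2*((p:ℝ)+1) ≤ n := by exact_mod_cast h2
  have hd3 : (3:ℝ) ≤ (d:ℝ) := by exact_mod_cast hd
  have hrecp := hrec (p+1) (by omega) (by omega)
  simp only [Nat.add_sub_cancel] at hrecp
  have hden : ((d:ℝ) + 2*↑n - 2 - 2*(↑p+1)) ≠ 0 := by nlinarith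
  have hp1 : ((p:ℝ)+1) ≠ 0 := by positivity
  simp only [hA, hB, hrecp]
  have c1 : ((n-2*p : ℕ):ℝ) = (n:ℝ) - 2*p := by push_cast [Nat.cast_sub (by omega : 2*p ≤ n)]; ring
  have c2 : ((n-2*p-1 : ℕ):ℝ) = (n:ℝ) - 2*p - 1 := by
    rw [show n-2*p-1 = n-(2*p+1) by omega, Nat.cast_sub (by omega : 2*p+1 ≤ n)]
    push_cast; ring
  have c3 : ((n-2*(p+1) : ℕ):ℝ) = (n:ℝ) - 2*p - 2 := by
    push_cast [Nat.cast_sub h2]; ring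
  have c4 : n-2*(p+1) = n-2*p-1-1 := by omega
  rw [c4] at c3 ⊢
  rw [c1, c2, c3]
  push_cast
  have hden' : ((d:ℝ) + ↑n*2 - 2 - 2*(↑p+1)) ≠ 0 := by contrapose! hden; linarith
  field_simp
  ring

set_option maxHeartbeats 2000000 in
/-- **Harmonicity of the projector generating polynomial.** Let `d ≥ 3`,
`n ∈ ℕ`, and for `0 ≤ p ≤ ⌊n/2⌋` set
`a_p = n!(−1)^p Γ(n−p+d/2−1)/(2^{2p} p! (n−2p)! Γ(n+d/2−1))`.  Then for every
fixed `v ∈ ℝ^d` the polynomial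
`P(u) = ∑_{p=0}^{⌊n/2⌋} a_p (u·v)^{n−2p} (u·u)^p (v·v)^p` is harmonic in `u`:
`Δ_u P = ∑ᵢ ∂²P/∂uᵢ² = 0` on `ℝ^d`.  In particular `a₀ = 1` and the `a_p`
satisfy `a_p = −a_{p−1}(n−2p+2)(n−2p+1)/(2p(d+2n−2−2p))`. -/
theorem stmt8 (d n : ℕ) (hd : 3 ≤ d) (v : EuclideanSpace ℝ (Fin d))
    (a : ℕ → ℝ)
    (ha : ∀ p : ℕ, p ≤ n / 2 → a p =
      (n.factorial : ℝ) * (-1 : ℝ) ^ p * Real.Gamma ((n : ℝ) - p + d / 2 - 1) /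
        (2 ^ (2 * p) * (p.factorial : ℝ) * ((n - 2 * p).factorial : ℝ) *
          Real.Gamma ((n : ℝ) + d / 2 - 1)))
    (P : EuclideanSpace ℝ (Fin d) → ℝ)
    (hP : ∀ u : EuclideanSpace ℝ (Fin d), P u =
      ∑ p ∈ Finset.range (n / 2 + 1),
        a p * (∑ i, u i * v i) ^ (n - 2 * p) * (∑ i, u i * u i) ^ p * (∑ i, v i * v i) ^ p) :
    a 0 = 1 ∧
    (∀ p : ℕ, 1 ≤ p → p ≤ n / 2 → a p =
      -a (p - 1) * (((n : ℝ) - 2 * p + 2) * ((n : ℝ) - 2 * p + 1)) /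
        (2 * p * ((d : ℝ) + 2 * n - 2 - 2 * p))) ∧
    ∀ u : EuclideanSpace ℝ (Fin d),
      ∑ i, fderiv ℝ (fun w => fderiv ℝ P w (EuclideanSpace.single i (1 : ℝ))) u
          (EuclideanSpace.single i (1 : ℝ)) = 0 := by
  have hd3 : (3:ℝ) ≤ (d:ℝ) := by exact_mod_cast hd
  have hΓ : Real.Gamma ((n:ℝ) + d/2 - 1) ≠ 0 := by
    apply (Real.Gamma_pos_of_pos ?_).ne'
    have : (0:ℝ) ≤ n := Nat.cast_nonneg n
    linarith
  have hnfac : ((n.factorial : ℕ) : ℝ) ≠ 0 := Nat.cast_ne_zero.mpr (Nat.factorial_ne_zero _)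
  have part1 : a 0 = 1 := by
    have h0 := ha 0 (Nat.zero_le _)
    simp at h0
    rw [h0, div_self (mul_ne_zero hnfac hΓ)]
  have part2 : ∀ p : ℕ, 1 ≤ p → p ≤ n / 2 → a p =
      -a (p - 1) * (((n : ℝ) - 2 * p + 2) * ((n : ℝ) - 2 * p + 1)) /
        (2 * p * ((d : ℝ) + 2 * n - 2 - 2 * p)) := by
    intro p hp1 hp
    have h2p : 2 * p ≤ n := by
      have := Nat.div_mul_le_self n 2
      omega
    have hpn : (p:ℝ) ≤ n := by exact_mod_cast le_trans (by omega) h2p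
    have h2pr : 2 * (p:ℝ) ≤ n := by exact_mod_cast h2p
    have hx : (0:ℝ) < (n:ℝ) - p + d/2 - 1 := by linarith
    have hGx : Real.Gamma ((n:ℝ) - p + d/2 - 1 + 1)
        = ((n:ℝ) - p + d/2 - 1) * Real.Gamma ((n:ℝ) - p + d/2 - 1) :=
      Real.Gamma_add_one hx.ne'
    have hap := ha p hp
    have haq := ha (p-1) (le_trans (by omega) hp)
    have e1 : ((n:ℝ) - ↑(p-1) + d/2 - 1) = (n:ℝ) - p + d/2 - 1 + 1 := by
      have : ((p-1:ℕ):ℝ) = (p:ℝ) - 1 := by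
        push_cast [Nat.cast_sub hp1]; ring
      rw [this]; ring
    have e2 : n - 2*(p-1) = (n - 2*p) + 2 := by omega
    rw [e1, e2, hGx] at haq
    have e4 : ((((n-2*p) + 2).factorial : ℕ) : ℝ)
        = ((n:ℝ) - 2*p + 2) * ((n:ℝ) - 2*p + 1) * ((n-2*p).factorial : ℝ) := by
      rw [Nat.factorial_succ, Nat.factorial_succ]
      push_cast [Nat.cast_sub h2p]
      ring
    rw [e4] at haq
    have e5 : (p.factorial : ℝ) = p * ((p-1).factorial : ℝ) := by
      conv_lhs => rw [show p = (p-1)+1 by omega]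
      rw [Nat.factorial_succ]
      push_cast [Nat.cast_sub hp1]
      ring
    have e6 : (2:ℝ)^(2*p) = 4 * 2^(2*(p-1)) := by
      rw [show 2*p = 2*(p-1)+2 by omega]
      ring
    have e7 : (-1:ℝ)^p = -(-1:ℝ)^(p-1) := by
      conv_lhs => rw [show p = (p-1)+1 by omega]
      rw [pow_succ]; ring
    rw [hap, haq, e5, e6, e7]
    have hΓx : Real.Gamma ((n:ℝ) - p + d/2 - 1) ≠ 0 := (Real.Gamma_pos_of_pos hx).ne'
    have hfac1 : ((n-2*p).factorial : ℝ) ≠ 0 := Nat.cast_ne_zero.mpr (Nat.factorial_ne_zero _)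
    have hfac2 : (((p-1)).factorial : ℝ) ≠ 0 := Nat.cast_ne_zero.mpr (Nat.factorial_ne_zero _)
    have hpow : (2:ℝ)^(2*(p-1)) ≠ 0 := by positivity
    have hpr : (0:ℝ) < p := by exact_mod_cast hp1
    have hden : ((d:ℝ) + 2*n - 2 - 2*p) ≠ 0 := by nlinarith
    have hz1 : ((n:ℝ) - 2*p + 2) ≠ 0 := by nlinarith
    have hz2 : ((n:ℝ) - 2*p + 1) ≠ 0 := by nlinarith
    generalize Real.Gamma ((n:ℝ) - p + d/2 - 1) = G1 at hΓx ⊢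
    generalize Real.Gamma ((n:ℝ) + d/2 - 1) = G2 at hΓ ⊢
    generalize hF : ((n.factorial : ℕ):ℝ) = F at hnfac ⊢
    generalize ((n-2*p).factorial : ℝ) = F1 at hfac1 ⊢
    generalize (((p-1)).factorial : ℝ) = F2 at hfac2 ⊢
    generalize ((-1:ℝ))^(p-1) = s
    generalize hT : (2:ℝ)^(2*(p-1)) = T at hpow ⊢
    have hz1' : ((n:ℝ) - p*2 + 2) ≠ 0 := by contrapose! hz1; linarith
    have hz2' : ((n:ℝ) - p*2 + 1) ≠ 0 := by contrapose! hz2; linarith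
    have hden' : ((d:ℝ) + n*2 - 2 - p*2) ≠ 0 := by contrapose! hden; linarith
    field_simp
    ring
  refine ⟨part1, part2, ?_⟩
  intro u
  set c : ℕ → ℝ := fun p => a p * ⟪v,v⟫^p with hcdef
  have hPfun : P = fun z : EuclideanSpace ℝ (Fin d) =>
      ∑ p ∈ Finset.range (n/2+1), c p * ⟪v,z⟫^(n-2*p) * ⟪z,z⟫^p := by
    funext z
    rw [hP z]
    refine Finset.sum_congr rfl fun p _ => ?_
    rw [show (∑ i, z i * v i) = ⟪v,z⟫ by
        simp [PiLp.inner_apply, RCLike.inner_apply, mul_comm],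
      show (∑ i, z i * z i) = ⟪z,z⟫ by
        simp [PiLp.inner_apply, RCLike.inner_apply, EuclideanSpace.real_norm_sq_eq, ← sq],
      show (∑ i, v i * v i) = ⟪v,v⟫ by
        simp [PiLp.inner_apply, RCLike.inner_apply, EuclideanSpace.real_norm_sq_eq, ← sq]]
    simp only [hcdef]
    ring
  rw [hPfun, lap_val n (n/2+1) v c u]
  exact telesc d n hd a part2 ⟪v,u⟫ ⟪u,u⟫ ⟪v,v⟫ c fun p => rfl
end
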